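/- arXiv:1105.2672 — 7 statements merged into one kernel-verified Lean document; each statement's English description precedes it below -/
import Mathlib

section
/- Let $n_1 > n_2 \geq 3$ be integers, and let $\mathcal{H}_{n_1,n_2}$ be the 3-uniform bi-hypergraph on $X = [n_1] \times [n_2]$ whose edges are all 3-subsets $\{x,y,z\}$ with $|\{x_1,y_1,z_1\}| = 2$ and $|\{x_2,y_2,z_2\}| = 2$. Suppose $c$ is a proper coloring of $\mathcal{H}_{n_1,n_2}$ in which $(1,1)$ and $(1,2)$ receive the same color. Then $c$ is (as a partition) equal to the coloring by first coordinate: two vertices receive the same color if and only if they agree in the first coordinate. -/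
/-- Edge set of the 3-uniform bi-hypergraph `H_{n₁,n₂}` on `[n₁] × [n₂]`:
3-subsets taking exactly 2 distinct values in both coordinates. -/
def E2 (n1 n2 : ℕ) : Set (Finset (Fin n1 × Fin n2)) :=
  {b | b.card = 3 ∧ (b.image Prod.fst).card = 2 ∧ (b.image Prod.snd).card = 2}

/-- A proper coloring: every edge has two vertices with a common color and
two vertices with distinct colors. -/
def ProperColoring {X α : Type*} (E : Set (Finset X)) (c : X → α) : Prop :=
  ∀ b ∈ E, (∃ x ∈ b, ∃ y ∈ b, x ≠ y ∧ c x = c y) ∧ (∃ x ∈ b, ∃ y ∈ b, c x ≠ c y)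

lemma mem_E2 {n1 n2 : ℕ} {x y z : Fin n1 × Fin n2} (hxy : x ≠ y) (hxz : x ≠ z) (hyz : y ≠ z)
    (h1 : ({x.1, y.1, z.1} : Finset (Fin n1)).card = 2)
    (h2 : ({x.2, y.2, z.2} : Finset (Fin n2)).card = 2) :
    ({x, y, z} : Finset (Fin n1 × Fin n2)) ∈ E2 n1 n2 := by
  refine ⟨?_, ?_, ?_⟩
  · rw [Finset.card_eq_three]; exact ⟨x, y, z, hxy, hxz, hyz, rfl⟩
  · rwa [Finset.image_insert, Finset.image_insert, Finset.image_singleton]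
  · rwa [Finset.image_insert, Finset.image_insert, Finset.image_singleton]

lemma tri {n1 n2 : ℕ} {α : Type*} {c : Fin n1 × Fin n2 → α}
    (hc : ProperColoring (E2 n1 n2) c) {x y z : Fin n1 × Fin n2}
    (hxy : x ≠ y) (hxz : x ≠ z) (hyz : y ≠ z)
    (h1 : ({x.1, y.1, z.1} : Finset (Fin n1)).card = 2)
    (h2 : ({x.2, y.2, z.2} : Finset (Fin n2)).card = 2) :
    (c x = c y ∨ c x = c z ∨ c y = c z) ∧ ¬(c x = c y ∧ c x = c z) := by
  obtain ⟨⟨a, ha, b, hb, hab, hcab⟩, ⟨a', ha', b', hb', hne⟩⟩ :=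
    hc _ (mem_E2 hxy hxz hyz h1 h2)
  simp only [Finset.mem_insert, Finset.mem_singleton] at ha hb ha' hb'
  constructor
  · rcases ha with rfl | rfl | rfl <;> rcases hb with rfl | rfl | rfl <;> simp_all
  · rintro ⟨e1, e2⟩
    apply hne
    rcases ha' with rfl | rfl | rfl <;> rcases hb' with rfl | rfl | rfl <;> simp_all

lemma quadAbs {α : Type*} {u v w z : α}
    (T1 : (u=v ∨ u=w ∨ v=w) ∧ ¬(u=v ∧ u=w))
    (T2 : (u=v ∨ u=z ∨ v=z) ∧ ¬(u=v ∧ u=z))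
    (T3 : (u=w ∨ u=z ∨ w=z) ∧ ¬(u=w ∧ u=z))
    (T4 : (v=w ∨ v=z ∨ w=z) ∧ ¬(v=w ∧ v=z)) :
    (u=v ∧ w=z ∧ u≠w) ∨ (u=w ∧ v=z ∧ u≠v) ∨ (u=z ∧ v=w ∧ u≠v) := by
  by_cases h1 : u=v <;> by_cases h2 : u=w <;> by_cases h3 : u=z <;>
    by_cases h4 : v=w <;> by_cases h5 : v=z <;> by_cases h6 : w=z <;> simp_all

lemma card2a {β : Type*} [DecidableEq β] {a b : β} (h : a ≠ b) :
    ({a, a, b} : Finset β).card = 2 := by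
  rw [show ({a, a, b} : Finset β) = {a, b} by ext t; simp]
  exact Finset.card_pair h

lemma card2b {β : Type*} [DecidableEq β] {a b : β} (h : a ≠ b) :
    ({a, b, a} : Finset β).card = 2 := by
  rw [show ({a, b, a} : Finset β) = {a, b} by ext t; simp; tauto]
  exact Finset.card_pair h

lemma card2c {β : Type*} [DecidableEq β] {a b : β} (h : a ≠ b) :
    ({a, b, b} : Finset β).card = 2 := by
  rw [show ({a, b, b} : Finset β) = {a, b} by ext t; simp]
  exact Finset.card_pair h

lemma rect {n1 n2 : ℕ} {α : Type*} {c : Fin n1 × Fin n2 → α}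
    (hc : ProperColoring (E2 n1 n2) c) {a b : Fin n1} {p q : Fin n2}
    (hab : a ≠ b) (hpq : p ≠ q) :
    (c (a,p) = c (a,q) ∧ c (b,p) = c (b,q) ∧ c (a,p) ≠ c (b,p)) ∨
    (c (a,p) = c (b,p) ∧ c (a,q) = c (b,q) ∧ c (a,p) ≠ c (a,q)) ∨
    (c (a,p) = c (b,q) ∧ c (a,q) = c (b,p) ∧ c (a,p) ≠ c (a,q)) := by
  have huv : ((a,p) : Fin n1 × Fin n2) ≠ (a,q) := by simp [Prod.ext_iff]; tauto
  have huw : ((a,p) : Fin n1 × Fin n2) ≠ (b,p) := by simp [Prod.ext_iff]; tauto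
  have huz : ((a,p) : Fin n1 × Fin n2) ≠ (b,q) := by simp [Prod.ext_iff]; tauto
  have hvw : ((a,q) : Fin n1 × Fin n2) ≠ (b,p) := by simp [Prod.ext_iff]; tauto
  have hvz : ((a,q) : Fin n1 × Fin n2) ≠ (b,q) := by simp [Prod.ext_iff]; tauto
  have hwz : ((b,p) : Fin n1 × Fin n2) ≠ (b,q) := by simp [Prod.ext_iff]; tauto
  have T1 := tri hc huv huw hvw (card2a hab) (card2b hpq)
  have T2 := tri hc huv huz hvz (card2a hab) (card2c hpq)
  have T3 := tri hc huw huz hwz (card2c hab) (card2a hpq)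
  have T4 := tri hc hvw hvz hwz (card2c hab) (card2b (Ne.symm hpq))
  exact quadAbs T1 T2 T3 T4

/-- if a proper coloring of `H_{n₁,n₂}` (with `n₁ > n₂ ≥ 3`) gives
`(1,1)` and `(1,2)` the same color, then it is the partition by the first
coordinate. -/
theorem stmt2 (n1 n2 : ℕ) (h12 : n2 < n1) (h2 : 3 ≤ n2) {α : Type*}
    (c : Fin n1 × Fin n2 → α) (hc : ProperColoring (E2 n1 n2) c)
    (hsame : c (⟨0, by omega⟩, ⟨0, by omega⟩) = c (⟨0, by omega⟩, ⟨1, by omega⟩)) :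
    ∀ x y : Fin n1 × Fin n2, c x = c y ↔ x.1 = y.1 := by
  have z0 : Fin n2 := ⟨0, by omega⟩
  set r0 : Fin n1 := ⟨0, by omega⟩ with hr0
  have hz01 : (⟨0, by omega⟩ : Fin n2) ≠ ⟨1, by omega⟩ := by simp [Fin.ext_iff]
  -- Step 1: every row is constant on columns 0 and 1
  have hrow : ∀ a : Fin n1, c (a, ⟨0, by omega⟩) = c (a, ⟨1, by omega⟩) := by
    intro a
    by_cases h : a = r0
    · subst h; exact hsame
    · rcases rect hc (show r0 ≠ a from fun e => h e.symm) hz01 with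
        ⟨h1, h2, h3⟩ | ⟨h1, h2, h3⟩ | ⟨h1, h2, h3⟩
      · exact h2
      · exact absurd hsame h3
      · exact absurd hsame h3
  -- Step 2: distinct rows get distinct colors on column 0
  have hinj : ∀ a b : Fin n1, a ≠ b → c (a, ⟨0, by omega⟩) ≠ c (b, ⟨0, by omega⟩) := by
    intro a b hab
    rcases rect hc hab hz01 with ⟨h1, h2, h3⟩ | ⟨h1, h2, h3⟩ | ⟨h1, h2, h3⟩
    · exact h3
    · exact absurd (hrow a) h3
    · exact absurd (hrow a) h3
  -- Step 3: every column agrees with column 0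
  have hcol : ∀ (a : Fin n1) (q : Fin n2), c (a, q) = c (a, ⟨0, by omega⟩) := by
    intro a q
    by_cases hq : q = ⟨0, by omega⟩
    · rw [hq]
    · by_contra hne
      have key : ∀ b : Fin n1, b ≠ a → c (a, q) = c (b, ⟨0, by omega⟩) := by
        intro b hba
        rcases rect hc (show a ≠ b from fun e => hba e.symm)
            (show (⟨0, by omega⟩ : Fin n2) ≠ q from fun e => hq e.symm) with
          ⟨h1, h2, h3⟩ | ⟨h1, h2, h3⟩ | ⟨h1, h2, h3⟩
        · exact absurd h1.symm hne
        · exact absurd h1 (hinj a b (fun e => hba e.symm))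
        · exact h2
      obtain ⟨b1, b2, hb12, hb1, hb2⟩ :
          ∃ b1 b2 : Fin n1, b1 ≠ b2 ∧ b1 ≠ a ∧ b2 ≠ a := by
        by_cases e0 : a = (⟨0, by omega⟩ : Fin n1)
        · exact ⟨⟨1, by omega⟩, ⟨2, by omega⟩, by simp [Fin.ext_iff],
            by simp [e0, Fin.ext_iff], by simp [e0, Fin.ext_iff]⟩
        · by_cases e1 : a = (⟨1, by omega⟩ : Fin n1)
          · exact ⟨⟨0, by omega⟩, ⟨2, by omega⟩, by simp [Fin.ext_iff],
              by simp [e1, Fin.ext_iff], by simp [e1, Fin.ext_iff]⟩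
          · exact ⟨⟨0, by omega⟩, ⟨1, by omega⟩, by simp [Fin.ext_iff],
              fun h => e0 h.symm, fun h => e1 h.symm⟩
      exact hinj b1 b2 hb12 ((key b1 hb1).symm.trans (key b2 hb2))
  intro x y
  have hx := hcol x.1 x.2
  have hy := hcol y.1 y.2
  rw [Prod.mk.eta] at hx hy
  constructor
  · intro h
    by_contra hne
    exact hinj x.1 y.1 hne (by rw [← hx, ← hy]; exact h)
  · intro h
    rw [hx, hy, h]
end

section
/- Let $n_1 > n_2 \geq 3$ be integers, and let $\mathcal{H}_{n_1,n_2}$ be the 3-uniform bi-hypergraph on $X = [n_1] \times [n_2]$ whose edges are all 3-subsets $\{x,y,z\}$ with $|\{x_1,y_1,z_1\}| = 2$ and $|\{x_2,y_2,z_2\}| = 2$. Then $\mathcal{H}_{n_1,n_2}$ has exactly two feasible partitions: the partition by first coordinate (into $n_1$ classes) and the partition by second coordinate (into $n_2$ classes). In particular, its feasible set is $\{n_1, n_2\}$ and $r_{n_1} = r_{n_2} = 1$. -/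
/-- A partition (setoid) is a feasible partition (proper coloring) of a
bi-hypergraph: every edge has two vertices in a common class and two in
distinct classes. -/
def ProperSetoid {X : Type*} (E : Set (Finset X)) (P : Setoid X) : Prop :=
  ∀ b ∈ E, (∃ x ∈ b, ∃ y ∈ b, x ≠ y ∧ P x y) ∧ (∃ x ∈ b, ∃ y ∈ b, ¬ P x y)

namespace Stmt3Aux

variable {n1 n2 : ℕ}

lemma edge_mem {a b : Fin n1} {c d : Fin n2} (hab : a ≠ b) (hcd : c ≠ d) :
    ({(a,c),(a,d),(b,c)} : Finset (Fin n1 × Fin n2)) ∈ E2 n1 n2 := by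
  have h1 : ((a,c) : Fin n1 × Fin n2) ≠ (a,d) := by simp [hcd]
  have h2 : ((a,c) : Fin n1 × Fin n2) ≠ (b,c) := by simp [hab]
  have h3 : ((a,d) : Fin n1 × Fin n2) ≠ (b,c) := by simp [hab]
  refine ⟨?_, ?_, ?_⟩
  · rw [Finset.card_insert_of_notMem (by simp [h1, h2]),
      Finset.card_insert_of_notMem (by simp [h3]), Finset.card_singleton]
  · have : ({(a,c),(a,d),(b,c)} : Finset (Fin n1 × Fin n2)).image Prod.fst = {a, b} := by
      ext x; simp; try tauto
    rw [this, Finset.card_insert_of_notMem (by simp [hab]), Finset.card_singleton]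
  · have : ({(a,c),(a,d),(b,c)} : Finset (Fin n1 × Fin n2)).image Prod.snd = {c, d} := by
      ext x; simp; try tauto
    rw [this, Finset.card_insert_of_notMem (by simp [hcd]), Finset.card_singleton]

lemma key {P : Setoid (Fin n1 × Fin n2)} (hP : ProperSetoid (E2 n1 n2) P)
    {a b : Fin n1} {c d : Fin n2} (hab : a ≠ b) (hcd : c ≠ d) :
    (P (a,c) (a,d) ∨ P (a,c) (b,c) ∨ P (a,d) (b,c)) ∧
      ¬(P (a,c) (a,d) ∧ P (a,c) (b,c)) := by
  obtain ⟨⟨x, hx, y, hy, hxy, hpos⟩, ⟨u, hu, v, hv, hneg⟩⟩ :=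
    hP _ (edge_mem hab hcd)
  simp only [Finset.mem_insert, Finset.mem_singleton] at hx hy hu hv
  constructor
  · rcases hx with rfl|rfl|rfl <;> rcases hy with rfl|rfl|rfl <;>
      first
        | exact absurd rfl hxy
        | exact Or.inl hpos
        | exact Or.inl (P.symm hpos)
        | exact Or.inr (Or.inl hpos)
        | exact Or.inr (Or.inl (P.symm hpos))
        | exact Or.inr (Or.inr hpos)
        | exact Or.inr (Or.inr (P.symm hpos))
  · rintro ⟨e1, e2⟩
    have e3 : P (a,d) (b,c) := P.trans (P.symm e1) e2
    rcases hu with rfl|rfl|rfl <;> rcases hv with rfl|rfl|rfl <;>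
      first
        | exact hneg (P.refl _)
        | exact hneg e1
        | exact hneg (P.symm e1)
        | exact hneg e2
        | exact hneg (P.symm e2)
        | exact hneg e3
        | exact hneg (P.symm e3)

lemma exists_third {n : ℕ} (h : 3 ≤ n) (c d : Fin n) : ∃ f, f ≠ c ∧ f ≠ d := by
  by_contra hcon
  push_neg at hcon
  have hsub : (Finset.univ : Finset (Fin n)) ⊆ {c, d} := by
    intro x _
    simp only [Finset.mem_insert, Finset.mem_singleton]
    by_cases hx : x = c
    · exact Or.inl hx
    · exact Or.inr (hcon x hx)
  have hle := Finset.card_le_card hsub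
  have h2 : ({c, d} : Finset (Fin n)).card ≤ 2 :=
    (Finset.card_insert_le _ _).trans (by simp)
  simp only [Finset.card_univ, Fintype.card_fin] at hle
  omega

lemma auxA {P : Setoid (Fin n1 × Fin n2)} (hP : ProperSetoid (E2 n1 n2) P)
    {a b g : Fin n1} {c d f : Fin n2}
    (hab : a ≠ b) (hga : g ≠ a) (hgb : g ≠ b)
    (hcd : c ≠ d) (hfc : f ≠ c) (hfd : f ≠ d)
    (h1 : P (a,c) (b,d)) (_h2 : P (a,d) (b,c))
    (h3 : ¬ P (a,c) (a,d)) (hf1 : P (a,c) (a,f)) : False := by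
  have hfad : ¬ P (a,f) (a,d) := fun h => h3 (P.trans hf1 h)
  rcases (key hP (c := f) (d := d) hab hfd).1 with h|h|hbf
  · exact hfad h
  · exact (key hP (c := f) (d := c) hab hfc).2 ⟨P.symm hf1, h⟩
  · -- hbf : P (a,d) (b,f)
    have hgc : P (g,c) (a,c) ∨ P (g,c) (a,d) := by
      rcases (key hP (b := g) hga.symm hcd).1 with h|h|h
      · exact absurd h h3
      · exact Or.inl (P.symm h)
      · exact Or.inr (P.symm h)
    have hgd : P (g,d) (a,c) ∨ P (g,d) (a,d) := by
      rcases (key hP (b := g) (c := d) (d := c) hga.symm hcd.symm).1 with h|h|h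
      · exact absurd (P.symm h) h3
      · exact Or.inr (P.symm h)
      · exact Or.inl (P.symm h)
    have hgf : P (g,f) (a,c) ∨ P (g,f) (a,d) := by
      rcases (key hP (b := g) (c := f) (d := d) hga.symm hfd).1 with h|h|h
      · exact absurd (P.trans hf1 h) h3
      · exact Or.inl (P.trans (P.symm h) (P.symm hf1))
      · exact Or.inr (P.symm h)
    rcases hgc with hc1|hc2 <;> rcases hgd with hd1|hd2 <;> rcases hgf with hf1'|hf2'
    · exact (key hP (a := g) (b := a) (c := c) (d := d) hga hcd).2
        ⟨P.trans hc1 (P.symm hd1), hc1⟩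
    · exact (key hP (a := g) (b := a) (c := c) (d := d) hga hcd).2
        ⟨P.trans hc1 (P.symm hd1), hc1⟩
    · -- c ∈ C1, d ∈ C2, f ∈ C1 : c,f both C1
      exact (key hP (a := g) (b := a) (c := c) (d := f) hga hfc.symm).2
        ⟨P.trans hc1 (P.symm hf1'), hc1⟩
    · -- c C1, d C2, f C2 : d,f both C2
      exact (key hP (a := g) (b := a) (c := d) (d := f) hga hfd.symm).2
        ⟨P.trans hd2 (P.symm hf2'), hd2⟩
    · -- c C2, d C1, f C1 : d,f both C1, witness (b,d) ~ (a,c)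
      exact (key hP (a := g) (b := b) (c := d) (d := f) hgb hfd.symm).2
        ⟨P.trans hd1 (P.symm hf1'), P.trans hd1 h1⟩
    · -- c C2, d C1, f C2 : c,f both C2, witness (b,f) ~ (a,d)
      exact (key hP (a := g) (b := b) (c := f) (d := c) hgb hfc).2
        ⟨P.trans hf2' (P.symm hc2), P.trans hf2' hbf⟩
    · exact (key hP (a := g) (b := a) (c := d) (d := c) hga hcd.symm).2
        ⟨P.trans hd2 (P.symm hc2), hd2⟩
    · exact (key hP (a := g) (b := a) (c := d) (d := c) hga hcd.symm).2
        ⟨P.trans hd2 (P.symm hc2), hd2⟩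

lemma diag_not {P : Setoid (Fin n1 × Fin n2)} (hP : ProperSetoid (E2 n1 n2) P)
    (h12 : n2 < n1) (hn2 : 3 ≤ n2) {a b : Fin n1} {c d : Fin n2}
    (hab : a ≠ b) (hcd : c ≠ d) : ¬ P (a,c) (b,d) := by
  intro h1
  have hacbc : ¬ P (a,c) (b,c) := by
    intro h
    exact (key hP (a := b) (b := a) (c := c) (d := d) hab.symm hcd).2
      ⟨P.trans (P.symm h) h1, P.symm h⟩
  have h3 : ¬ P (a,c) (a,d) := by
    intro h
    exact (key hP (a := a) (b := b) (c := d) (d := c) hab hcd.symm).2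
      ⟨P.symm h, P.trans (P.symm h) h1⟩
  have h2' : P (a,d) (b,c) := by
    rcases (key hP hab hcd).1 with h|h|h
    · exact absurd h h3
    · exact absurd h hacbc
    · exact h
  obtain ⟨f, hfc, hfd⟩ := exists_third hn2 c d
  obtain ⟨g, hga, hgb⟩ := exists_third (by omega : 3 ≤ n1) a b
  rcases (key hP (c := c) (d := f) hab hfc.symm).1 with h|h|h
  · exact auxA hP hab hga hgb hcd hfc hfd h1 h2' h3 h
  · exact hacbc h
  · exact auxA hP hab hga hgb hcd.symm hfd hfc h2' h1
      (fun hh => h3 (P.symm hh)) (P.trans h2' (P.symm h))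

end Stmt3Aux

namespace Stmt3Aux
variable {n1 n2 : ℕ}

lemma proper_ker {X Y : Type*} [DecidableEq Y] {E : Set (Finset X)} (f : X → Y)
    (h : ∀ b ∈ E, (b.image f).card < b.card ∧ 1 < (b.image f).card) :
    ProperSetoid E (Setoid.ker f) := by
  intro b hb
  obtain ⟨hlt, hone⟩ := h b hb
  constructor
  · obtain ⟨x, hx, y, hy, hxy, hfxy⟩ := Finset.exists_ne_map_eq_of_card_lt_of_maps_to
      hlt (fun a ha => Finset.mem_image_of_mem f ha)
    exact ⟨x, hx, y, hy, hxy, hfxy⟩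
  · obtain ⟨u, hu, v, hv, huv⟩ := Finset.one_lt_card.mp hone
    obtain ⟨x, hx, rfl⟩ := Finset.mem_image.mp hu
    obtain ⟨y, hy, rfl⟩ := Finset.mem_image.mp hv
    exact ⟨x, hx, y, hy, huv⟩

lemma proper_fst : ProperSetoid (E2 n1 n2) (Setoid.ker (Prod.fst : Fin n1 × Fin n2 → Fin n1)) :=
  proper_ker _ (fun b hb => by obtain ⟨h3, hf, _⟩ := hb; omega)

lemma proper_snd : ProperSetoid (E2 n1 n2) (Setoid.ker (Prod.snd : Fin n1 × Fin n2 → Fin n2)) :=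
  proper_ker _ (fun b hb => by obtain ⟨h3, _, hs⟩ := hb; omega)

lemma classify {P : Setoid (Fin n1 × Fin n2)} (hP : ProperSetoid (E2 n1 n2) P)
    (h12 : n2 < n1) (hn2 : 3 ≤ n2) :
    P = Setoid.ker (Prod.fst : Fin n1 × Fin n2 → Fin n1) ∨
      P = Setoid.ker (Prod.snd : Fin n1 × Fin n2 → Fin n2) := by
  by_cases hcase : ∀ (a : Fin n1) (c d : Fin n2), c ≠ d → P (a,c) (a,d)
  · left
    apply Setoid.ext
    rintro ⟨x1, x2⟩ ⟨y1, y2⟩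
    constructor
    · intro h
      show x1 = y1
      by_contra hne
      by_cases hc : x2 = y2
      · subst hc
        obtain ⟨f, hf, -⟩ := exists_third hn2 x2 x2
        exact diag_not hP h12 hn2 hne hf
          (P.trans (P.symm (hcase x1 x2 f (fun e => hf e.symm))) h)
      · exact diag_not hP h12 hn2 hne hc h
    · intro h
      have hx : x1 = y1 := h
      subst hx
      by_cases hc : x2 = y2
      · subst hc; exact P.refl _
      · exact hcase x1 x2 y2 hc
  · right
    push_neg at hcase
    obtain ⟨a, c, d, hcd, hn⟩ := hcase
    have s1 : ∀ b, P (a,c) (b,c) := by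
      intro b
      by_cases hb : b = a
      · subst hb; exact P.refl _
      · rcases (key hP (b := b) (fun e => hb e.symm) hcd).1 with h|h|h
        · exact absurd h hn
        · exact h
        · exact absurd h (diag_not hP h12 hn2 (fun e => hb e.symm) hcd.symm)
    have s4c : ∀ (b : Fin n1) (f : Fin n2), f ≠ c → ¬ P (b,c) (b,f) := by
      intro b f hf h
      by_cases hb : b = a
      · obtain ⟨b', hb', -⟩ := exists_third (n := n1) (by omega) a a
        exact diag_not hP h12 hn2 hb' (fun e => hf e.symm)
          (P.trans (P.symm (s1 b')) (hb ▸ h))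
      · exact diag_not hP h12 hn2 (fun e => hb e.symm) (fun e => hf e.symm)
          (P.trans (s1 b) h)
    have s4 : ∀ (b : Fin n1) (e f' : Fin n2), e ≠ f' → ¬ P (b,e) (b,f') := by
      intro b e f' hef h
      by_cases he : e = c
      · subst he; exact s4c b f' (fun e2 => hef e2.symm) h
      · by_cases hf : f' = c
        · subst hf; exact s4c b e he (P.symm h)
        · obtain ⟨b', hb', -⟩ := exists_third (n := n1) (by omega) b b
          have hnec : ¬ P (b,e) (b,c) := fun hh => s4c b e he (P.symm hh)
          have hcol : P (b,e) (b',e) := by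
            rcases (key hP (a := b) (b := b') (c := e) (d := c)
                (fun eq => hb' eq.symm) he).1 with h2|h2|h2
            · exact absurd h2 hnec
            · exact h2
            · exact absurd h2 (diag_not hP h12 hn2 (fun eq => hb' eq.symm)
                (fun eq => he eq.symm))
          exact diag_not hP h12 hn2 hb' hef (P.trans (P.symm hcol) h)
    have s5 : ∀ (e : Fin n2) (x y : Fin n1), P (x,e) (y,e) := by
      intro e x y
      by_cases hxy : x = y
      · subst hxy; exact P.refl _
      · by_cases he : e = c
        · subst he; exact P.trans (P.symm (s1 x)) (s1 y)
        · have hnec : ¬ P (x,e) (x,c) := fun hh => s4c x e he (P.symm hh)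
          rcases (key hP (a := x) (b := y) (c := e) (d := c) hxy he).1 with h2|h2|h2
          · exact absurd h2 hnec
          · exact h2
          · exact absurd h2 (diag_not hP h12 hn2 hxy (fun eq => he eq.symm))
    apply Setoid.ext
    rintro ⟨x1, x2⟩ ⟨y1, y2⟩
    constructor
    · intro h
      show x2 = y2
      by_contra hne
      by_cases h1 : x1 = y1
      · subst h1; exact s4 x1 x2 y2 hne h
      · exact diag_not hP h12 hn2 h1 hne h
    · intro h
      have hx : x2 = y2 := h
      subst hx
      exact s5 x2 x1 y1

end Stmt3Aux

/-- for `n₁ > n₂ ≥ 3`, the feasible partitions of `H_{n₁,n₂}` are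
exactly the partition by first coordinate and the partition by second
coordinate; these are distinct and have `n₁` resp. `n₂` classes, so
`Φ = {n₁, n₂}` and `r_{n₁} = r_{n₂} = 1`. -/
theorem stmt3 (n1 n2 : ℕ) (h12 : n2 < n1) (h2 : 3 ≤ n2) :
    {P : Setoid (Fin n1 × Fin n2) | ProperSetoid (E2 n1 n2) P}
      = {Setoid.ker (Prod.fst : Fin n1 × Fin n2 → Fin n1),
         Setoid.ker (Prod.snd : Fin n1 × Fin n2 → Fin n2)} ∧
    Setoid.ker (Prod.fst : Fin n1 × Fin n2 → Fin n1)
      ≠ Setoid.ker (Prod.snd : Fin n1 × Fin n2 → Fin n2) ∧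
    Nat.card (Quotient (Setoid.ker (Prod.fst : Fin n1 × Fin n2 → Fin n1))) = n1 ∧
    Nat.card (Quotient (Setoid.ker (Prod.snd : Fin n1 × Fin n2 → Fin n2))) = n2 := by
  refine ⟨?_, ?_, ?_, ?_⟩
  · ext P
    simp only [Set.mem_setOf_eq, Set.mem_insert_iff, Set.mem_singleton_iff]
    constructor
    · intro hP
      exact Stmt3Aux.classify hP h12 h2
    · rintro (rfl | rfl)
      · exact Stmt3Aux.proper_fst
      · exact Stmt3Aux.proper_snd
  · intro h
    have := (Setoid.ext_iff.mp h (⟨0, by omega⟩, ⟨0, by omega⟩)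
      (⟨0, by omega⟩, ⟨1, by omega⟩)).mp rfl
    have h01 : (⟨0, by omega⟩ : Fin n2) = ⟨1, by omega⟩ := this
    simp [Fin.ext_iff] at h01
  · have e1 := Setoid.quotientKerEquivOfSurjective
      (Prod.fst : Fin n1 × Fin n2 → Fin n1) (fun a => ⟨(a, ⟨0, by omega⟩), rfl⟩)
    rw [Nat.card_congr e1, Nat.card_eq_fintype_card, Fintype.card_fin]
  · have e1 := Setoid.quotientKerEquivOfSurjective
      (Prod.snd : Fin n1 × Fin n2 → Fin n2) (fun a => ⟨((⟨0, by omega⟩ : Fin n1), a), rfl⟩)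
    rw [Nat.card_congr e1, Nat.card_eq_fintype_card, Fintype.card_fin]
end

section
/- Let $s \geq 2$ and $n_1 > n_2 > \cdots > n_s \geq 3$ be integers. Let $\mathcal{H}_{n_1,\ldots,n_s}$ be the 3-uniform bi-hypergraph on $X = [n_1] \times \cdots \times [n_s]$ whose edges are all 3-subsets $\{x,y,z\}$ with $|\{x_j,y_j,z_j\}| = 2$ for every $j \in [s]$. Then the feasible partitions of $\mathcal{H}_{n_1,\ldots,n_s}$ are exactly the $s$ partitions by a fixed coordinate: for each $i \in [s]$, the partition into classes $\{x : x_i = j\}$, $j \in [n_i]$. Consequently $\Phi(\mathcal{H}_{n_1,\ldots,n_s}) = \{n_1, \ldots, n_s\}$ and $r_{n_i} = 1$ for every $i \in [s]$. -/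
set_option maxHeartbeats 1000000


/-- Edge set of the 3-uniform bi-hypergraph `H_{n₁,…,nₛ}`. -/
def Es {s : ℕ} (n : Fin s → ℕ) : Set (Finset (∀ j, Fin (n j))) :=
  {b | b.card = 3 ∧ ∀ j, (b.image fun x => x j).card = 2}

section Aux
variable {s : ℕ} {n : Fin s → ℕ} {P : Setoid (∀ j, Fin (n j))}

lemma third {α : Type*} [Fintype α] [DecidableEq α] (h : 3 ≤ Fintype.card α) (p q : α) :
    ∃ r, r ≠ p ∧ r ≠ q := by
  by_contra hc
  push_neg at hc
  have hsub : (Finset.univ : Finset α) ⊆ {p, q} := by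
    intro a _
    rcases Classical.em (a = p) with h1 | h1
    · simp [h1]
    · simp [hc a h1]
  have := Finset.card_le_card hsub
  have h2 : ({p, q} : Finset α).card ≤ 2 := Finset.card_insert_le _ _ |>.trans (by simp)
  rw [Finset.card_univ] at this
  omega

/-- The central "edge rule": a 3-set that is 2-valued in every coordinate is an
edge, hence has exactly one related pair. -/
lemma rule (hP : ProperSetoid (Es n) P) {x y z : ∀ j, Fin (n j)}
    (hxy : x ≠ y) (hxz : x ≠ z) (hyz : y ≠ z)
    (hsome : ∀ j, x j = y j ∨ x j = z j ∨ y j = z j)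
    (hnotall : ∀ j, ¬(x j = y j ∧ x j = z j)) :
    (P x y ∧ ¬P x z ∧ ¬P y z) ∨ (¬P x y ∧ P x z ∧ ¬P y z) ∨ (¬P x y ∧ ¬P x z ∧ P y z) := by
  set_option maxHeartbeats 1000000 in
  have hb : ({x, y, z} : Finset _) ∈ Es n := by
    constructor
    · rw [Finset.card_insert_of_notMem (by simp [hxy, hxz]),
        Finset.card_insert_of_notMem (by simp [hyz]), Finset.card_singleton]
    · intro j
      have himg : (({x, y, z} : Finset _).image fun v => v j) = {x j, y j, z j} := by
        simp [Finset.image_insert]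
      rw [himg]
      rcases hsome j with h | h | h
      · have hne : x j ≠ z j := fun hc => hnotall j ⟨h, hc⟩
        apply Finset.card_eq_two.mpr
        refine ⟨x j, z j, hne, ?_⟩
        apply Finset.ext
        intro a
        simp only [Finset.mem_insert, Finset.mem_singleton]
        constructor
        · rintro (rfl | rfl | rfl) <;> tauto
        · rintro (rfl | rfl) <;> tauto
      · have hne : x j ≠ y j := fun hc => hnotall j ⟨hc, h⟩
        apply Finset.card_eq_two.mpr
        refine ⟨x j, y j, hne, ?_⟩
        apply Finset.ext
        intro a
        simp only [Finset.mem_insert, Finset.mem_singleton]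
        constructor
        · rintro (rfl | rfl | rfl) <;> tauto
        · rintro (rfl | rfl) <;> tauto
      · have hne : x j ≠ y j := by
          intro hc
          exact hnotall j ⟨hc, hc.trans h⟩
        apply Finset.card_eq_two.mpr
        refine ⟨x j, y j, hne, ?_⟩
        apply Finset.ext
        intro a
        simp only [Finset.mem_insert, Finset.mem_singleton]
        constructor
        · rintro (rfl | rfl | rfl) <;> tauto
        · rintro (rfl | rfl) <;> tauto
  obtain ⟨⟨p, hp, q, hq, hpq, hR⟩, ⟨p', hp', q', hq', hR'⟩⟩ := hP _ hb
  simp only [Finset.mem_insert, Finset.mem_singleton] at hp hq hp' hq'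
  -- at least one of the three pair relations holds
  have hone : P x y ∨ P x z ∨ P y z := by
    rcases hp with rfl | rfl | rfl <;> rcases hq with rfl | rfl | rfl <;>
      first
        | exact absurd rfl hpq
        | exact Or.inl hR
        | exact Or.inl (P.symm' hR)
        | exact Or.inr (Or.inl hR)
        | exact Or.inr (Or.inl (P.symm' hR))
        | exact Or.inr (Or.inr hR)
        | exact Or.inr (Or.inr (P.symm' hR))
  -- no two of the three pair relations hold
  have hall : P x y → P x z → False := by
    intro h1 h2
    have h3 : P y z := P.trans' (P.symm' h1) h2
    apply hR'
    rcases hp' with rfl | rfl | rfl <;> rcases hq' with rfl | rfl | rfl <;>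
      first
        | exact P.refl' _
        | exact h1 | exact P.symm' h1
        | exact h2 | exact P.symm' h2
        | exact h3 | exact P.symm' h3
  have e1 : ¬(P x y ∧ P x z) := fun ⟨h1, h2⟩ => hall h1 h2
  have e2 : ¬(P x y ∧ P y z) := fun ⟨h1, h2⟩ => hall h1 (P.trans' h1 h2)
  have e3 : ¬(P x z ∧ P y z) := fun ⟨h1, h2⟩ => hall (P.trans' h1 (P.symm' h2)) h1
  rcases hone with h | h | h
  · exact Or.inl ⟨h, fun h2 => hall h h2, fun h2 => e2 ⟨h, h2⟩⟩
  · exact Or.inr (Or.inl ⟨fun h1 => e1 ⟨h1, h⟩, h, fun h2 => e3 ⟨h, h2⟩⟩)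
  · exact Or.inr (Or.inr ⟨fun h1 => e2 ⟨h1, h⟩, fun h1 => e3 ⟨h1, h⟩, h⟩)

/-- (†): if `x ~ y` then any third point completing an edge is unrelated to both. -/
lemma mix (hP : ProperSetoid (Es n) P) {x y z : ∀ j, Fin (n j)}
    (hxy : x ≠ y) (hxz : x ≠ z) (hyz : y ≠ z)
    (hA : ∀ m, x m = y m → z m ≠ x m) (hD : ∀ m, x m ≠ y m → z m = x m ∨ z m = y m)
    (hR : P x y) : ¬P x z ∧ ¬P y z := by
  have hsome : ∀ j, x j = y j ∨ x j = z j ∨ y j = z j := by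
    intro j
    rcases Classical.em (x j = y j) with h | h
    · exact Or.inl h
    · rcases hD j h with h2 | h2
      · exact Or.inr (Or.inl h2.symm)
      · exact Or.inr (Or.inr h2.symm)
  have hnotall : ∀ j, ¬(x j = y j ∧ x j = z j) := by
    intro j ⟨h1, h2⟩
    exact hA j h1 h2.symm
  rcases rule hP hxy hxz hyz hsome hnotall with ⟨_, h2, h3⟩ | ⟨h1, _, _⟩ | ⟨h1, _, _⟩
  · exact ⟨h2, h3⟩
  · exact absurd hR h1
  · exact absurd hR h1

/-- (‡): if `x ≁ y` then any third point completing an edge is related to exactly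
one of them. -/
lemma fork (hP : ProperSetoid (Es n) P) {x y z : ∀ j, Fin (n j)}
    (hxy : x ≠ y) (hxz : x ≠ z) (hyz : y ≠ z)
    (hA : ∀ m, x m = y m → z m ≠ x m) (hD : ∀ m, x m ≠ y m → z m = x m ∨ z m = y m)
    (hR : ¬P x y) : (P x z ∧ ¬P y z) ∨ (¬P x z ∧ P y z) := by
  have hsome : ∀ j, x j = y j ∨ x j = z j ∨ y j = z j := by
    intro j
    rcases Classical.em (x j = y j) with h | h
    · exact Or.inl h
    · rcases hD j h with h2 | h2
      · exact Or.inr (Or.inl h2.symm)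
      · exact Or.inr (Or.inr h2.symm)
  have hnotall : ∀ j, ¬(x j = y j ∧ x j = z j) := by
    intro j ⟨h1, h2⟩
    exact hA j h1 h2.symm
  rcases rule hP hxy hxz hyz hsome hnotall with ⟨h1, _, _⟩ | ⟨_, h2, h3⟩ | ⟨_, h2, h3⟩
  · exact absurd h1 hR
  · exact Or.inl ⟨h2, h3⟩
  · exact Or.inr ⟨h2, h3⟩

lemma exists_ne_coord (hs : 2 ≤ s) (k : Fin s) : ∃ j : Fin s, j ≠ k := by
  rcases Classical.em (k = (⟨0, by omega⟩ : Fin s)) with h | h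
  · exact ⟨⟨1, by omega⟩, by rw [h]; intro hc; simpa [Fin.ext_iff] using hc⟩
  · exact ⟨⟨0, by omega⟩, fun hc => h hc.symm⟩

/-- Swap lemma: antipodal propagation for pairs differing everywhere. -/
lemma swap (hP : ProperSetoid (Es n) P) (hs : 2 ≤ s) {x y : ∀ j, Fin (n j)}
    (hall : ∀ m, x m ≠ y m) (hR : P x y) (k : Fin s) :
    P (Function.update x k (y k)) (Function.update y k (x k)) := by
  obtain ⟨j, hjk⟩ := exists_ne_coord hs k
  set z := Function.update x k (y k) with hz
  set w := Function.update y k (x k) with hw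
  have hzk : z k = y k := Function.update_self _ _ _
  have hwk : w k = x k := Function.update_self _ _ _
  have hzm : ∀ m, m ≠ k → z m = x m := fun m hm => Function.update_of_ne hm _ _
  have hwm : ∀ m, m ≠ k → w m = y m := fun m hm => Function.update_of_ne hm _ _
  have hxy : x ≠ y := fun h => hall k (congrFun h k)
  have hxz : x ≠ z := fun h => hall k ((congrFun h k).trans hzk)
  have hyz : y ≠ z := fun h => hall j (((congrFun h j).trans (hzm j hjk)).symm)
  have hxw : x ≠ w := fun h => hall j ((congrFun h j).trans (hwm j hjk))
  have hyw : y ≠ w := fun h => hall k (((congrFun h k).trans hwk).symm)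
  have hzw : z ≠ w := by
    intro h
    have hc := congrFun h k
    rw [hzk, hwk] at hc
    exact hall k hc.symm
  -- ¬ P x z  (z is a mix of (x,y))
  have h1 : ¬P x z := by
    refine (mix hP hxy hxz hyz (fun m hm => absurd hm (hall m)) (fun m _ => ?_) hR).1
    rcases Classical.em (m = k) with rfl | hm
    · exact Or.inr hzk
    · exact Or.inl (hzm m hm)
  -- ¬ P x w  (w is a mix of (x,y))
  have h2 : ¬P x w := by
    refine (mix hP hxy hxw hyw (fun m hm => absurd hm (hall m)) (fun m _ => ?_) hR).1
    rcases Classical.em (m = k) with rfl | hm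
    · exact Or.inl hwk
    · exact Or.inr (hwm m hm)
  -- fork on (x, z) with third w
  have h3 := fork hP hxz hxw hzw (fun m hm => ?_) (fun m hm => ?_) h1
  · rcases h3 with ⟨h4, _⟩ | ⟨_, h4⟩
    · exact absurd h4 h2
    · exact h4
  · -- x m = z m → w m ≠ x m
    rcases Classical.em (m = k) with rfl | hmk
    · exact absurd (hm.trans hzk) (hall m)
    · rw [hwm m hmk]; exact fun hc => hall m hc.symm
  · -- x m ≠ z m → w m = x m ∨ w m = z m
    rcases Classical.em (m = k) with rfl | hmk
    · exact Or.inl hwk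
    · exact absurd (hzm m hmk).symm hm

/-- Transfer lemma (T1): an unrelated flip pair at `j` transfers to any parallel
pair displaced off `x` in all other coordinates, with a scenario dichotomy. -/
lemma transfer (hP : ProperSetoid (Es n) P) (hs : 2 ≤ s) {x y : ∀ j, Fin (n j)} {j : Fin s}
    (hagree : ∀ m, m ≠ j → x m = y m) (hne : x j ≠ y j) (hxy : ¬P x y)
    {z : ∀ j, Fin (n j)} (hzj : z j = x j) (hzm : ∀ m, m ≠ j → z m ≠ x m) :
    ¬P z (Function.update z j (y j)) ∧
      ((P x z ∧ P y (Function.update z j (y j))) ∨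
       (P x (Function.update z j (y j)) ∧ P y z)) := by
  obtain ⟨j', hj'⟩ := exists_ne_coord hs j
  set z' := Function.update z j (y j) with hz'
  have hz'j : z' j = y j := Function.update_self _ _ _
  have hz'm : ∀ m, m ≠ j → z' m = z m := fun m hm => Function.update_of_ne hm _ _
  have hxyne : x ≠ y := fun h => hne (congrFun h j)
  have hxz : x ≠ z := fun h => hzm j' hj' (congrFun h j').symm
  have hxz' : x ≠ z' := fun h => hne ((congrFun h j).trans hz'j)
  have hyz : y ≠ z := fun h => hne ((congrFun h j).trans hzj).symm
  have hyz' : y ≠ z' := by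
    intro h
    have hc := congrFun h j'
    rw [hz'm j' hj'] at hc
    exact hzm j' hj' (hc.symm.trans ((hagree j' hj').symm))
  have hzz' : z ≠ z' := fun h => hne (hzj.symm.trans ((congrFun h j).trans hz'j))
  have X1 := fork hP hxyne hxz hyz
    (fun m hm => by
      rcases Classical.em (m = j) with rfl | hmj
      · exact absurd hm hne
      · exact hzm m hmj)
    (fun m hm => by
      rcases Classical.em (m = j) with rfl | hmj
      · exact Or.inl hzj
      · exact absurd (hagree m hmj) hm) hxy
  have X2 := fork hP hxyne hxz' hyz'
    (fun m hm => by
      rcases Classical.em (m = j) with rfl | hmj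
      · exact absurd hm hne
      · rw [hz'm m hmj]; exact hzm m hmj)
    (fun m hm => by
      rcases Classical.em (m = j) with rfl | hmj
      · exact Or.inr hz'j
      · exact absurd (hagree m hmj) hm) hxy
  have E1 := rule hP hxz hxz' hzz'
    (fun m => by
      rcases Classical.em (m = j) with rfl | hmj
      · exact Or.inl hzj.symm
      · exact Or.inr (Or.inr (hz'm m hmj).symm))
    (fun m => by
      rcases Classical.em (m = j) with rfl | hmj
      · rintro ⟨_, h2⟩; exact hne (h2.trans hz'j)
      · rintro ⟨h1, _⟩; exact hzm m hmj h1.symm)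
  have E2 := rule hP hyz hyz' hzz'
    (fun m => by
      rcases Classical.em (m = j) with rfl | hmj
      · exact Or.inr (Or.inl hz'j.symm)
      · exact Or.inr (Or.inr (hz'm m hmj).symm))
    (fun m => by
      rcases Classical.em (m = j) with rfl | hmj
      · rintro ⟨h1, _⟩; exact hne (h1.trans hzj).symm
      · rintro ⟨h1, _⟩; exact hzm m hmj ((h1.symm).trans ((hagree m hmj).symm)))
  rcases E1 with ⟨hα, hβ', hε'⟩ | ⟨hα', hβ, hε'⟩ | ⟨hα', hβ', hε⟩
  · have hγ' : ¬P y z := by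
      rcases X1 with ⟨_, h⟩ | ⟨h, _⟩
      · exact h
      · exact absurd hα h
    have hδ : P y z' := by
      rcases X2 with ⟨h, _⟩ | ⟨_, h⟩
      · exact absurd h hβ'
      · exact h
    exact ⟨hε', Or.inl ⟨hα, hδ⟩⟩
  · have hγ : P y z := by
      rcases X1 with ⟨h, _⟩ | ⟨_, h⟩
      · exact absurd h hα'
      · exact h
    exact ⟨hε', Or.inr ⟨hβ, hγ⟩⟩
  · exfalso
    have hγ : P y z := by
      rcases X1 with ⟨h, _⟩ | ⟨_, h⟩
      · exact absurd h hα'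
      · exact h
    have hδ : P y z' := by
      rcases X2 with ⟨h, _⟩ | ⟨_, h⟩
      · exact absurd h hβ'
      · exact h
    rcases E2 with ⟨_, _, h⟩ | ⟨h, _, _⟩ | ⟨h, _, _⟩
    · exact h hε
    · exact h hγ
    · exact h hγ

/-- Antipodal pairs in the box spanned by an everywhere-differing related pair
are all related. -/
lemma antipodal (hP : ProperSetoid (Es n) P) (hs : 2 ≤ s) {x y : ∀ j, Fin (n j)}
    (hall : ∀ m, x m ≠ y m) (hR : P x y) (T : Finset (Fin s)) :
    P (fun m => if m ∈ T then y m else x m) (fun m => if m ∈ T then x m else y m) := by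
  classical
  induction T using Finset.induction_on with
  | empty => simpa using hR
  | @insert a T ha IH =>
      have hall' : ∀ m, (fun m => if m ∈ T then y m else x m) m ≠
          (fun m => if m ∈ T then x m else y m) m := by
        intro m
        by_cases hm : m ∈ T
        · simp only [hm, if_pos]
          exact (hall m).symm
        · simp only [hm, if_neg, if_false]
          exact hall m
      have hsw := swap hP hs hall' IH a
      have e1 : Function.update (fun m => if m ∈ T then y m else x m) a
          ((fun m => if m ∈ T then x m else y m) a) =
          (fun m => if m ∈ insert a T then y m else x m) := by
        funext m
        by_cases hm : m = a
        · subst hm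
          rw [Function.update_self]
          simp [ha]
        · rw [Function.update_of_ne hm]
          simp [Finset.mem_insert, hm]
      have e2 : Function.update (fun m => if m ∈ T then x m else y m) a
          ((fun m => if m ∈ T then y m else x m) a) =
          (fun m => if m ∈ insert a T then x m else y m) := by
        funext m
        by_cases hm : m = a
        · subst hm
          rw [Function.update_self]
          simp [ha]
        · rw [Function.update_of_ne hm]
          simp [Finset.mem_insert, hm]
      rwa [e1, e2] at hsw

/-- C1: a related pair cannot differ in every coordinate. -/
lemma noAllDiff (hP : ProperSetoid (Es n) P) (hs : 2 ≤ s) (h3 : ∀ i, 3 ≤ n i)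
    {x y : ∀ j, Fin (n j)} (hR : P x y) : ∃ m, x m = y m := by
  classical
  by_contra hcon
  push_neg at hcon
  have hall : ∀ m, x m ≠ y m := hcon
  have hxy : x ≠ y := fun h => hall ⟨0, by omega⟩ (congrFun h _)
  rcases Nat.lt_or_ge s 3 with hs2 | hs3
  · -- ================= case s = 2 =================
    set j : Fin s := ⟨0, by omega⟩ with hjdef
    set k : Fin s := ⟨1, by omega⟩ with hkdef
    have hjk : j ≠ k := by simp [hjdef, hkdef, Fin.ext_iff]
    have hkj : k ≠ j := hjk.symm
    have htwo : ∀ m : Fin s, m = j ∨ m = k := by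
      intro m
      have hm := m.2
      by_cases h0 : (m : ℕ) = 0
      · exact Or.inl (Fin.ext (by simp [hjdef, h0]))
      · exact Or.inr (Fin.ext (by simp [hkdef]; omega))
    have ext2 : ∀ u v : (∀ j, Fin (n j)), u j = v j → u k = v k → u = v := by
      intro u v h1 h2
      funext m
      rcases htwo m with rfl | rfl
      · exact h1
      · exact h2
    obtain ⟨a'', ha1, ha2⟩ := third (by rw [Fintype.card_fin]; exact h3 j) (x j) (y j)
    obtain ⟨b'', hb1, hb2⟩ := third (by rw [Fintype.card_fin]; exact h3 k) (x k) (y k)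
    obtain ⟨p1, hp1⟩ : ∃ p1, p1 = Function.update x j (y j) := ⟨_, rfl⟩
    obtain ⟨q1, hq1⟩ : ∃ q1, q1 = Function.update x k (y k) := ⟨_, rfl⟩
    obtain ⟨u1, hu1⟩ : ∃ u1, u1 = Function.update x k b'' := ⟨_, rfl⟩
    obtain ⟨u2, hu2⟩ : ∃ u2, u2 = Function.update p1 k b'' := ⟨_, rfl⟩
    obtain ⟨w1, hw1⟩ : ∃ w1, w1 = Function.update x j a'' := ⟨_, rfl⟩
    obtain ⟨w2, hw2⟩ : ∃ w2, w2 = Function.update q1 j a'' := ⟨_, rfl⟩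
    obtain ⟨u3, hu3⟩ : ∃ u3, u3 = Function.update w1 k b'' := ⟨_, rfl⟩
    have hp1j : p1 j = y j := by rw [hp1]; exact Function.update_self _ _ _
    have hp1k : p1 k = x k := by rw [hp1]; exact Function.update_of_ne hkj _ _
    have hq1j : q1 j = x j := by rw [hq1]; exact Function.update_of_ne hjk _ _
    have hq1k : q1 k = y k := by rw [hq1]; exact Function.update_self _ _ _
    have hu1j : u1 j = x j := by rw [hu1]; exact Function.update_of_ne hjk _ _
    have hu1k : u1 k = b'' := by rw [hu1]; exact Function.update_self _ _ _
    have hu2j : u2 j = y j := by rw [hu2]; exact (Function.update_of_ne hjk _ _).trans hp1j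
    have hu2k : u2 k = b'' := by rw [hu2]; exact Function.update_self _ _ _
    have hw1j : w1 j = a'' := by rw [hw1]; exact Function.update_self _ _ _
    have hw1k : w1 k = x k := by rw [hw1]; exact Function.update_of_ne hkj _ _
    have hw2j : w2 j = a'' := by rw [hw2]; exact Function.update_self _ _ _
    have hw2k : w2 k = y k := by rw [hw2]; exact (Function.update_of_ne hkj _ _).trans hq1k
    have hu3j : u3 j = a'' := by rw [hu3]; exact (Function.update_of_ne hjk _ _).trans hw1j
    have hu3k : u3 k = b'' := by rw [hu3]; exact Function.update_self _ _ _
    -- (f1)  p1 ~ q1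
    have hPQ : P p1 q1 := by
      have hsw := swap hP hs hall hR j
      have e : Function.update y j (x j) = q1 :=
        ext2 _ _ ((Function.update_self _ _ _).trans hq1j.symm)
          ((Function.update_of_ne hkj _ _).trans hq1k.symm)
      rw [← hp1, e] at hsw
      exact hsw
    -- (f2) x,y unrelated to p1, q1
    have hmixp1 : ¬P x p1 ∧ ¬P y p1 := by
      refine mix hP hxy (fun h => hall j ((congrFun h j).trans hp1j))
        (fun h => hall k (((congrFun h k).trans hp1k).symm))
        (fun m hm => absurd hm (hall m)) (fun m _ => ?_) hR
      rcases htwo m with rfl | rfl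
      · exact Or.inr hp1j
      · exact Or.inl hp1k
    have hmixq1 : ¬P x q1 ∧ ¬P y q1 := by
      refine mix hP hxy (fun h => hall k ((congrFun h k).trans hq1k))
        (fun h => hall j (((congrFun h j).trans hq1j).symm))
        (fun m hm => absurd hm (hall m)) (fun m _ => ?_) hR
      rcases htwo m with rfl | rfl
      · exact Or.inl hq1j
      · exact Or.inr hq1k
    -- (f3) scenario for the pair (x, p1) displaced by b''
    have htr1 := transfer hP hs (j := j)
      (fun m hm => by
        rcases htwo m with rfl | rfl
        · exact absurd rfl hm
        · exact hp1k.symm)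
      (by rw [hp1j]; exact hall j) hmixp1.1 hu1j
      (fun m hm => by
        rcases htwo m with rfl | rfl
        · exact absurd rfl hm
        · rw [hu1k]; exact hb1)
    have e3 : Function.update u1 j (p1 j) = u2 :=
      ext2 _ _ ((Function.update_self _ _ _).trans (hp1j.trans hu2j.symm))
        ((Function.update_of_ne hkj _ _).trans (hu1k.trans hu2k.symm))
    rw [e3] at htr1
    -- (f4) scenario for the pair (x, q1) displaced by a''
    have htr2 := transfer hP hs (j := k)
      (fun m hm => by
        rcases htwo m with rfl | rfl
        · exact hq1j.symm
        · exact absurd rfl hm)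
      (by rw [hq1k]; exact hall k) hmixq1.1 hw1k
      (fun m hm => by
        rcases htwo m with rfl | rfl
        · rw [hw1j]; exact ha1
        · exact absurd rfl hm)
    have e4 : Function.update w1 k (q1 k) = w2 :=
      ext2 _ _ ((Function.update_of_ne hjk _ _).trans (hw1j.trans hw2j.symm))
        ((Function.update_self _ _ _).trans (hq1k.trans hw2k.symm))
    rw [e4] at htr2
    rcases htr1.2 with ⟨h1, h2⟩ | ⟨h1, h2⟩
    · -- Case 1 : x ~ u1 and p1 ~ u2
      have hmixw1 : ¬P x w1 ∧ ¬P u1 w1 := by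
        refine mix hP (fun h => hb1 (((congrFun h k).trans hu1k).symm))
          (fun h => ha1 (((congrFun h j).trans hw1j).symm))
          (fun h => ha1 (((hu1j.symm.trans (congrFun h j)).trans hw1j).symm))
          (fun m hm => ?_) (fun m hm => ?_) h1
        · rcases htwo m with rfl | rfl
          · rw [hw1j]; intro hc; exact ha1 (hc ▸ rfl)
          · exact absurd (hm.trans hu1k).symm hb1
        · rcases htwo m with rfl | rfl
          · exact absurd hu1j.symm hm
          · exact Or.inl hw1k
      rcases htr2.2 with ⟨h3, h4⟩ | ⟨h3, h4⟩
      · exact hmixw1.1 h3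
      · have hc1 : P p1 w1 := P.trans' hPQ h4
        have hmix2 : ¬P p1 w1 ∧ ¬P u2 w1 := by
          refine mix hP (fun h => hb1 (((hp1k.symm.trans (congrFun h k)).trans hu2k).symm))
            (fun h => ha2 (((hp1j.symm.trans (congrFun h j)).trans hw1j).symm))
            (fun h => ha2 (((hu2j.symm.trans (congrFun h j)).trans hw1j).symm))
            (fun m hm => ?_) (fun m hm => ?_) h2
          · rcases htwo m with rfl | rfl
            · rw [hw1j, hp1j]; exact ha2
            · exact absurd ((hp1k.symm.trans hm).trans hu2k).symm hb1
          · rcases htwo m with rfl | rfl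
            · exact absurd (hp1j.trans hu2j.symm) hm
            · exact Or.inl (hw1k.trans hp1k.symm)
        exact hmix2.1 hc1
    · -- Case 2 : x ~ u2 and p1 ~ u1
      rcases htr2.2 with ⟨h3, h4⟩ | ⟨h3, h4⟩
      · -- Case 2a : x ~ w1 and q1 ~ w2
        have hu2w1 : P u2 w1 := P.trans' (P.symm' h1) h3
        have hall2 : ∀ m, u2 m ≠ w1 m := by
          intro m
          rcases htwo m with rfl | rfl
          · rw [hu2j, hw1j]; exact fun hc => ha2 hc.symm
          · rw [hu2k, hw1k]; exact hb1
        have hsw2 := swap hP hs hall2 hu2w1 j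
        have e5 : Function.update u2 j (w1 j) = u3 :=
          ext2 _ _ ((Function.update_self _ _ _).trans (hw1j.trans hu3j.symm))
            ((Function.update_of_ne hkj _ _).trans (hu2k.trans hu3k.symm))
        have e6 : Function.update w1 j (u2 j) = p1 :=
          ext2 _ _ ((Function.update_self _ _ _).trans (hu2j.trans hp1j.symm))
            ((Function.update_of_ne hkj _ _).trans (hw1k.trans hp1k.symm))
        rw [e5, e6] at hsw2
        have Ru1w2 : P u1 w2 := P.trans' (P.symm' h2) (P.trans' hPQ h4)
        have Ru1u3 : P u1 u3 := P.trans' (P.symm' h2) (P.symm' hsw2)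
        have Rw2u3 : P w2 u3 :=
          P.trans' (P.symm' h4) (P.trans' (P.symm' hPQ) (P.symm' hsw2))
        have hr := rule hP (x := u1) (y := w2) (z := u3)
          (fun h => ha1 (((hu1j.symm.trans (congrFun h j)).trans hw2j).symm))
          (fun h => ha1 (((hu1j.symm.trans (congrFun h j)).trans hu3j).symm))
          (fun h => hb2 (hw2k.symm.trans ((congrFun h k).trans hu3k)).symm)
          (fun m => by
            rcases htwo m with rfl | rfl
            · exact Or.inr (Or.inr (hw2j.trans hu3j.symm))
            · exact Or.inr (Or.inl (hu1k.trans hu3k.symm)))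
          (fun m => by
            rcases htwo m with rfl | rfl
            · rintro ⟨hA1, _⟩; exact ha1 ((hu1j.symm.trans hA1).trans hw2j).symm
            · rintro ⟨hA1, _⟩; exact hb2 (hu1k.symm.trans (hA1.trans hw2k)))
        rcases hr with ⟨_, h, _⟩ | ⟨h, _, _⟩ | ⟨h, _, _⟩
        · exact h Ru1u3
        · exact h Ru1w2
        · exact h Ru1w2
      · -- Case 2b : x ~ w2 and q1 ~ w1
        have Ryu2 : P y u2 := P.trans' (P.symm' hR) h1
        have Ryw2 : P y w2 := P.trans' (P.symm' hR) h3
        have Ru2w2 : P u2 w2 := P.trans' (P.symm' h1) h3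
        have hr := rule hP (x := y) (y := u2) (z := w2)
          (fun h => hb2 (((congrFun h k).trans hu2k).symm))
          (fun h => ha2 (((congrFun h j).trans hw2j).symm))
          (fun h => hb2 (hu2k.symm.trans ((congrFun h k).trans hw2k)))
          (fun m => by
            rcases htwo m with rfl | rfl
            · exact Or.inl hu2j.symm
            · exact Or.inr (Or.inl hw2k.symm))
          (fun m => by
            rcases htwo m with rfl | rfl
            · rintro ⟨_, h2'⟩; exact ha2 (h2'.trans hw2j).symm
            · rintro ⟨h1', _⟩; exact hb2 (h1'.trans hu2k).symm)
        rcases hr with ⟨_, h, _⟩ | ⟨h, _, _⟩ | ⟨h, _, _⟩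
        · exact h Ryw2
        · exact h Ryu2
        · exact h Ryu2
  · -- ================= case s ≥ 3 =================
    set c1 : Fin s := ⟨0, by omega⟩ with hc1def
    set c2 : Fin s := ⟨1, by omega⟩ with hc2def
    set c3 : Fin s := ⟨2, by omega⟩ with hc3def
    have h12 : c1 ≠ c2 := by simp [hc1def, hc2def, Fin.ext_iff]
    have h13 : c1 ≠ c3 := by simp [hc1def, hc3def, Fin.ext_iff]
    have h23 : c2 ≠ c3 := by simp [hc2def, hc3def, Fin.ext_iff]
    obtain ⟨w, hw⟩ : ∃ w, w = fun m => if m = c1 then x m else y m := ⟨_, rfl⟩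
    obtain ⟨wb, hwb⟩ : ∃ wb, wb = fun m => if m = c1 then y m else x m := ⟨_, rfl⟩
    obtain ⟨v, hv⟩ : ∃ v, v = fun m => if m = c2 then x m else y m := ⟨_, rfl⟩
    have hwc1 : w c1 = x c1 := by rw [hw]; simp
    have hwm : ∀ m, m ≠ c1 → w m = y m := by intro m hm; rw [hw]; simp [hm]
    have hwbc1 : wb c1 = y c1 := by rw [hwb]; simp
    have hwbm : ∀ m, m ≠ c1 → wb m = x m := by intro m hm; rw [hwb]; simp [hm]
    have hvc2 : v c2 = x c2 := by rw [hv]; simp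
    have hvm : ∀ m, m ≠ c2 → v m = y m := by intro m hm; rw [hv]; simp [hm]
    -- w ~ wb by antipodal
    have hA := antipodal hP hs hall hR (Finset.univ.erase c1)
    have e1 : (fun m => if m ∈ Finset.univ.erase c1 then y m else x m) = w := by
      funext m
      by_cases hm : m = c1
      · rw [hw]; simp [hm]
      · rw [hw]; simp [hm]
    have e2 : (fun m => if m ∈ Finset.univ.erase c1 then x m else y m) = wb := by
      funext m
      by_cases hm : m = c1
      · rw [hwb]; simp [hm]
      · rw [hwb]; simp [hm]
    rw [e1, e2] at hA
    have hwwb : ∀ m, w m ≠ wb m := by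
      intro m
      by_cases hm : m = c1
      · subst hm; rw [hwc1, hwbc1]; exact hall _
      · rw [hwm m hm, hwbm m hm]; exact fun hc => hall m hc.symm
    -- distinctness
    have hxw : x ≠ w := fun h => hall c2 ((congrFun h c2).trans (hwm c2 h12.symm))
    have hyw : y ≠ w := fun h => hall c1 (((congrFun h c1).trans hwc1).symm)
    have hxv : x ≠ v := fun h => hall c1 ((congrFun h c1).trans (hvm c1 h12))
    have hyv : y ≠ v := fun h => hall c2 (((congrFun h c2).trans hvc2).symm)
    have hwv : w ≠ v :=
      fun h => hall c1 (hwc1.symm.trans ((congrFun h c1).trans (hvm c1 h12)))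
    have hwbv : wb ≠ v :=
      fun h => hall c3 ((hwbm c3 h13.symm).symm.trans ((congrFun h c3).trans (hvm c3 h23.symm)))
    -- x unrelated to w and to v
    have hmixw : ¬P x w ∧ ¬P y w := by
      refine mix hP hxy hxw hyw (fun m hm => absurd hm (hall m)) (fun m _ => ?_) hR
      by_cases hm : m = c1
      · subst hm; exact Or.inl hwc1
      · exact Or.inr (hwm m hm)
    have hmixv : ¬P x v ∧ ¬P y v := by
      refine mix hP hxy hxv hyv (fun m hm => absurd hm (hall m)) (fun m _ => ?_) hR
      by_cases hm : m = c2
      · subst hm; exact Or.inl hvc2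
      · exact Or.inr (hvm m hm)
    -- w unrelated to v (v is a mix of the related pair (w, wb))
    have hmixwv : ¬P w v ∧ ¬P wb v := by
      refine mix hP (fun h => hwwb c1 (congrFun h c1)) hwv hwbv
        (fun m hm => absurd hm (hwwb m)) (fun m _ => ?_) hA
      by_cases hm1 : m = c1
      · subst hm1; exact Or.inr ((hvm c1 h12).trans hwbc1.symm)
      · by_cases hm2 : m = c2
        · subst hm2; exact Or.inr (hvc2.trans (hwbm c2 hm1).symm)
        · exact Or.inl ((hvm m hm2).trans (hwm m hm1).symm)
    -- final contradiction: the edge {x, w, v} has no related pair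
    have hr := rule hP (x := x) (y := w) (z := v) hxw hxv hwv
      (fun m => by
        by_cases hm1 : m = c1
        · subst hm1; exact Or.inl hwc1.symm
        · by_cases hm2 : m = c2
          · subst hm2; exact Or.inr (Or.inl hvc2.symm)
          · exact Or.inr (Or.inr ((hwm m hm1).trans (hvm m hm2).symm)))
      (fun m => by
        by_cases hm1 : m = c1
        · subst hm1; rintro ⟨_, h2⟩; exact hall c1 (h2.trans (hvm c1 h12))
        · by_cases hm2 : m = c2
          · subst hm2; rintro ⟨h1, _⟩; exact hall c2 (h1.trans (hwm c2 hm1))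
          · rintro ⟨h1, _⟩; exact hall m (h1.trans (hwm m hm1)))
    rcases hr with ⟨h, _, _⟩ | ⟨_, h, _⟩ | ⟨_, _, h⟩
    · exact hmixw.1 h
    · exact hmixv.1 h
    · exact hmixwv.1 h

/-- Line lemma: an unrelated flip pair at `j` makes the whole `j`-line rainbow. -/
lemma line (hP : ProperSetoid (Es n) P) (hs : 2 ≤ s) (h3 : ∀ i, 3 ≤ n i)
    {u v : ∀ j, Fin (n j)} {j : Fin s} (hagree : ∀ m, m ≠ j → u m = v m)
    (hne : u j ≠ v j) (huv : ¬P u v) {γ : Fin (n j)} (hγ1 : γ ≠ u j) (hγ2 : γ ≠ v j) :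
    ¬P u (Function.update u j γ) ∧ ¬P v (Function.update u j γ) := by
  classical
  obtain ⟨j', hj'⟩ := exists_ne_coord hs j
  have hex : ∀ m, ∃ t : Fin (n m), t ≠ u m := by
    intro m
    obtain ⟨r, hr, _⟩ := third (by rw [Fintype.card_fin]; exact h3 m) (u m) (u m)
    exact ⟨r, hr⟩
  choose f hf using hex
  obtain ⟨z, hz⟩ : ∃ z, z = Function.update f j (u j) := ⟨_, rfl⟩
  have hzj : z j = u j := by rw [hz]; exact Function.update_self _ _ _
  have hzm : ∀ m, m ≠ j → z m ≠ u m := by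
    intro m hm
    rw [hz, Function.update_of_ne hm]
    exact hf m
  have htr := transfer hP hs hagree hne huv hzj hzm
  obtain ⟨p, hp⟩ : ∃ p, p = Function.update u j γ := ⟨_, rfl⟩
  have hpj : p j = γ := by rw [hp]; exact Function.update_self _ _ _
  have hpm : ∀ m, m ≠ j → p m = u m := by
    intro m hm
    rw [hp]; exact Function.update_of_ne hm _ _
  have hz'm : ∀ m, m ≠ j → Function.update z j (v j) m = z m :=
    fun m hm => Function.update_of_ne hm _ _
  have hz'j : Function.update z j (v j) j = v j := Function.update_self _ _ _
  rw [← hp]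
  constructor
  · intro hup
    have hmix := mix hP (x := u) (y := p) (z := z)
      (fun h => hγ1 (((congrFun h j).trans hpj).symm))
      (fun h => hzm j' hj' (congrFun h j').symm)
      (fun h => hzm j' hj' ((hpm j' hj').symm.trans (congrFun h j')).symm)
      (fun m hm => by
        rcases Classical.em (m = j) with rfl | hmj
        · exact absurd (hm.trans hpj).symm hγ1
        · exact hzm m hmj)
      (fun m hm => by
        rcases Classical.em (m = j) with rfl | hmj
        · exact Or.inl hzj
        · exact absurd (hpm m hmj).symm hm) hup
    rcases htr.2 with ⟨h1, _⟩ | ⟨h1, h2⟩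
    · exact hmix.1 h1
    · obtain ⟨m, hm⟩ := noAllDiff hP hs h3 h1
      rcases Classical.em (m = j) with rfl | hmj
      · exact hne (hm.trans hz'j)
      · exact hzm m hmj ((hm.trans (hz'm m hmj)).symm)
  · intro hvp
    have hmix := mix hP (x := v) (y := p) (z := Function.update z j (v j))
      (fun h => hγ2 (((congrFun h j).trans hpj).symm))
      (fun h => hzm j' hj' ((((congrFun h j').trans (hz'm j' hj')).symm).trans ((hagree j' hj').symm)))
      (fun h => hzm j' hj' ((((congrFun h j').trans (hz'm j' hj')).symm).trans (hpm j' hj')))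
      (fun m hm => by
        rcases Classical.em (m = j) with rfl | hmj
        · exact absurd (hm.trans hpj).symm hγ2
        · rw [hz'm m hmj]
          intro hc
          exact hzm m hmj (hc.trans (hagree m hmj).symm)
      )
      (fun m hm => by
        rcases Classical.em (m = j) with rfl | hmj
        · exact Or.inl hz'j
        · exact absurd ((hagree m hmj).symm.trans (hpm m hmj).symm) hm) hvp
    rcases htr.2 with ⟨_, h2⟩ | ⟨h1, _⟩
    · exact hmix.1 h2
    · obtain ⟨m, hm⟩ := noAllDiff hP hs h3 h1
      rcases Classical.em (m = j) with rfl | hmj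
      · exact hne (hm.trans hz'j)
      · exact hzm m hmj ((hm.trans (hz'm m hmj)).symm)

/-- All pairs on a `j`-line through `u` are unrelated, given one unrelated flip. -/
lemma lineAll (hP : ProperSetoid (Es n) P) (hs : 2 ≤ s) (h3 : ∀ i, 3 ≤ n i)
    {u v : ∀ j, Fin (n j)} {j : Fin s} (hagree : ∀ m, m ≠ j → u m = v m)
    (hne : u j ≠ v j) (huv : ¬P u v) :
    ∀ c d : Fin (n j), c ≠ d → ¬P (Function.update u j c) (Function.update u j d) := by
  classical
  intro c d hcd
  have hvu : Function.update u j (v j) = v := by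
    funext m
    by_cases hm : m = j
    · subst hm; exact Function.update_self _ _ _
    · rw [Function.update_of_ne hm]; exact hagree m hm
  by_cases hcα : c = u j
  · subst hcα
    rw [Function.update_eq_self]
    by_cases hdβ : d = v j
    · subst hdβ; rw [hvu]; exact huv
    · exact (line hP hs h3 hagree hne huv (Ne.symm hcd) hdβ).1
  · by_cases hcβ : c = v j
    · subst hcβ
      rw [hvu]
      by_cases hdα : d = u j
      · rw [hdα, Function.update_eq_self]
        exact fun h => huv (P.symm' h)
      · exact (line hP hs h3 hagree hne huv hdα (Ne.symm hcd)).2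
    · have hl := line hP hs h3 hagree hne huv hcα hcβ
      have hagree2 : ∀ m, m ≠ j → u m = Function.update u j c m :=
        fun m hm => (Function.update_of_ne hm _ _).symm
      have hne2 : u j ≠ Function.update u j c j := by
        rw [Function.update_self]; exact Ne.symm hcα
      by_cases hdα : d = u j
      · rw [hdα, Function.update_eq_self]
        exact fun h => hl.1 (P.symm' h)
      · have := (line hP hs h3 hagree2 hne2 hl.1 (γ := d) hdα
          (by rw [Function.update_self]; exact Ne.symm hcd)).2
        exact this

/-- `j` is a separating coordinate. -/
def SepC (P : Setoid (∀ j, Fin (n j))) (j : Fin s) : Prop :=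
  ∃ u v : ∀ j, Fin (n j), (∀ m, m ≠ j → u m = v m) ∧ u j ≠ v j ∧ ¬P u v

lemma sep_uniform (hP : ProperSetoid (Es n) P) (hs : 2 ≤ s) (h3 : ∀ i, 3 ≤ n i)
    {j : Fin s} (hsep : SepC P j) :
    ∀ (w : ∀ j, Fin (n j)) (c d : Fin (n j)), c ≠ d →
      ¬P (Function.update w j c) (Function.update w j d) := by
  classical
  obtain ⟨u, v, hagree, hne, huv⟩ := hsep
  intro w c d hcd
  have hex : ∀ m, ∃ t : Fin (n m), t ≠ u m ∧ t ≠ w m :=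
    fun m => third (by rw [Fintype.card_fin]; exact h3 m) (u m) (w m)
  choose f hf1 hf2 using hex
  obtain ⟨z, hz⟩ : ∃ z, z = Function.update f j (u j) := ⟨_, rfl⟩
  have hzj : z j = u j := by rw [hz]; exact Function.update_self _ _ _
  have hzm : ∀ m, m ≠ j → z m = f m := by
    intro m hm; rw [hz]; exact Function.update_of_ne hm _ _
  -- step 1 : transfer the witness pair to base z
  have ht1 := transfer hP hs hagree hne huv hzj
    (fun m hm => by rw [hzm m hm]; exact hf1 m)
  -- step 2 : move to the values c, d on the line through z
  have hagree2 : ∀ m, m ≠ j → z m = Function.update z j (v j) m :=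
    fun m hm => (Function.update_of_ne hm _ _).symm
  have hne2 : z j ≠ Function.update z j (v j) j := by
    rw [Function.update_self, hzj]; exact hne
  have h2 := lineAll hP hs h3 hagree2 hne2 ht1.1 c d hcd
  -- step 3 : transfer back to base w
  have hagree3 : ∀ m, m ≠ j → Function.update z j c m = Function.update z j d m :=
    fun m hm => by rw [Function.update_of_ne hm, Function.update_of_ne hm]
  have hne3 : Function.update z j c j ≠ Function.update z j d j := by
    rw [Function.update_self, Function.update_self]; exact hcd
  have ht3 := transfer hP hs hagree3 hne3 h2
    (z := Function.update w j c)
    (by rw [Function.update_self, Function.update_self])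
    (fun m hm => by
      rw [Function.update_of_ne hm, Function.update_of_ne hm, hzm m hm]
      exact fun hc => hf2 m hc.symm)
  have e : Function.update (Function.update w j c) j (Function.update z j d j)
      = Function.update w j d := by
    rw [Function.update_self, Function.update_idem]
  rw [e] at ht3
  exact ht3.1

/-- M: if `j` separates, related points agree at `j`. -/
lemma relAgree (hP : ProperSetoid (Es n) P) (hs : 2 ≤ s) (h3 : ∀ i, 3 ≤ n i)
    {j : Fin s} (hsep : SepC P j) :
    ∀ x y, P x y → x j = y j := by
  classical
  intro x y hR
  by_contra hne
  have hU := sep_uniform hP hs h3 hsep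
  by_cases hflip : ∀ m, m ≠ j → x m = y m
  · have hy : Function.update x j (y j) = y := by
      funext m
      by_cases hm : m = j
      · subst hm; exact Function.update_self _ _ _
      · rw [Function.update_of_ne hm]; exact hflip m hm
    have h := hU x (x j) (y j) hne
    rw [Function.update_eq_self, hy] at h
    exact h hR
  · push_neg at hflip
    obtain ⟨m0, hm0j, hm0⟩ := hflip
    obtain ⟨m1, hm1⟩ := noAllDiff hP hs h3 hR
    have hm1j : m1 ≠ j := fun h => hne (h ▸ hm1)
    have hex : ∀ m, ∃ t : Fin (n m), t ≠ x m := by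
      intro m
      obtain ⟨r, hr, _⟩ := third (by rw [Fintype.card_fin]; exact h3 m) (x m) (x m)
      exact ⟨r, hr⟩
    choose f hf using hex
    obtain ⟨z, hzdef⟩ : ∃ z : (∀ j, Fin (n j)),
        z = Function.update (fun m => if x m = y m then f m else y m) j (x j) := ⟨_, rfl⟩
    have hzj : z j = x j := by rw [hzdef]; exact Function.update_self _ _ _
    have hzeq : ∀ m, m ≠ j → x m = y m → z m = f m := by
      intro m hm hxm; rw [hzdef, Function.update_of_ne hm]; simp [hxm]
    have hzne : ∀ m, m ≠ j → x m ≠ y m → z m = y m := by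
      intro m hm hxm; rw [hzdef, Function.update_of_ne hm]; simp [hxm]
    obtain ⟨z', hz'def⟩ : ∃ z', z' = Function.update z j (y j) := ⟨_, rfl⟩
    have hz'j : z' j = y j := by rw [hz'def]; exact Function.update_self _ _ _
    have hz'm : ∀ m, m ≠ j → z' m = z m := by
      intro m hm; rw [hz'def]; exact Function.update_of_ne hm _ _
    have hxz : x ≠ z := by
      intro h
      exact hm0 ((congrFun h m0).trans (hzne m0 hm0j hm0))
    have hyz : y ≠ z := fun h => hne (((congrFun h j).trans hzj).symm)
    have hxz' : x ≠ z' := fun h => hne ((congrFun h j).trans hz'j)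
    have hyz' : y ≠ z' := by
      intro h
      exact hf m1 ((((hzeq m1 hm1j hm1).symm.trans (hz'm m1 hm1j).symm).trans
        (congrFun h m1).symm).trans hm1.symm)
    have hzz' : z ≠ z' := fun h => hne (hzj.symm.trans ((congrFun h j).trans hz'j))
    have hmix1 := mix hP (fun h => hne (congrFun h j)) hxz hyz
      (fun m hm => by
        rcases Classical.em (m = j) with rfl | hmj
        · exact absurd hm hne
        · rw [hzeq m hmj hm]; exact hf m)
      (fun m hm => by
        rcases Classical.em (m = j) with rfl | hmj
        · exact Or.inl hzj
        · exact Or.inr (hzne m hmj hm)) hR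
    have hmix2 := mix hP (fun h => hne (congrFun h j)) hxz' hyz'
      (fun m hm => by
        rcases Classical.em (m = j) with rfl | hmj
        · exact absurd hm hne
        · rw [hz'm m hmj, hzeq m hmj hm]; exact hf m)
      (fun m hm => by
        rcases Classical.em (m = j) with rfl | hmj
        · exact Or.inr hz'j
        · exact Or.inr ((hz'm m hmj).trans (hzne m hmj hm))) hR
    have hzz'R : ¬P z z' := by
      have h := hU z (x j) (y j) hne
      have e : Function.update z j (x j) = z := by
        rw [← hzj]; exact Function.update_eq_self j z
      rw [e] at h
      rw [hz'def]
      exact h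
    have hr := rule hP hxz hxz' hzz'
      (fun m => by
        rcases Classical.em (m = j) with rfl | hmj
        · exact Or.inl hzj.symm
        · exact Or.inr (Or.inr (hz'm m hmj).symm))
      (fun m => by
        rcases Classical.em (m = j) with rfl | hmj
        · rintro ⟨_, h2⟩; exact hne (h2.trans hz'j)
        · rintro ⟨h1, _⟩
          rcases Classical.em (x m = y m) with hxm | hxm
          · exact hf m (h1.trans (hzeq m hmj hxm)).symm
          · exact hxm (h1.trans (hzne m hmj hxm)))
    rcases hr with ⟨h, _, _⟩ | ⟨_, h, _⟩ | ⟨_, _, h⟩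
    · exact hmix1.1 h
    · exact hmix2.1 h
    · exact hzz'R h

/-- Existence of a separating coordinate. -/
lemma exists_sep (hP : ProperSetoid (Es n) P) (hs : 2 ≤ s) (h3 : ∀ i, 3 ≤ n i) :
    ∃ j, SepC P j := by
  classical
  by_contra hcon
  push_neg at hcon
  have hflip : ∀ (j : Fin s) (u v : ∀ m, Fin (n m)), (∀ m, m ≠ j → u m = v m) → P u v := by
    intro j u v hagree
    by_contra hPuv
    by_cases huj : u j = v j
    · have : u = v := by
        funext m
        by_cases hm : m = j
        · subst hm; exact huj
        · exact hagree m hm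
      exact hPuv (this ▸ P.refl' u)
    · exact hcon j ⟨u, v, hagree, huj, hPuv⟩
  have hallrel : ∀ x y : (∀ m, Fin (n m)), P x y := by
    have key : ∀ (D : Finset (Fin s)) (x y : ∀ m, Fin (n m)),
        (∀ m, m ∉ D → x m = y m) → P x y := by
      intro D
      induction D using Finset.induction_on with
      | empty =>
          intro x y hxy
          have : x = y := funext fun m => hxy m (by simp)
          exact this ▸ P.refl' x
      | @insert a T ha IH =>
          intro x y hxy
          have h1 : P x (Function.update y a (x a)) := by
            apply IH
            intro m hm
            by_cases hma : m = a
            · rw [hma, Function.update_self]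
            · rw [Function.update_of_ne hma]
              exact hxy m (fun hc => by
                rcases Finset.mem_insert.mp hc with h | h
                · exact hma h
                · exact hm h)
          have h2 : P (Function.update y a (x a)) y :=
            hflip a _ _ (fun m hm => Function.update_of_ne hm _ _)
          exact P.trans' h1 h2
    intro x y
    exact key Finset.univ x y (fun m hm => absurd (Finset.mem_univ m) hm)
  have hex : ∀ m : Fin s, ∃ t : Fin (n m), t ≠ (fun j => (⟨0, by have := h3 j; omega⟩ : Fin (n j))) m := by
    intro m
    obtain ⟨r, hr, _⟩ := third (by rw [Fintype.card_fin]; exact h3 m)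
      ((fun j => (⟨0, by have := h3 j; omega⟩ : Fin (n j))) m)
      ((fun j => (⟨0, by have := h3 j; omega⟩ : Fin (n j))) m)
    exact ⟨r, hr⟩
  obtain ⟨x0, hx0⟩ : ∃ x0 : (∀ m, Fin (n m)), x0 = fun j => ⟨0, by have := h3 j; omega⟩ := ⟨_, rfl⟩
  have hex' : ∀ m : Fin s, ∃ t : Fin (n m), t ≠ x0 m := by rw [hx0]; exact hex
  choose f hf using hex'
  have h10 : (⟨1, by omega⟩ : Fin s) ≠ ⟨0, by omega⟩ := by simp [Fin.ext_iff]
  obtain ⟨z0, hz0⟩ : ∃ z0, z0 = Function.update x0 (⟨0, by omega⟩ : Fin s)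
      (f ⟨0, by omega⟩) := ⟨_, rfl⟩
  have hz00 : z0 ⟨0, by omega⟩ = f ⟨0, by omega⟩ := by
    rw [hz0]; exact Function.update_self _ _ _
  have hz01 : z0 ⟨1, by omega⟩ = x0 ⟨1, by omega⟩ := by
    rw [hz0]; exact Function.update_of_ne h10 _ _
  have hz0m : ∀ m, m ≠ (⟨0, by omega⟩ : Fin s) → z0 m = x0 m := by
    intro m hm; rw [hz0]; exact Function.update_of_ne hm _ _
  have hr := rule hP (x := x0) (y := f) (z := z0)
    (fun h => hf ⟨0, by omega⟩ (congrFun h _).symm)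
    (fun h => hf ⟨0, by omega⟩ (((congrFun h _).trans hz00).symm))
    (fun h => hf ⟨1, by omega⟩ ((congrFun h _).trans hz01))
    (fun m => by
      by_cases hm : m = (⟨0, by omega⟩ : Fin s)
      · subst hm; exact Or.inr (Or.inr hz00.symm)
      · exact Or.inr (Or.inl (hz0m m hm).symm))
    (fun m => by rintro ⟨h1, _⟩; exact hf m h1.symm)
  rcases hr with ⟨_, h, _⟩ | ⟨h, _, _⟩ | ⟨h, _, _⟩ <;> exact h (hallrel _ _)

/-- Uniqueness of the separating coordinate. -/
lemma sep_unique (hP : ProperSetoid (Es n) P) (hs : 2 ≤ s) (h3 : ∀ i, 3 ≤ n i)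
    {j k : Fin s} (hj : SepC P j) (hk : SepC P k) : j = k := by
  classical
  by_contra hjk
  have Mj := relAgree hP hs h3 hj
  have Mk := relAgree hP hs h3 hk
  obtain ⟨x0, hx0⟩ : ∃ x0 : (∀ m, Fin (n m)), x0 = fun j => ⟨0, by have := h3 j; omega⟩ :=
    ⟨_, rfl⟩
  have hex : ∀ m : Fin s, ∃ t : Fin (n m), t ≠ x0 m := by
    intro m
    obtain ⟨r, hr, _⟩ := third (by rw [Fintype.card_fin]; exact h3 m) (x0 m) (x0 m)
    exact ⟨r, hr⟩
  choose f hf using hex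
  obtain ⟨y, hy⟩ : ∃ y, y = Function.update f j (x0 j) := ⟨_, rfl⟩
  obtain ⟨z, hz⟩ : ∃ z, z = Function.update f k (x0 k) := ⟨_, rfl⟩
  have hyj : y j = x0 j := by rw [hy]; exact Function.update_self _ _ _
  have hym : ∀ m, m ≠ j → y m = f m := by
    intro m hm; rw [hy]; exact Function.update_of_ne hm _ _
  have hzk : z k = x0 k := by rw [hz]; exact Function.update_self _ _ _
  have hzm : ∀ m, m ≠ k → z m = f m := by
    intro m hm; rw [hz]; exact Function.update_of_ne hm _ _
  have hkj : k ≠ j := Ne.symm hjk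
  have hxyR : ¬P x0 y := fun h => hf k ((Mk _ _ h).trans (hym k hkj)).symm
  have hxzR : ¬P x0 z := fun h => hf j ((Mj _ _ h).trans (hzm j hjk)).symm
  have hyzR : ¬P y z := fun h => hf j ((hyj.symm.trans (Mj _ _ h)).trans (hzm j hjk)).symm
  have hr := rule hP (x := x0) (y := y) (z := z)
    (fun h => hf k (((congrFun h k).trans (hym k hkj)).symm))
    (fun h => hf j (((congrFun h j).trans (hzm j hjk)).symm))
    (fun h => hf j ((hyj.symm.trans ((congrFun h j).trans (hzm j hjk))).symm))
    (fun m => by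
      by_cases hmj : m = j
      · rw [hmj]; exact Or.inl hyj.symm
      · by_cases hmk : m = k
        · rw [hmk]; exact Or.inr (Or.inl hzk.symm)
        · exact Or.inr (Or.inr ((hym m hmj).trans (hzm m hmk).symm)))
    (fun m => by
      by_cases hmj : m = j
      · rw [hmj]; rintro ⟨_, h2⟩; exact hf j (h2.trans (hzm j hjk)).symm
      · by_cases hmk : m = k
        · rw [hmk]; rintro ⟨h1, _⟩; exact hf k (h1.trans (hym k hkj)).symm
        · rintro ⟨h1, _⟩; exact hf m (h1.trans (hym m hmj)).symm)
  rcases hr with ⟨h, _, _⟩ | ⟨_, h, _⟩ | ⟨_, _, h⟩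
  · exact hxyR h
  · exact hxzR h
  · exact hyzR h

/-- The main classification: a proper setoid is a coordinate kernel. -/
lemma mainThm (hP : ProperSetoid (Es n) P) (hs : 2 ≤ s) (h3 : ∀ i, 3 ≤ n i) :
    ∃ i, P = Setoid.ker (fun x : ∀ j, Fin (n j) => x i) := by
  classical
  obtain ⟨i, hi⟩ := exists_sep hP hs h3
  refine ⟨i, Setoid.ext fun x y => ?_⟩
  rw [Setoid.ker_def]
  constructor
  · exact fun h => relAgree hP hs h3 hi x y h
  · intro h
    have hflip : ∀ (k : Fin s), k ≠ i → ∀ u v : (∀ m, Fin (n m)),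
        (∀ m, m ≠ k → u m = v m) → P u v := by
      intro k hki u v hagree
      by_contra hPuv
      by_cases huk : u k = v k
      · have : u = v := by
          funext m
          by_cases hm : m = k
          · subst hm; exact huk
          · exact hagree m hm
        exact hPuv (this ▸ P.refl' u)
      · exact hki (sep_unique hP hs h3 ⟨u, v, hagree, huk, hPuv⟩ hi)
    have key : ∀ (D : Finset (Fin s)), i ∉ D → ∀ x y : (∀ m, Fin (n m)),
        (∀ m, m ∉ D → x m = y m) → P x y := by
      intro D
      induction D using Finset.induction_on with
      | empty =>
          intro _ x y hxy
          have : x = y := funext fun m => hxy m (by simp)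
          exact this ▸ P.refl' x
      | @insert a T ha IH =>
          intro hiD x y hxy
          have hai : a ≠ i := fun h => hiD (by simp [h])
          have h1 : P x (Function.update y a (x a)) := by
            apply IH (fun h => hiD (by simp [h]))
            intro m hm
            by_cases hma : m = a
            · rw [hma, Function.update_self]
            · rw [Function.update_of_ne hma]
              exact hxy m (fun hc => by
                rcases Finset.mem_insert.mp hc with h | h
                · exact hma h
                · exact hm h)
          have h2 : P (Function.update y a (x a)) y :=
            hflip a hai _ _ (fun m hm => Function.update_of_ne hm _ _)
          exact P.trans' h1 h2
    exact key (Finset.univ.erase i) (by simp) x y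
      (fun m hm => by
        have : m = i := by
          by_contra hmi
          exact hm (Finset.mem_erase.mpr ⟨hmi, Finset.mem_univ m⟩)
        subst this
        exact h)

/-- Conversely, coordinate kernels are proper. -/
lemma proper_ker (i : Fin s) :
    ProperSetoid (Es n) (Setoid.ker (fun x : ∀ j, Fin (n j) => x i)) := by
  rintro b ⟨hcard, himg⟩
  constructor
  · have hlt : (b.image fun x => x i).card < b.card := by rw [hcard, himg i]; omega
    obtain ⟨x, hx, y, hy, hxy, hfeq⟩ :=
      Finset.exists_ne_map_eq_of_card_lt_of_maps_to hlt
        (fun a ha => Finset.mem_image_of_mem (fun x => x i) ha)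
    exact ⟨x, hx, y, hy, hxy, Setoid.ker_def.mpr hfeq⟩
  · have h1 : 1 < (b.image fun x => x i).card := by rw [himg i]; omega
    obtain ⟨a, ha, a', ha', haa⟩ := Finset.one_lt_card.mp h1
    obtain ⟨x, hx, hxa⟩ := Finset.mem_image.mp ha
    obtain ⟨y, hy, hya⟩ := Finset.mem_image.mp ha'
    refine ⟨x, hx, y, hy, fun h => haa ?_⟩
    rw [← hxa, ← hya]
    exact Setoid.ker_def.mp h
end Aux

/-- for `n₁ > n₂ > ⋯ > nₛ ≥ 3` (`s ≥ 2`), the feasible partitions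
of `H_{n₁,…,nₛ}` are exactly the `s` coordinate partitions; they are pairwise
distinct and the `i`-th has `nᵢ` classes, so `Φ = {n₁,…,nₛ}` and each
`r_{nᵢ} = 1`. -/
theorem stmt4 (s : ℕ) (hs : 2 ≤ s) (n : Fin s → ℕ)
    (hstrict : StrictAnti n) (h3 : ∀ i, 3 ≤ n i) :
    ({P : Setoid (∀ j, Fin (n j)) | ProperSetoid (Es n) P}
      = Set.range fun i : Fin s => Setoid.ker fun x : ∀ j, Fin (n j) => x i) ∧
    Function.Injective
      (fun i : Fin s => Setoid.ker fun x : ∀ j, Fin (n j) => x i) ∧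
    ∀ i : Fin s,
      Nat.card (Quotient (Setoid.ker fun x : ∀ j, Fin (n j) => x i)) = n i := by
  classical
  refine ⟨?_, ?_, ?_⟩
  · ext Q
    simp only [Set.mem_setOf_eq, Set.mem_range]
    constructor
    · intro hQ
      obtain ⟨i, hi⟩ := mainThm hQ hs h3
      exact ⟨i, hi.symm⟩
    · rintro ⟨i, rfl⟩
      exact proper_ker i
  · intro i i' h
    by_contra hne
    have h' : Setoid.ker (fun x : ∀ j, Fin (n j) => x i)
        = Setoid.ker (fun x : ∀ j, Fin (n j) => x i') := h
    obtain ⟨x0, hx0⟩ : ∃ x0 : (∀ m, Fin (n m)),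
        x0 = fun j => ⟨0, by have := h3 j; omega⟩ := ⟨_, rfl⟩
    obtain ⟨t, ht⟩ : ∃ t : Fin (n i'), t = ⟨1, by have := h3 i'; omega⟩ := ⟨_, rfl⟩
    have hx : (Setoid.ker fun x : ∀ j, Fin (n j) => x i) x0 (Function.update x0 i' t) :=
      Setoid.ker_def.mpr (Function.update_of_ne hne t x0).symm
    rw [h'] at hx
    have hval := Setoid.ker_def.mp hx
    rw [Function.update_self] at hval
    rw [hx0, ht] at hval
    simp [Fin.ext_iff] at hval
  · intro i
    have hsurj : Function.Surjective (fun x : ∀ j, Fin (n j) => x i) := by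
      intro c
      exact ⟨Function.update (fun j => ⟨0, by have := h3 j; omega⟩) i c,
        Function.update_self _ _ _⟩
    have hcongr := Nat.card_congr (Setoid.quotientKerEquivOfSurjective _ hsurj)
    rw [hcongr]
    simp
end

section
/- Let $n_1 \geq n_2 > 3$ and let $\mathcal{H}^*_{n_1,n_2}$ be as constructed (the derived sub-hypergraph of $\mathcal{H}_{n_1,n_2}$ on the vertex set $X^* = \{(i,k): i,k \in [3]\} \cup \{(1,k),(k,1),(k,k): 4 \leq k \leq n_2\} \cup \{(n_2+j,1),(n_2+j,n_2): j \in [n_1-n_2]\}$). Suppose $c$ is a proper coloring of $\mathcal{H}^*_{n_1,n_2}$ such that for each $i \in \{1,2,3\}$, the vertices $(i,1), (i,2), (i,3)$ all receive color class $C_i$, where $C_1, C_2, C_3$ are pairwise distinct. Then $c$ is the restriction to $X^*$ of the partition of $[n_1] \times [n_2]$ by first coordinate. -/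
/-- The vertex set `X*` of `H*_{n₁,n₂}` (1-based values are `val + 1`). -/
def Xstar2 (n1 n2 : ℕ) : Set (Fin n1 × Fin n2) :=
  {x | (x.1.val + 1 ≤ 3 ∧ x.2.val + 1 ≤ 3) ∨
       (x.1.val + 1 = 1 ∧ 4 ≤ x.2.val + 1) ∨
       (x.2.val + 1 = 1 ∧ 4 ≤ x.1.val + 1 ∧ x.1.val + 1 ≤ n2) ∨
       (x.1.val = x.2.val ∧ 4 ≤ x.1.val + 1 ∧ x.1.val + 1 ≤ n2) ∨
       (n2 + 1 ≤ x.1.val + 1 ∧ (x.2.val + 1 = 1 ∨ x.2.val + 1 = n2))}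

/-- Edges of the derived sub-hypergraph `H*_{n₁,n₂} = H_{n₁,n₂}[X*]`. -/
def E2sub (n1 n2 : ℕ) : Set (Finset {x : Fin n1 × Fin n2 // x ∈ Xstar2 n1 n2}) :=
  {b | b.map (Function.Embedding.subtype _) ∈ E2 n1 n2}

lemma edge_mem {n1 n2 : ℕ} {a b : Fin n1} {p q : Fin n2} (hab : a ≠ b) (hpq : p ≠ q)
    (h1 : (a,p) ∈ Xstar2 n1 n2) (h2 : (a,q) ∈ Xstar2 n1 n2) (h3 : (b,p) ∈ Xstar2 n1 n2) :
    ({⟨(a,p),h1⟩, ⟨(a,q),h2⟩, ⟨(b,p),h3⟩} :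
      Finset {x : Fin n1 × Fin n2 // x ∈ Xstar2 n1 n2}) ∈ E2sub n1 n2 := by
  have e12 : ((a,p) : Fin n1 × Fin n2) ≠ (a,q) := by simp [Prod.ext_iff, hpq]
  have e13 : ((a,p) : Fin n1 × Fin n2) ≠ (b,p) := by simp [Prod.ext_iff, hab]
  have e23 : ((a,q) : Fin n1 × Fin n2) ≠ (b,p) := by simp [Prod.ext_iff]; intro h; exact absurd h hab
  simp only [E2sub, E2, Set.mem_setOf_eq, Finset.map_insert, Finset.map_singleton,
    Function.Embedding.coe_subtype]
  refine ⟨?_, ?_, ?_⟩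
  · rw [Finset.card_insert_of_notMem (by simp [e12, e13]),
      Finset.card_insert_of_notMem (by simp [e23]), Finset.card_singleton]
  · simp only [Finset.image_insert, Finset.image_singleton]
    rw [Finset.insert_idem]
    exact Finset.card_pair hab
  · simp only [Finset.image_insert, Finset.image_singleton]
    rw [show ({p, q, p} : Finset (Fin n2)) = {p, q} by ext r; simp; tauto]
    exact Finset.card_pair hpq

lemma edge_colors {n1 n2 : ℕ} {α : Type*}
    (c : {x : Fin n1 × Fin n2 // x ∈ Xstar2 n1 n2} → α)
    (hc : ProperColoring (E2sub n1 n2) c)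
    {a b : Fin n1} {p q : Fin n2} (hab : a ≠ b) (hpq : p ≠ q)
    (h1 : (a,p) ∈ Xstar2 n1 n2) (h2 : (a,q) ∈ Xstar2 n1 n2) (h3 : (b,p) ∈ Xstar2 n1 n2) :
    (c ⟨(a,p),h1⟩ = c ⟨(a,q),h2⟩ ∨ c ⟨(a,p),h1⟩ = c ⟨(b,p),h3⟩ ∨
      c ⟨(a,q),h2⟩ = c ⟨(b,p),h3⟩) ∧
    ¬(c ⟨(a,p),h1⟩ = c ⟨(a,q),h2⟩ ∧ c ⟨(a,p),h1⟩ = c ⟨(b,p),h3⟩) := by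
  obtain ⟨⟨x, hx, y, hy, hxy, hcxy⟩, ⟨x', hx', y', hy', hne'⟩⟩ :=
    hc _ (edge_mem hab hpq h1 h2 h3)
  simp only [Finset.mem_insert, Finset.mem_singleton] at hx hy hx' hy'
  constructor
  · rcases hx with h | h | h <;> rcases hy with h' | h' | h' <;> subst h <;> subst h' <;>
      simp_all
  · rintro ⟨hA, hB⟩
    rcases hx' with h | h | h <;> rcases hy' with h' | h' | h' <;> subst h <;> subst h' <;>
      simp_all

section Main

variable {n1 n2 : ℕ} {α : Type*}

/-- (i,0) is always in X*. -/
lemma memX0 (h12 : n2 ≤ n1) (h2 : 3 < n2) (i : Fin n1) (z : Fin n2) (hz : z.val = 0) :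
    (i, z) ∈ Xstar2 n1 n2 := by
  have hi := i.isLt
  simp only [Xstar2, Set.mem_setOf_eq]
  omega

/-- (0,j) is always in X*. -/
lemma memR0 (i : Fin n1) (hi : i.val = 0) (j : Fin n2) : (i, j) ∈ Xstar2 n1 n2 := by
  simp only [Xstar2, Set.mem_setOf_eq]
  omega

variable (c : {x : Fin n1 × Fin n2 // x ∈ Xstar2 n1 n2} → α)
  (hc : ProperColoring (E2sub n1 n2) c)
  (hcorner : ∀ x y : {x : Fin n1 × Fin n2 // x ∈ Xstar2 n1 n2},
      x.val.1.val < 3 → y.val.1.val < 3 → x.val.2.val < 3 → y.val.2.val < 3 →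
      (c x = c y ↔ x.val.1 = y.val.1))

include hc hcorner
/-- L2: the first row is monochromatic. -/
lemma row0 (h12 : n2 ≤ n1) (h2 : 3 < n2) (i : Fin n1) (hi : i.val = 0)
    (j : Fin n2) (hj : 3 ≤ j.val) (z : Fin n2) (hz : z.val = 0)
    (hX : (i, j) ∈ Xstar2 n1 n2) (hX0 : (i, z) ∈ Xstar2 n1 n2) :
    c ⟨(i, j), hX⟩ = c ⟨(i, z), hX0⟩ := by
  have h1 : 3 < n1 := lt_of_lt_of_le h2 h12
  obtain ⟨r1, hr1⟩ : ∃ r : Fin n1, r.val = 1 := ⟨⟨1, by omega⟩, rfl⟩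
  obtain ⟨r2, hr2⟩ : ∃ r : Fin n1, r.val = 2 := ⟨⟨2, by omega⟩, rfl⟩
  obtain ⟨o, ho⟩ : ∃ o : Fin n2, o.val = 1 := ⟨⟨1, by omega⟩, rfl⟩
  have hXr1 : (r1, z) ∈ Xstar2 n1 n2 := by simp only [Xstar2, Set.mem_setOf_eq]; omega
  have hXr2 : (r2, o) ∈ Xstar2 n1 n2 := by simp only [Xstar2, Set.mem_setOf_eq]; omega
  have hXo : (i, o) ∈ Xstar2 n1 n2 := by simp only [Xstar2, Set.mem_setOf_eq]; omega
  -- corner facts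
  have c01 : c ⟨(i, o), hXo⟩ = c ⟨(i, z), hX0⟩ := by
    rw [hcorner ⟨(i, o), hXo⟩ ⟨(i, z), hX0⟩ (show i.val < 3 by omega) (show i.val < 3 by omega)
      (show o.val < 3 by omega) (show z.val < 3 by omega)]
  have c0ne1 : c ⟨(i, z), hX0⟩ ≠ c ⟨(r1, z), hXr1⟩ := by
    rw [Ne, hcorner ⟨(i, z), hX0⟩ ⟨(r1, z), hXr1⟩ (show i.val < 3 by omega)
      (show r1.val < 3 by omega) (show z.val < 3 by omega) (show z.val < 3 by omega)]
    intro h; have h' : i.val = r1.val := congrArg Fin.val (show i = r1 from h); omega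
  have c0ne2 : c ⟨(i, o), hXo⟩ ≠ c ⟨(r2, o), hXr2⟩ := by
    rw [Ne, hcorner ⟨(i, o), hXo⟩ ⟨(r2, o), hXr2⟩ (show i.val < 3 by omega)
      (show r2.val < 3 by omega) (show o.val < 3 by omega) (show o.val < 3 by omega)]
    intro h; have h' : i.val = r2.val := congrArg Fin.val (show i = r2 from h); omega
  have c1ne2 : c ⟨(r1, z), hXr1⟩ ≠ c ⟨(r2, o), hXr2⟩ := by
    rw [Ne, hcorner ⟨(r1, z), hXr1⟩ ⟨(r2, o), hXr2⟩ (show r1.val < 3 by omega)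
      (show r2.val < 3 by omega) (show z.val < 3 by omega) (show o.val < 3 by omega)]
    intro h; have h' : r1.val = r2.val := congrArg Fin.val (show r1 = r2 from h); omega
  have hne1 : i ≠ r1 := fun h => by
    have h' : i.val = r1.val := congrArg Fin.val h; omega
  have hnzj : z ≠ j := fun h => by
    have h' : z.val = j.val := congrArg Fin.val h; omega
  have E1 := (edge_colors c hc hne1 hnzj hX0 hX hXr1).1
  have hne2 : i ≠ r2 := fun h => by
    have h' : i.val = r2.val := congrArg Fin.val h; omega
  have hnoj : o ≠ j := fun h => by
    have h' : o.val = j.val := congrArg Fin.val h; omega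
  have E2' := (edge_colors c hc hne2 hnoj hXo hX hXr2).1
  rcases E1 with h | h | h
  · exact h.symm
  · exact absurd h c0ne1
  · rcases E2' with h' | h' | h'
    · rw [← h', c01]
    · exact absurd h' c0ne2
    · exact absurd (h.symm.trans h') c1ne2

/-- L3: a vertex (i,0) with i ≥ 3 has a color different from the corner rows. -/
lemma ne_corner (h12 : n2 ≤ n1) (h2 : 3 < n2) (i : Fin n1) (hi : 3 ≤ i.val)
    (t : Fin n1) (ht : t.val < 3) (z : Fin n2) (hz : z.val = 0)
    (hXi : (i, z) ∈ Xstar2 n1 n2) (hXt : (t, z) ∈ Xstar2 n1 n2) :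
    c ⟨(i, z), hXi⟩ ≠ c ⟨(t, z), hXt⟩ := by
  obtain ⟨o, ho⟩ : ∃ o : Fin n2, o.val = 1 := ⟨⟨1, by omega⟩, rfl⟩
  have hXto : (t, o) ∈ Xstar2 n1 n2 := by simp only [Xstar2, Set.mem_setOf_eq]; omega
  have hti : t ≠ i := fun h => by have h' : t.val = i.val := congrArg Fin.val h; omega
  have hzo : z ≠ o := fun h => by have h' : z.val = o.val := congrArg Fin.val h; omega
  have E := (edge_colors c hc hti hzo hXt hXto hXi).2
  have ceq : c ⟨(t, z), hXt⟩ = c ⟨(t, o), hXto⟩ := by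
    rw [hcorner ⟨(t, z), hXt⟩ ⟨(t, o), hXto⟩ (show t.val < 3 by omega)
      (show t.val < 3 by omega) (show z.val < 3 by omega) (show o.val < 3 by omega)]
  intro h
  exact E ⟨ceq, h.symm⟩

/-- L4: a vertex (i,s), i ≥ 3, s ≥ 3, has a color different from row 0. -/
lemma ne_row0 (h12 : n2 ≤ n1) (h2 : 3 < n2) (i : Fin n1) (hi : 3 ≤ i.val)
    (s : Fin n2) (hs : 3 ≤ s.val) (z : Fin n2) (hz : z.val = 0)
    (r0 : Fin n1) (hr0 : r0.val = 0)
    (hXis : (i, s) ∈ Xstar2 n1 n2) (hX00 : (r0, z) ∈ Xstar2 n1 n2) :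
    c ⟨(i, s), hXis⟩ ≠ c ⟨(r0, z), hX00⟩ := by
  have hX0s : (r0, s) ∈ Xstar2 n1 n2 := memR0 r0 hr0 s
  have h0i : r0 ≠ i := fun h => by have h' : r0.val = i.val := congrArg Fin.val h; omega
  have hsz : s ≠ z := fun h => by have h' : s.val = z.val := congrArg Fin.val h; omega
  have E := (edge_colors c hc h0i hsz hX0s hX00 hXis).2
  have ceq : c ⟨(r0, s), hX0s⟩ = c ⟨(r0, z), hX00⟩ :=
    row0 c hc hcorner h12 h2 r0 hr0 s hs z hz hX0s hX00
  intro h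
  exact E ⟨ceq, ceq.trans h.symm⟩

/-- L5: rows i ≥ 3 are monochromatic. -/
lemma rowi (h12 : n2 ≤ n1) (h2 : 3 < n2) (i : Fin n1) (hi : 3 ≤ i.val)
    (s : Fin n2) (hs : 3 ≤ s.val) (z : Fin n2) (hz : z.val = 0)
    (hXis : (i, s) ∈ Xstar2 n1 n2) (hXi0 : (i, z) ∈ Xstar2 n1 n2) :
    c ⟨(i, s), hXis⟩ = c ⟨(i, z), hXi0⟩ := by
  obtain ⟨r0, hr0⟩ : ∃ r : Fin n1, r.val = 0 := ⟨⟨0, by omega⟩, rfl⟩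
  have hX00 : (r0, z) ∈ Xstar2 n1 n2 := memR0 r0 hr0 z
  have hi0 : i ≠ r0 := fun h => by have h' : i.val = r0.val := congrArg Fin.val h; omega
  have hzs : z ≠ s := fun h => by have h' : z.val = s.val := congrArg Fin.val h; omega
  have E := (edge_colors c hc hi0 hzs hXi0 hXis hX00).1
  rcases E with h | h | h
  · exact h.symm
  · exact absurd h (ne_corner c hc hcorner h12 h2 i hi r0 (by omega) z hz hXi0 hX00)
  · exact absurd h (ne_row0 c hc hcorner h12 h2 i hi s hs z hz r0 hr0 hXis hX00)

/-- L6: distinct rows i, i' ≥ 3 get distinct colors. -/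
lemma rows_ne (h12 : n2 ≤ n1) (h2 : 3 < n2) (i i' : Fin n1)
    (hi : 3 ≤ i.val) (hi' : 3 ≤ i'.val) (hne : i ≠ i') (z : Fin n2) (hz : z.val = 0)
    (hXi0 : (i, z) ∈ Xstar2 n1 n2) (hXi'0 : (i', z) ∈ Xstar2 n1 n2) :
    c ⟨(i, z), hXi0⟩ ≠ c ⟨(i', z), hXi'0⟩ := by
  obtain ⟨s, hs, hXis⟩ : ∃ s : Fin n2, 3 ≤ s.val ∧ (i, s) ∈ Xstar2 n1 n2 := by
    by_cases h : i.val < n2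
    · exact ⟨⟨i.val, h⟩, by simpa using hi, by simp only [Xstar2, Set.mem_setOf_eq]; simp; omega⟩
    · exact ⟨⟨n2 - 1, by omega⟩, by simp; omega, by simp only [Xstar2, Set.mem_setOf_eq]; simp; omega⟩
  have hii' : i ≠ i' := hne
  have hzs : z ≠ s := fun h => by have h' : z.val = s.val := congrArg Fin.val h; omega
  have E := (edge_colors c hc hii' hzs hXi0 hXis hXi'0).2
  have ceq : c ⟨(i, z), hXi0⟩ = c ⟨(i, s), hXis⟩ :=
    (rowi c hc hcorner h12 h2 i hi s hs z hz hXis hXi0).symm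
  intro h
  exact E ⟨ceq, h⟩

/-- A: every vertex has the color of its row representative (i,0). -/
lemma colA (h12 : n2 ≤ n1) (h2 : 3 < n2) (i : Fin n1) (j : Fin n2)
    (h : (i, j) ∈ Xstar2 n1 n2) (z : Fin n2) (hz : z.val = 0)
    (hX0 : (i, z) ∈ Xstar2 n1 n2) :
    c ⟨(i, j), h⟩ = c ⟨(i, z), hX0⟩ := by
  by_cases hj0 : j.val = 0
  · have : j = z := Fin.ext (by omega)
    subst this; rfl
  · have hmem := h
    simp [Xstar2, Set.mem_setOf_eq] at hmem
    by_cases hj3 : j.val < 3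
    · have hi3 : i.val < 3 := by rcases hmem with h' | h' | h' | h' | h' <;> omega
      rw [hcorner ⟨(i, j), h⟩ ⟨(i, z), hX0⟩ (show i.val < 3 by omega)
        (show i.val < 3 by omega) (show j.val < 3 by omega) (show z.val < 3 by omega)]
    · by_cases hi3 : i.val < 3
      · have hi0 : i.val = 0 := by rcases hmem with h' | h' | h' | h' | h' <;> omega
        exact row0 c hc hcorner h12 h2 i hi0 j (by omega) z hz h hX0
      · exact rowi c hc hcorner h12 h2 i (by omega) j (by omega) z hz h hX0

/-- B: distinct rows get distinct colors (on the representatives). -/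
lemma colB (h12 : n2 ≤ n1) (h2 : 3 < n2) (i i' : Fin n1) (hne : i ≠ i')
    (z : Fin n2) (hz : z.val = 0)
    (hXi0 : (i, z) ∈ Xstar2 n1 n2) (hXi'0 : (i', z) ∈ Xstar2 n1 n2) :
    c ⟨(i, z), hXi0⟩ ≠ c ⟨(i', z), hXi'0⟩ := by
  by_cases hi3 : i.val < 3
  · by_cases hi'3 : i'.val < 3
    · rw [Ne, hcorner ⟨(i, z), hXi0⟩ ⟨(i', z), hXi'0⟩ (show i.val < 3 by omega)
        (show i'.val < 3 by omega) (show z.val < 3 by omega) (show z.val < 3 by omega)]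
      exact hne
    · exact (ne_corner c hc hcorner h12 h2 i' (by omega) i hi3 z hz hXi'0 hXi0).symm
  · by_cases hi'3 : i'.val < 3
    · exact ne_corner c hc hcorner h12 h2 i (by omega) i' hi'3 z hz hXi0 hXi'0
    · exact rows_ne c hc hcorner h12 h2 i i' (by omega) (by omega) hne z hz hXi0 hXi'0

end Main

/-- if a proper coloring `c` of `H*_{n₁,n₂}` (`n₁ ≥ n₂ > 3`)
colors the vertices `(i,1),(i,2),(i,3)` with a common color `Cᵢ` for each
`i ∈ {1,2,3}`, with `C₁, C₂, C₃` pairwise distinct (i.e. on the 3×3 corner `c`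
agrees with the first-coordinate partition), then `c` is the restriction to
`X*` of the partition by first coordinate. -/
theorem stmt10 (n1 n2 : ℕ) (h12 : n2 ≤ n1) (h2 : 3 < n2) {α : Type*}
    (c : {x : Fin n1 × Fin n2 // x ∈ Xstar2 n1 n2} → α)
    (hc : ProperColoring (E2sub n1 n2) c)
    (hcorner : ∀ x y : {x : Fin n1 × Fin n2 // x ∈ Xstar2 n1 n2},
      x.val.1.val < 3 → y.val.1.val < 3 → x.val.2.val < 3 → y.val.2.val < 3 →
      (c x = c y ↔ x.val.1 = y.val.1)) :
    ∀ x y : {x : Fin n1 × Fin n2 // x ∈ Xstar2 n1 n2},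
      c x = c y ↔ x.val.1 = y.val.1 := by
  intro x y
  obtain ⟨⟨i, j⟩, hx⟩ := x
  obtain ⟨⟨i', j'⟩, hy⟩ := y
  obtain ⟨z, hz⟩ : ∃ z : Fin n2, z.val = 0 := ⟨⟨0, by omega⟩, rfl⟩
  have hXi0 : (i, z) ∈ Xstar2 n1 n2 := memX0 h12 h2 i z hz
  have hXi'0 : (i', z) ∈ Xstar2 n1 n2 := memX0 h12 h2 i' z hz
  rw [colA c hc hcorner h12 h2 i j hx z hz hXi0,
    colA c hc hcorner h12 h2 i' j' hy z hz hXi'0]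
  show _ ↔ i = i'
  constructor
  · intro h
    by_contra hne
    exact colB c hc hcorner h12 h2 i i' hne z hz hXi0 hXi'0 h
  · intro h
    subst h
    rfl
end

section
/- Let $s \geq 2$ and $n_1 \geq n_2 > n_3 > \cdots > n_s > 3$. For every finite set $S$ of integers with $|S| \geq 2$ and $\min(S) > 3$, there exists a 3-uniform bi-hypergraph on at most $2\max(S) + n_2 + |S| - 2$ vertices whose feasible set equals $S$, where $n_2$ is the second largest element of $S$. In particular, the minimum number of vertices of a 3-uniform bi-hypergraph with feasible set $S = \{n_1 > n_2 > \cdots > n_s\}$ (all $> 3$) is at most $2n_1 + n_2 + s - 2$. -/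
namespace Stmt12Aux

/-- Vertex set: 3 anchor vertices and, for each `i : Fin N`, a pair
`x i` (the `false` component) and `y i` (the `true` component); the
"level" of the pair `i` is `(i : ℕ) + 2`, so levels run through `2..N+1`. -/
abbrev V (N : ℕ) : Type := Fin 3 ⊕ Bool × Fin N

variable {N : ℕ}

def xv (i : Fin N) : V N := Sum.inr (false, i)
def yv (i : Fin N) : V N := Sum.inr (true, i)

@[simp] lemma xv_ne_yv (i j : Fin N) : xv i ≠ yv j := by simp [xv, yv]
@[simp] lemma yv_ne_xv (i j : Fin N) : yv i ≠ xv j := by simp [xv, yv]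
@[simp] lemma inl_ne_xv (u : Fin 3) (i : Fin N) : (Sum.inl u : V N) ≠ xv i := by simp [xv]
@[simp] lemma inl_ne_yv (u : Fin 3) (i : Fin N) : (Sum.inl u : V N) ≠ yv i := by simp [yv]
@[simp] lemma xv_ne_inl (u : Fin 3) (i : Fin N) : xv i ≠ (Sum.inl u : V N) := by simp [xv]
@[simp] lemma yv_ne_inl (u : Fin 3) (i : Fin N) : yv i ≠ (Sum.inl u : V N) := by simp [yv]
@[simp] lemma xv_inj {i j : Fin N} : xv i = xv j ↔ i = j := by simp [xv]
@[simp] lemma yv_inj {i j : Fin N} : yv i = yv j ↔ i = j := by simp [yv]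

/-- The canonical coloring with threshold `m`. -/
def col (m : ℕ) : V N → ℕ
  | Sum.inl _ => 1
  | Sum.inr (false, i) => min ((i : ℕ) + 2) m
  | Sum.inr (true, i) => if (i : ℕ) + 2 ≤ m then (i : ℕ) + 2 else 1

@[simp] lemma col_inl (m : ℕ) (u : Fin 3) : col m (Sum.inl u : V N) = 1 := rfl
@[simp] lemma col_xv (m : ℕ) (i : Fin N) : col m (xv i) = min ((i : ℕ) + 2) m := rfl
@[simp] lemma col_yv (m : ℕ) (i : Fin N) :
    col m (yv i) = if (i : ℕ) + 2 ≤ m then (i : ℕ) + 2 else 1 := rfl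

/-- The edge set. -/
def E (S : Set ℕ) (N : ℕ) : Set (Finset (V N)) :=
  { b | (∃ u v : Fin 3, u ≠ v ∧ ∃ i : Fin N, b = {Sum.inl u, Sum.inl v, xv i})
      ∨ (∃ u v : Fin 3, u ≠ v ∧ ∃ i : Fin N, (i : ℕ) = 0 ∧ b = {Sum.inl u, Sum.inl v, yv i})
      ∨ (∃ u : Fin 3, ∃ i : Fin N, b = {Sum.inl u, xv i, yv i})
      ∨ (∃ i j : Fin N, (i : ℕ) < (j : ℕ) ∧ b = {yv i, yv j, xv i})
      ∨ (∃ i j : Fin N, (j : ℕ) = (i : ℕ) + 1 ∧ b = {xv i, xv j, yv j})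
      ∨ (∃ i j : Fin N, (j : ℕ) = (i : ℕ) + 1 ∧ (i : ℕ) + 2 ∉ S ∧ b = {xv i, yv i, xv j}) }

lemma card_three (S : Set ℕ) : ∀ b ∈ E S N, b.card = 3 := by
  rintro b (⟨u, v, huv, i, rfl⟩ | ⟨u, v, huv, i, hi, rfl⟩ | ⟨u, i, rfl⟩ |
    ⟨i, j, hij, rfl⟩ | ⟨i, j, hij, rfl⟩ | ⟨i, j, hij, hS, rfl⟩) <;>
    refine Finset.card_eq_three.mpr ⟨_, _, _, ?_, ?_, ?_, rfl⟩ <;>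
    simp_all [xv, yv] <;> omega

/-- cardinality of the quotient of the kernel of `col m`. -/
lemma card_ker (m : ℕ) (h2 : 2 ≤ m) (hK : m ≤ N + 1) :
    Nat.card (Quotient (Setoid.ker (col (N := N) m))) = m := by
  have e1 : Nat.card (Quotient (Setoid.ker (col (N := N) m)))
      = Nat.card (Set.range (col (N := N) m)) :=
    Nat.card_congr (Setoid.quotientKerEquivRange _)
  have hr : Set.range (col (N := N) m) = Set.Icc 1 m := by
    ext k
    constructor
    · rintro ⟨v, rfl⟩
      rcases v with u | ⟨b, i⟩
      · simp [col]; omega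
      · cases b <;> simp only [col, Set.mem_Icc] <;> [skip; split_ifs] <;> omega
    · rintro ⟨hk1, hkm⟩
      rcases Nat.lt_or_ge k 2 with hk | hk
      · exact ⟨Sum.inl 0, by simp [col]; omega⟩
      · refine ⟨xv ⟨k - 2, by omega⟩, ?_⟩
        simp [col, xv]; omega
  rw [e1, hr, ← Finset.coe_Icc, Nat.card_coe_set_eq, Set.ncard_coe_finset, Nat.card_Icc]
  omega

/-- helper to build the properness witness for an edge `{p,q,r}` -/
lemma goal_of {m : ℕ} {b : Finset (V N)} {w1 w2 w3 w4 : V N}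
    (h1 : w1 ∈ b) (h2 : w2 ∈ b) (h3 : w3 ∈ b) (h4 : w4 ∈ b)
    (hne : w1 ≠ w2) (heq : col m w1 = col m w2) (hneq : col m w3 ≠ col m w4) :
    (∃ x ∈ b, ∃ y ∈ b, x ≠ y ∧ (Setoid.ker (col (N := N) m)) x y)
      ∧ (∃ x ∈ b, ∃ y ∈ b, ¬ (Setoid.ker (col (N := N) m)) x y) :=
  ⟨⟨w1, h1, w2, h2, hne, heq⟩, ⟨w3, h3, w4, h4, hneq⟩⟩

lemma proper_ker (S : Set ℕ) (m : ℕ) (hm : m ∈ S) (h2 : 2 ≤ m) :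
    ProperSetoid (E S N) (Setoid.ker (col (N := N) m)) := by
  have fne : ∀ (i j : Fin N), (i : ℕ) ≠ (j : ℕ) → i ≠ j := fun i j h => Fin.ne_of_val_ne h
  rintro b (⟨u, v, huv, i, rfl⟩ | ⟨u, v, huv, i, hi, rfl⟩ | ⟨u, i, rfl⟩ |
    ⟨i, j, hij, rfl⟩ | ⟨i, j, hij, rfl⟩ | ⟨i, j, hij, hS, rfl⟩)
  · exact goal_of (w1 := Sum.inl u) (w2 := Sum.inl v) (w3 := Sum.inl u) (w4 := xv i)
      (by simp) (by simp) (by simp) (by simp) (by simp [huv])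
      (by simp) (by simp only [col_inl, col_xv, min_def]; split_ifs <;> omega)
  · exact goal_of (w1 := Sum.inl u) (w2 := Sum.inl v) (w3 := Sum.inl u) (w4 := yv i)
      (by simp) (by simp) (by simp) (by simp) (by simp [huv])
      (by simp) (by simp only [col_inl, col_yv, hi]; split_ifs <;> omega)
  · rcases le_or_gt ((i : ℕ) + 2) m with h | h
    · exact goal_of (w1 := xv i) (w2 := yv i) (w3 := Sum.inl u) (w4 := xv i)
        (by simp) (by simp) (by simp) (by simp) (by simp)
        (by simp only [col_xv, col_yv, min_def]; split_ifs <;> omega)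
        (by simp only [col_inl, col_xv, min_def]; split_ifs <;> omega)
    · exact goal_of (w1 := Sum.inl u) (w2 := yv i) (w3 := Sum.inl u) (w4 := xv i)
        (by simp) (by simp) (by simp) (by simp) (by simp)
        (by simp only [col_inl, col_yv]; split_ifs <;> omega)
        (by simp only [col_inl, col_xv, min_def]; split_ifs <;> omega)
  · rcases le_or_gt ((i : ℕ) + 2) m with h | h
    · exact goal_of (w1 := yv i) (w2 := xv i) (w3 := yv i) (w4 := yv j)
        (by simp) (by simp) (by simp) (by simp) (by simp)
        (by simp only [col_xv, col_yv, min_def]; split_ifs <;> omega)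
        (by simp only [col_yv]; split_ifs <;> omega)
    · exact goal_of (w1 := yv i) (w2 := yv j) (w3 := yv i) (w4 := xv i)
        (by simp) (by simp) (by simp) (by simp)
        (by simp only [ne_eq, yv_inj]; exact fun hh => absurd (congrArg Fin.val hh) (by omega))
        (by simp only [col_yv]; split_ifs <;> omega)
        (by simp only [col_xv, col_yv, min_def]; split_ifs <;> omega)
  · rcases le_or_gt ((j : ℕ) + 2) m with h | h
    · exact goal_of (w1 := xv j) (w2 := yv j) (w3 := xv i) (w4 := xv j)
        (by simp) (by simp) (by simp) (by simp) (by simp)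
        (by simp only [col_xv, col_yv, min_def]; split_ifs <;> omega)
        (by simp only [col_xv, min_def]; split_ifs <;> omega)
    · exact goal_of (w1 := xv i) (w2 := xv j) (w3 := xv j) (w4 := yv j)
        (by simp) (by simp) (by simp) (by simp)
        (by simp only [ne_eq, xv_inj]; exact fun hh => absurd (congrArg Fin.val hh) (by omega))
        (by simp only [col_xv, min_def]; split_ifs <;> omega)
        (by simp only [col_xv, col_yv, min_def]; split_ifs <;> omega)
  · have hmi : m ≠ (i : ℕ) + 2 := fun hh => hS (hh ▸ hm)
    rcases lt_or_gt_of_ne hmi with h | h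
    · exact goal_of (w1 := xv i) (w2 := xv j) (w3 := xv i) (w4 := yv i)
        (by simp) (by simp) (by simp) (by simp)
        (by simp only [ne_eq, xv_inj]; exact fun hh => absurd (congrArg Fin.val hh) (by omega))
        (by simp only [col_xv, min_def]; split_ifs <;> omega)
        (by simp only [col_xv, col_yv, min_def]; split_ifs <;> omega)
    · exact goal_of (w1 := xv i) (w2 := yv i) (w3 := xv i) (w4 := xv j)
        (by simp) (by simp) (by simp) (by simp) (by simp)
        (by simp only [col_xv, col_yv, min_def]; split_ifs <;> omega)
        (by simp only [col_xv, min_def]; split_ifs <;> omega)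

lemma edge_info {Q : Set (Finset (V N))} {P : Setoid (V N)} (h : ProperSetoid Q P)
    {p q r : V N} (hpq : p ≠ q) (hpr : p ≠ r) (hqr : q ≠ r)
    (hb : ({p, q, r} : Finset (V N)) ∈ Q) :
    (P p q ∨ P p r ∨ P q r) ∧ ¬(P p q ∧ P p r ∧ P q r) := by
  obtain ⟨⟨x, hx, y, hy, hxy, hPxy⟩, ⟨x', hx', y', hy', hnP⟩⟩ := h _ hb
  simp only [Finset.mem_insert, Finset.mem_singleton] at hx hy hx' hy'
  constructor
  · rcases hx with rfl | rfl | rfl <;> rcases hy with rfl | rfl | rfl <;>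
      first
        | exact absurd rfl hxy
        | exact Or.inl hPxy
        | exact Or.inl (P.iseqv.symm hPxy)
        | exact Or.inr (Or.inl hPxy)
        | exact Or.inr (Or.inl (P.iseqv.symm hPxy))
        | exact Or.inr (Or.inr hPxy)
        | exact Or.inr (Or.inr (P.iseqv.symm hPxy))
  · rintro ⟨h1, h2, h3⟩
    apply hnP
    rcases hx' with rfl | rfl | rfl <;> rcases hy' with rfl | rfl | rfl <;>
      first
        | exact P.iseqv.refl _
        | exact h1
        | exact h2
        | exact h3
        | exact P.iseqv.symm h1
        | exact P.iseqv.symm h2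
        | exact P.iseqv.symm h3

lemma complete (S : Set ℕ) (hKS : (N : ℕ) + 1 ∈ S) (hS2 : ∀ m ∈ S, 2 ≤ m)
    (P : Setoid (V N)) (h : ProperSetoid (E S N) P) :
    ∃ m ∈ S, P = Setoid.ker (col (N := N) m) := by
  classical
  have sym : ∀ {a b : V N}, P a b → P b a := fun hh => P.iseqv.symm hh
  have tra : ∀ {a b c : V N}, P a b → P b c → P a c := fun h1 h2 => P.iseqv.trans h1 h2
  have refl' : ∀ a : V N, P a a := fun a => P.iseqv.refl a
  have hN : 0 < N := by have := hS2 _ hKS; omega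
  set i0 : Fin N := ⟨0, hN⟩ with hi0
  -- edge membership helpers
  have eP1 : ∀ (u v : Fin 3), u ≠ v → ∀ i : Fin N,
      ({Sum.inl u, Sum.inl v, xv i} : Finset (V N)) ∈ E S N :=
    fun u v huv i => Or.inl ⟨u, v, huv, i, rfl⟩
  have eP2 : ∀ (u v : Fin 3), u ≠ v →
      ({Sum.inl u, Sum.inl v, yv i0} : Finset (V N)) ∈ E S N :=
    fun u v huv => Or.inr (Or.inl ⟨u, v, huv, i0, rfl, rfl⟩)
  have eP3 : ∀ (u : Fin 3) (i : Fin N),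
      ({Sum.inl u, xv i, yv i} : Finset (V N)) ∈ E S N :=
    fun u i => Or.inr (Or.inr (Or.inl ⟨u, i, rfl⟩))
  have eP4 : ∀ i j : Fin N, (i : ℕ) < (j : ℕ) →
      ({yv i, yv j, xv i} : Finset (V N)) ∈ E S N :=
    fun i j hij => Or.inr (Or.inr (Or.inr (Or.inl ⟨i, j, hij, rfl⟩)))
  have eP5 : ∀ i j : Fin N, (j : ℕ) = (i : ℕ) + 1 →
      ({xv i, xv j, yv j} : Finset (V N)) ∈ E S N :=
    fun i j hij => Or.inr (Or.inr (Or.inr (Or.inr (Or.inl ⟨i, j, hij, rfl⟩))))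
  have eP6 : ∀ i j : Fin N, (j : ℕ) = (i : ℕ) + 1 → (i : ℕ) + 2 ∉ S →
      ({xv i, yv i, xv j} : Finset (V N)) ∈ E S N :=
    fun i j hij hs => Or.inr (Or.inr (Or.inr (Or.inr (Or.inr ⟨i, j, hij, hs, rfl⟩))))
  -- Step 0 : the anchor triangle is monochromatic
  have mono : ∀ u v w : Fin 3, u ≠ v → u ≠ w → v ≠ w →
      P (Sum.inl u : V N) (Sum.inl v) := by
    intro u v w huv huw hvw
    by_contra hab
    have huv' : (Sum.inl u : V N) ≠ Sum.inl v := by simp [huv]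
    have huw' : (Sum.inl u : V N) ≠ Sum.inl w := by simp [huw]
    have hvw' : (Sum.inl v : V N) ≠ Sum.inl w := by simp [hvw]
    obtain ⟨i1x, _⟩ := edge_info h huv' (by simp) (by simp) (eP1 u v huv i0)
    obtain ⟨i1y, _⟩ := edge_info h huv' (by simp) (by simp) (eP2 u v huv)
    obtain ⟨_, iuwx2⟩ := edge_info h huw' (by simp) (by simp) (eP1 u w huw i0)
    obtain ⟨_, iuwy2⟩ := edge_info h huw' (by simp) (by simp) (eP2 u w huw)
    obtain ⟨_, ivwx2⟩ := edge_info h hvw' (by simp) (by simp) (eP1 v w hvw i0)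
    obtain ⟨_, ivwy2⟩ := edge_info h hvw' (by simp) (by simp) (eP2 v w hvw)
    obtain ⟨iw1, _⟩ := edge_info h (by simp) (by simp) (by simp) (eP3 w i0)
    obtain ⟨_, iu2⟩ := edge_info h (by simp) (by simp) (by simp) (eP3 u i0)
    obtain ⟨_, iv2⟩ := edge_info h (by simp) (by simp) (by simp) (eP3 v i0)
    have hx : P (Sum.inl u : V N) (xv i0) ∨ P (Sum.inl v : V N) (xv i0) := by
      rcases i1x with h' | h' | h'
      · exact absurd h' hab
      · exact Or.inl h'
      · exact Or.inr h'
    have hy : P (Sum.inl u : V N) (yv i0) ∨ P (Sum.inl v : V N) (yv i0) := by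
      rcases i1y with h' | h' | h'
      · exact absurd h' hab
      · exact Or.inl h'
      · exact Or.inr h'
    rcases hx with hux | hvx <;> rcases hy with huy | hvy
    · exact iu2 ⟨hux, huy, tra (sym hux) huy⟩
    · have hUW : ¬ P (Sum.inl u : V N) (Sum.inl w) :=
        fun hc => iuwx2 ⟨hc, hux, tra (sym hc) hux⟩
      have hVW : ¬ P (Sum.inl v : V N) (Sum.inl w) :=
        fun hc => ivwy2 ⟨hc, hvy, tra (sym hc) hvy⟩
      rcases iw1 with hwx | hwy | hxy
      · exact hUW (tra hux (sym hwx))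
      · exact hVW (tra hvy (sym hwy))
      · exact hab (tra (tra hux hxy) (sym hvy))
    · have hUW : ¬ P (Sum.inl u : V N) (Sum.inl w) :=
        fun hc => iuwy2 ⟨hc, huy, tra (sym hc) huy⟩
      have hVW : ¬ P (Sum.inl v : V N) (Sum.inl w) :=
        fun hc => ivwx2 ⟨hc, hvx, tra (sym hc) hvx⟩
      rcases iw1 with hwx | hwy | hxy
      · exact hVW (tra hvx (sym hwx))
      · exact hUW (tra huy (sym hwy))
      · exact hab (tra (tra huy (sym hxy)) (sym hvx))
    · exact iv2 ⟨hvx, hvy, tra (sym hvx) hvy⟩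
  have monoAB : ∀ u v : Fin 3, P (Sum.inl u : V N) (Sum.inl v) := by
    intro u v
    rcases eq_or_ne u v with rfl | huv
    · exact refl' _
    · obtain ⟨w, hw1, hw2⟩ :=
        (by decide : ∀ u v : Fin 3, u ≠ v → ∃ w, u ≠ w ∧ v ≠ w) u v huv
      exact mono u v w huv hw1 hw2
  set A : V N := Sum.inl 0 with hA
  have F2 : ∀ i : Fin N, ¬ P A (xv i) := by
    intro i hc
    obtain ⟨_, i2⟩ := edge_info h (by simp) (by simp) (by simp)
      (eP1 0 1 (by decide) i)
    exact i2 ⟨monoAB 0 1, hc, tra (sym (monoAB 0 1)) hc⟩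
  have F2y0 : ¬ P A (yv i0) := by
    intro hc
    obtain ⟨_, i2⟩ := edge_info h (by simp) (by simp) (by simp) (eP2 0 1 (by decide))
    exact i2 ⟨monoAB 0 1, hc, tra (sym (monoAB 0 1)) hc⟩
  have dich : ∀ i : Fin N, P (yv i) (xv i) ∨ P (yv i) A := by
    intro i
    obtain ⟨i1, _⟩ := edge_info h (by simp) (by simp) (by simp) (eP3 0 i)
    rcases i1 with h' | h' | h'
    · exact absurd h' (F2 i)
    · exact Or.inr (sym h')
    · exact Or.inl (sym h')
  have dropOf : ∀ i : Fin N, ¬ P (yv i) (xv i) → P (yv i) A :=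
    fun i h' => (dich i).resolve_left h'
  have att0 : P (yv i0) (xv i0) :=
    (dich i0).resolve_right (fun h' => F2y0 (sym h'))
  have L3a : ∀ i j : Fin N, (i : ℕ) < (j : ℕ) → P (yv i) (xv i) → P (yv j) (xv j) →
      ¬ P (xv i) (xv j) := by
    intro i j hij ai aj hc
    obtain ⟨_, i2⟩ := edge_info h
      (by simp only [ne_eq, yv_inj]; exact fun hh => absurd (congrArg Fin.val hh) (by omega))
      (by simp) (by simp) (eP4 i j hij)
    exact i2 ⟨tra (tra ai hc) (sym aj), ai, tra aj (sym hc)⟩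
  have L3b : ∀ i j : Fin N, (i : ℕ) < (j : ℕ) → P (yv i) A → P (yv j) (xv j) →
      P (xv i) (xv j) := by
    intro i j hij di aj
    obtain ⟨i1, _⟩ := edge_info h
      (by simp only [ne_eq, yv_inj]; exact fun hh => absurd (congrArg Fin.val hh) (by omega))
      (by simp) (by simp) (eP4 i j hij)
    rcases i1 with h' | h' | h'
    · exact absurd (tra (sym (tra (sym h') di)) aj) (F2 j)
    · exact absurd (tra (sym di) h') (F2 i)
    · exact tra (sym h') aj
  have L4a : ∀ i j : Fin N, (j : ℕ) = (i : ℕ) + 1 → P (yv j) A → P (xv i) (xv j) := by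
    intro i j hj dj
    obtain ⟨i1, _⟩ := edge_info h
      (by simp only [ne_eq, xv_inj]; exact fun hh => absurd (congrArg Fin.val hh) (by omega))
      (by simp) (by simp) (eP5 i j hj)
    rcases i1 with h' | h' | h'
    · exact h'
    · exact absurd (sym (tra h' dj)) (F2 i)
    · exact absurd (sym (tra h' dj)) (F2 j)
  have L4b : ∀ i j : Fin N, (j : ℕ) = (i : ℕ) + 1 → P (yv j) (xv j) →
      ¬ P (xv i) (xv j) := by
    intro i j hj aj hc
    obtain ⟨_, i2⟩ := edge_info h
      (by simp only [ne_eq, xv_inj]; exact fun hh => absurd (congrArg Fin.val hh) (by omega))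
      (by simp) (by simp) (eP5 i j hj)
    exact i2 ⟨hc, tra hc (sym aj), sym aj⟩
  have L5 : ∀ i j : Fin N, (j : ℕ) = (i : ℕ) + 1 → (i : ℕ) + 2 ∉ S →
      P (yv i) (xv i) → ¬ P (xv i) (xv j) := by
    intro i j hj hs ai hc
    obtain ⟨_, i2⟩ := edge_info h (by simp)
      (by simp only [ne_eq, xv_inj]; exact fun hh => absurd (congrArg Fin.val hh) (by omega))
      (by simp) (eP6 i j hj hs)
    exact i2 ⟨sym ai, hc, tra ai hc⟩
  -- the attachment predicate on ℕ
  set att : ℕ → Prop := fun k => ∃ hk : k < N, P (yv ⟨k, hk⟩) (xv ⟨k, hk⟩) with hatt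
  have datt : ∀ k, att (k + 1) → att k := by
    rintro k ⟨hk1, ha1⟩
    have hk : k < N := by omega
    refine ⟨hk, ?_⟩
    by_contra hna
    have d := dropOf ⟨k, hk⟩ hna
    have h34 := L3b ⟨k, hk⟩ ⟨k + 1, hk1⟩ (by simp) d ha1
    exact L4b ⟨k, hk⟩ ⟨k + 1, hk1⟩ (by simp) ha1 h34
  have climb : ∀ k, att k → (k + 2) ∉ S → k + 1 < N → att (k + 1) := by
    rintro k ⟨hk, ha⟩ hs hk1
    refine ⟨hk1, ?_⟩
    by_contra hna
    have d := dropOf ⟨k + 1, hk1⟩ hna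
    have h4 := L4a ⟨k, hk⟩ ⟨k + 1, hk1⟩ (by simp) d
    exact L5 ⟨k, hk⟩ ⟨k + 1, hk1⟩ (by simp) hs ha h4
  set θk := Nat.findGreatest att (N - 1) with hθk
  have hθa : att θk := Nat.findGreatest_spec (Nat.zero_le _) ⟨hN, att0⟩
  have hθle : θk ≤ N - 1 := Nat.findGreatest_le _
  have hθlt : θk < N := by omega
  have hmax : ∀ k, θk < k → ¬ att k := by
    intro k hk hak
    rcases Nat.lt_or_ge (N - 1) k with h' | h'
    · obtain ⟨hkN, _⟩ := hak; omega
    · exact Nat.findGreatest_is_greatest hk h' hak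
  have θS : θk + 2 ∈ S := by
    by_contra hns
    rcases Nat.lt_or_ge (θk + 1) N with h' | h'
    · exact hmax (θk + 1) (by omega) (climb θk hθa hns h')
    · exact hns (by rw [show θk + 2 = N + 1 by omega]; exact hKS)
  have att_down : ∀ d k, att (k + d) → att k := by
    intro d
    induction d with
    | zero => exact fun k hk => hk
    | succ d ih => exact fun k h' => ih k (datt (k + d) h')
  have att_le : ∀ k, k ≤ θk → att k := by
    intro k hk
    refine att_down (θk - k) k ?_
    rw [show k + (θk - k) = θk by omega]
    exact hθa
  set θi : Fin N := ⟨θk, hθlt⟩ with hθi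
  have attF : ∀ i : Fin N, (i : ℕ) ≤ θk → P (yv i) (xv i) := by
    intro i hi
    obtain ⟨h', ha⟩ := att_le (i : ℕ) hi
    have : (⟨(i : ℕ), h'⟩ : Fin N) = i := Fin.ext rfl
    rwa [this] at ha
  have dropF : ∀ i : Fin N, θk < (i : ℕ) → P (yv i) A := by
    intro i hi
    refine dropOf i fun ha => hmax (i : ℕ) hi ⟨i.isLt, ?_⟩
    exact ha
  have nattF : ∀ i : Fin N, (i : ℕ) ≤ θk → ¬ P (yv i) A := by
    intro i hi hc
    exact F2 i (tra (sym hc) (attF i hi))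
  have chain : ∀ k (hk : k < N), θk ≤ k → P (xv θi) (xv ⟨k, hk⟩) := by
    intro k
    induction k with
    | zero =>
      intro hk h0
      have : θi = ⟨0, hk⟩ := Fin.ext (show θk = 0 by omega)
      rw [this]
    | succ k ih =>
      intro hk1 hle
      rcases Nat.lt_or_ge θk (k + 1) with h' | h'
      · have hk : k < N := by omega
        have ihh := ih hk (by omega)
        have d : P (yv ⟨k + 1, hk1⟩) A := dropF ⟨k + 1, hk1⟩ (by simpa using h')
        exact tra ihh (L4a ⟨k, hk⟩ ⟨k + 1, hk1⟩ (by simp) d)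
      · have : θi = ⟨k + 1, hk1⟩ := Fin.ext (show θk = k + 1 by omega)
        rw [this]
  set m := θk + 2 with hm
  -- the x-relation
  have xrel' : ∀ i j : Fin N, (i : ℕ) ≤ (j : ℕ) →
      (P (xv i) (xv j) ↔ min ((i : ℕ) + 2) m = min ((j : ℕ) + 2) m) := by
    intro i j hij
    rcases Nat.lt_or_ge θk (i : ℕ) with hi | hi
    · -- both beyond θk : both true
      have ci := chain (i : ℕ) i.isLt (by omega)
      have cj := chain (j : ℕ) j.isLt (by omega)
      have hPij : P (xv i) (xv j) := by
        have : (⟨(i : ℕ), i.isLt⟩ : Fin N) = i := Fin.ext rfl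
        rw [this] at ci
        have : (⟨(j : ℕ), j.isLt⟩ : Fin N) = j := Fin.ext rfl
        rw [this] at cj
        exact tra (sym ci) cj
      constructor
      · intro _; omega
      · intro _; exact hPij
    · rcases Nat.lt_or_ge θk (j : ℕ) with hj | hj
      · -- i ≤ θk < j
        rcases Nat.eq_or_lt_of_le hi with hieq | hilt
        · -- i = θk : both true
          have cj := chain (j : ℕ) j.isLt (by omega)
          have hji : (⟨(j : ℕ), j.isLt⟩ : Fin N) = j := Fin.ext rfl
          rw [hji] at cj
          have hti : θi = i := Fin.ext (show θk = (i : ℕ) by omega)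
          rw [hti] at cj
          constructor
          · intro _; omega
          · intro _; exact cj
        · -- i < θk < j : both false
          have cj := chain (j : ℕ) j.isLt (by omega)
          have hji : (⟨(j : ℕ), j.isLt⟩ : Fin N) = j := Fin.ext rfl
          rw [hji] at cj
          constructor
          · intro hc
            exact absurd (tra hc (sym cj))
              (fun hc' => L3a i θi (show (i : ℕ) < θk by omega) (attF i hi)
                (attF θi (Nat.le_refl θk)) hc')
          · intro hmins; omega
      · -- both ≤ θk
        constructor
        · intro hc
          rcases Nat.eq_or_lt_of_le hij with hieq | hilt
          · rw [Fin.ext hieq]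
          · exact absurd hc (L3a i j hilt (attF i hi) (attF j hj))
        · intro hmins
          have : (i : ℕ) = (j : ℕ) := by omega
          rw [Fin.ext this]
  have xrel : ∀ i j : Fin N, (P (xv i) (xv j) ↔ min ((i : ℕ) + 2) m = min ((j : ℕ) + 2) m) := by
    intro i j
    rcases Nat.le_total (i : ℕ) (j : ℕ) with hle | hle
    · exact xrel' i j hle
    · exact ⟨fun hh => ((xrel' j i hle).mp (sym hh)).symm,
        fun hh => sym ((xrel' j i hle).mpr hh.symm)⟩
  -- final : P equals the kernel of col m
  refine ⟨m, θS, ?_⟩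
  apply Setoid.ext
  intro u v
  show P u v ↔ col m u = col m v
  have flip : ∀ {u v : V N}, (P u v ↔ col m u = col m v) →
      (P v u ↔ col m v = col m u) :=
    fun hiff => ⟨fun hh => (hiff.mp (sym hh)).symm, fun hh => sym (hiff.mpr hh.symm)⟩
  have case_inl_x : ∀ (a : Fin 3) (i : Fin N),
      (P (Sum.inl a : V N) (xv i) ↔ col m (Sum.inl a : V N) = col m (xv i)) := by
    intro a i
    constructor
    · intro hc; exact absurd (tra (monoAB 0 a) hc) (F2 i)
    · intro hc; simp only [col_inl, col_xv] at hc; omega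
  have case_inl_y : ∀ (a : Fin 3) (i : Fin N),
      (P (Sum.inl a : V N) (yv i) ↔ col m (Sum.inl a : V N) = col m (yv i)) := by
    intro a i
    rcases Nat.lt_or_ge θk (i : ℕ) with hi | hi
    · constructor
      · intro _; simp only [col_inl, col_yv]; rw [if_neg (by omega)]
      · intro _; exact tra (monoAB a 0) (sym (dropF i hi))
    · constructor
      · intro hc; exact absurd (sym (tra (monoAB 0 a) hc)) (nattF i hi)
      · intro hc; simp only [col_inl, col_yv] at hc
        rw [if_pos (by omega)] at hc; omega
  have case_x_y : ∀ (i j : Fin N),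
      (P (xv i) (yv j) ↔ col m (xv i) = col m (yv j)) := by
    intro i j
    rcases Nat.lt_or_ge θk (j : ℕ) with hj | hj
    · constructor
      · intro hc; exact absurd (sym (tra hc (dropF j hj))) (F2 i)
      · intro hc; simp only [col_xv, col_yv] at hc
        rw [if_neg (by omega)] at hc; omega
    · have aj := attF j hj
      have hcolyj : col m (yv j) = min ((j : ℕ) + 2) m := by
        simp only [col_yv]; rw [if_pos (by omega)]; omega
      constructor
      · intro hc
        have : P (xv i) (xv j) := tra hc aj
        rw [hcolyj]
        simpa using (xrel i j).mp this
      · intro hc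
        rw [hcolyj] at hc
        exact tra ((xrel i j).mpr (by simpa using hc)) (sym aj)
  have case_y_y : ∀ (i j : Fin N),
      (P (yv i) (yv j) ↔ col m (yv i) = col m (yv j)) := by
    intro i j
    rcases Nat.lt_or_ge θk (i : ℕ) with hi | hi <;>
      rcases Nat.lt_or_ge θk (j : ℕ) with hj | hj
    · constructor
      · intro _; simp only [col_yv]; rw [if_neg (by omega), if_neg (by omega)]
      · intro _; exact tra (dropF i hi) (sym (dropF j hj))
    · constructor
      · intro hc; exact absurd (tra (sym hc) (dropF i hi)) (nattF j hj)
      · intro hc; simp only [col_yv] at hc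
        rw [if_neg (by omega), if_pos (by omega)] at hc; omega
    · constructor
      · intro hc; exact absurd (tra hc (dropF j hj)) (nattF i hi)
      · intro hc; simp only [col_yv] at hc
        rw [if_pos (by omega), if_neg (by omega)] at hc; omega
    · have ai := attF i hi
      have aj := attF j hj
      constructor
      · intro hc
        have hx : P (xv i) (xv j) := tra (sym ai) (tra hc aj)
        have := (xrel i j).mp hx
        simp only [col_yv]; rw [if_pos (by omega), if_pos (by omega)]; omega
      · intro hc
        simp only [col_yv] at hc
        rw [if_pos (by omega), if_pos (by omega)] at hc
        have hx : P (xv i) (xv j) := (xrel i j).mpr (by omega)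
        exact tra ai (tra hx (sym aj))
  rcases u with a | ⟨bu, iu⟩
  · rcases v with b | ⟨bv, iv⟩
    · exact ⟨fun _ => rfl, fun _ => monoAB a b⟩
    · cases bv
      · exact case_inl_x a iv
      · exact case_inl_y a iv
  · rcases v with b | ⟨bv, iv⟩
    · cases bu
      · exact flip (case_inl_x b iu)
      · exact flip (case_inl_y b iu)
    · cases bu <;> cases bv
      · exact xrel iu iv
      · exact case_x_y iu iv
      · exact flip (case_x_y iv iu)
      · exact case_y_y iu iv

theorem general (S : Set ℕ) (N : ℕ) (hS2 : ∀ m ∈ S, 2 ≤ m) (hSK : ∀ m ∈ S, m ≤ N + 1)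
    (hKS : N + 1 ∈ S) :
    (∀ b ∈ E S N, b.card = 3) ∧
      {k | ∃ P : Setoid (V N), ProperSetoid (E S N) P ∧ Nat.card (Quotient P) = k} = S := by
  refine ⟨card_three S, ?_⟩
  ext k
  simp only [Set.mem_setOf_eq]
  constructor
  · rintro ⟨P, hP, rfl⟩
    obtain ⟨m, hm, rfl⟩ := complete S hKS hS2 P hP
    rwa [card_ker m (hS2 m hm) (hSK m hm)]
  · intro hk
    exact ⟨Setoid.ker (col k), proper_ker S k hk (hS2 k hk),
      card_ker k (hS2 k hk) (hSK k hk)⟩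

end Stmt12Aux

/-- for every finite set `S = {n₁ > n₂ > ⋯ > nₛ}` of integers
with `|S| = s ≥ 2` and `min S > 3` (here enumerated by a strictly decreasing
`n : Fin s → ℕ`, so `n 0 = max S` and `n 1` is the second largest element),
there is a 3-uniform bi-hypergraph on at most `2·n₁ + n₂ + s - 2` vertices
whose feasible set is exactly `S`. -/
theorem stmt12 (s : ℕ) (hs : 2 ≤ s) (n : Fin s → ℕ)
    (hstrict : StrictAnti n) (h3 : ∀ i, 3 < n i) :
    ∃ (X : Type) (_ : Fintype X) (E : Set (Finset X)),
      (∀ b ∈ E, b.card = 3) ∧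
      Nat.card X ≤ 2 * n ⟨0, by omega⟩ + n ⟨1, by omega⟩ + s - 2 ∧
      {k | ∃ P : Setoid X, ProperSetoid E P ∧ Nat.card (Quotient P) = k}
        = Set.range n := by
  classical
  set n0 := n ⟨0, by omega⟩ with hn0
  set N := n0 - 1 with hN
  have hn04 : 4 ≤ n0 := h3 _
  have hle0 : ∀ i : Fin s, n i ≤ n0 := by
    intro i
    exact hstrict.antitone (by exact Fin.mk_le_of_le_val (Nat.zero_le _))
  have hN1 : N + 1 = n0 := by omega
  obtain ⟨h1, h2⟩ := Stmt12Aux.general (Set.range n) N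
    (by rintro m ⟨i, rfl⟩; have := h3 i; omega)
    (by rintro m ⟨i, rfl⟩; rw [hN1]; exact hle0 i)
    (by rw [hN1]; exact ⟨_, rfl⟩)
  refine ⟨Stmt12Aux.V N, inferInstance, Stmt12Aux.E (Set.range n) N, h1, ?_, h2⟩
  have hcard : Nat.card (Stmt12Aux.V N) = 3 + 2 * N := by
    simp [Stmt12Aux.V, Nat.card_eq_fintype_card]
  rw [hcard]
  have hn1 : 4 ≤ n ⟨1, by omega⟩ := h3 _
  omega
end

section
/- Let $n_1 > n_2 \geq 3$ and let $\mathcal{H}_{n_1,n_2}$ be the 3-uniform bi-hypergraph on $[n_1] \times [n_2]$ with edges the 3-subsets taking exactly 2 distinct values in both coordinates. Then $\mathcal{H}_{n_1,n_2}$ is not $k$-colorable for any $k \notin \{n_1, n_2\}$; in particular it has no strict coloring with exactly $n$ classes for $n_2 < n < n_1$, so its feasible set has a gap. -/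
section Aux

variable {X : Type*} [DecidableEq X]

lemma aux_mono3 {r : X → X → Prop} (hs : ∀ {x y}, r x y → r y x) {u v w : X}
    (h : ∃ x ∈ ({u, v, w} : Finset X), ∃ y ∈ ({u, v, w} : Finset X), x ≠ y ∧ r x y) :
    r u v ∨ r u w ∨ r v w := by
  obtain ⟨x, hx, y, hy, hxy, hrxy⟩ := h
  simp only [Finset.mem_insert, Finset.mem_singleton] at hx hy
  rcases hx with rfl | rfl | rfl <;> rcases hy with rfl | rfl | rfl <;>
    first
    | exact absurd rfl hxy
    | exact Or.inl hrxy
    | exact Or.inl (hs hrxy)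
    | exact Or.inr (Or.inl hrxy)
    | exact Or.inr (Or.inl (hs hrxy))
    | exact Or.inr (Or.inr hrxy)
    | exact Or.inr (Or.inr (hs hrxy))

lemma aux_poly3 {r : X → X → Prop} (hr : Equivalence r) {u v w : X}
    (h1 : r u v) (h2 : r u w)
    (h : ∃ x ∈ ({u, v, w} : Finset X), ∃ y ∈ ({u, v, w} : Finset X), ¬ r x y) : False := by
  obtain ⟨x, hx, y, hy, hxy⟩ := h
  have h3 : r v w := hr.trans (hr.symm h1) h2
  simp only [Finset.mem_insert, Finset.mem_singleton] at hx hy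
  rcases hx with rfl | rfl | rfl <;> rcases hy with rfl | rfl | rfl <;>
    first
    | exact hxy (hr.refl _)
    | exact hxy h1
    | exact hxy (hr.symm h1)
    | exact hxy h2
    | exact hxy (hr.symm h2)
    | exact hxy h3
    | exact hxy (hr.symm h3)

end Aux

lemma aux_tri_mem {n1 n2 : ℕ} (a b : Fin n1) (c d : Fin n2) (hab : a ≠ b) (hcd : c ≠ d) :
    ({(a, c), (a, d), (b, c)} : Finset (Fin n1 × Fin n2)) ∈ E2 n1 n2 := by
  have h1 : ((a, c) : Fin n1 × Fin n2) ≠ (a, d) := by simp [Prod.ext_iff, hcd]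
  have h2 : ((a, c) : Fin n1 × Fin n2) ≠ (b, c) := by simp [Prod.ext_iff, hab]
  have h3 : ((a, d) : Fin n1 × Fin n2) ≠ (b, c) := by simp [Prod.ext_iff, hab]
  refine ⟨?_, ?_, ?_⟩
  · rw [Finset.card_insert_of_notMem (by simp [h1, h2]),
      Finset.card_insert_of_notMem (by simp [h3]), Finset.card_singleton]
  · have heq : (({(a, c), (a, d), (b, c)} : Finset (Fin n1 × Fin n2)).image Prod.fst)
        = {a, b} := by
      ext x
      simp only [Finset.mem_image, Finset.mem_insert, Finset.mem_singleton]
      constructor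
      · rintro ⟨p, hp, rfl⟩
        rcases hp with rfl | rfl | rfl <;> simp
      · rintro (rfl | rfl)
        · exact ⟨(x, c), Or.inl rfl, rfl⟩
        · exact ⟨(x, c), Or.inr (Or.inr rfl), rfl⟩
    rw [heq, Finset.card_pair hab]
  · have heq : (({(a, c), (a, d), (b, c)} : Finset (Fin n1 × Fin n2)).image Prod.snd)
        = {c, d} := by
      ext x
      simp only [Finset.mem_image, Finset.mem_insert, Finset.mem_singleton]
      constructor
      · rintro ⟨p, hp, rfl⟩
        rcases hp with rfl | rfl | rfl <;> simp
      · rintro (rfl | rfl)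
        · exact ⟨(a, x), Or.inl rfl, rfl⟩
        · exact ⟨(a, x), Or.inr (Or.inl rfl), rfl⟩
    rw [heq, Finset.card_pair hcd]

section Abstract

variable {α β : Type*}

/-- The key combinatorial condition derived from properness: for every
"rectangle", the triple `{(a,c),(a,d),(b,c)}` has a monochromatic pair and a
polychromatic pair. -/
def HE2 (r : α × β → α × β → Prop) : Prop :=
  ∀ a b : α, ∀ c d : β, a ≠ b → c ≠ d →
    ((r (a, c) (a, d) ∨ r (a, c) (b, c) ∨ r (a, d) (b, c)) ∧
      ¬ (r (a, c) (a, d) ∧ r (a, c) (b, c)))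

lemma HE2.swap {r : α × β → α × β → Prop} (hr : Equivalence r) (hE : HE2 r) :
    HE2 (fun x y : β × α => r (x.2, x.1) (y.2, y.1)) := by
  intro c d a b hcd hab
  obtain ⟨m, p⟩ := hE a b c d hab hcd
  constructor
  · rcases m with h | h | h
    · exact Or.inr (Or.inl h)
    · exact Or.inl h
    · exact Or.inr (Or.inr (hr.symm h))
  · rintro ⟨hx1, hx2⟩
    exact p ⟨hx2, hx1⟩

lemma aux_lemA {r : α × β → α × β → Prop} (hr : Equivalence r) (hE : HE2 r)
    {a : α} {c d : β} (hcd : c ≠ d) (h0 : r (a, c) (a, d)) :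
    ∀ b, r (b, c) (b, d) := by
  intro b
  by_cases hab : a = b
  · subst hab; exact h0
  have hba : b ≠ a := fun h => hab h.symm
  obtain ⟨m1, _⟩ := hE b a c d hba hcd
  obtain ⟨_, p3⟩ := hE a b c d hab hcd
  obtain ⟨_, p4⟩ := hE a b d c hab (Ne.symm hcd)
  rcases m1 with h | h | h
  · exact h
  · exact absurd ⟨h0, hr.symm h⟩ p3
  · exact absurd ⟨hr.symm h0, hr.symm (hr.trans h h0)⟩ p4

lemma aux_colsMono {r : α × β → α × β → Prop} (hr : Equivalence r) (hE : HE2 r)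
    (h3 : ∀ c : β, ∃ d d' : β, d ≠ d' ∧ c ≠ d ∧ c ≠ d')
    (hrain : ∀ (a : α) (c d : β), r (a, c) (a, d) → c = d) :
    ∀ a b c, r (a, c) (b, c) := by
  intro a b c
  by_cases hab : a = b
  · subst hab; exact hr.refl _
  obtain ⟨d, d', hdd', hcd, hcd'⟩ := h3 c
  have m1 := (hE a b c d hab hcd).1
  have m2 := (hE a b c d' hab hcd').1
  rcases m1 with h | h | h
  · exact absurd (hrain a c d h) hcd
  · exact h
  rcases m2 with h' | h' | h'
  · exact absurd (hrain a c d' h') hcd'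
  · exact h'
  · exact absurd (hrain a d d' (hr.trans h (hr.symm h'))) hdd'

end Abstract

lemma aux_exists_two_ne {n : ℕ} (hn : 3 ≤ n) (c : Fin n) :
    ∃ d d' : Fin n, d ≠ d' ∧ c ≠ d ∧ c ≠ d' := by
  have h0 : (0 : ℕ) < n := by omega
  have h1 : (1 : ℕ) < n := by omega
  have h2 : (2 : ℕ) < n := by omega
  by_cases hc0 : c.val = 0
  · exact ⟨⟨1, h1⟩, ⟨2, h2⟩, Fin.ne_of_val_ne (show (1 : ℕ) ≠ 2 by omega),
      Fin.ne_of_val_ne (show c.val ≠ 1 by omega),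
      Fin.ne_of_val_ne (show c.val ≠ 2 by omega)⟩
  by_cases hc1 : c.val = 1
  · exact ⟨⟨0, h0⟩, ⟨2, h2⟩, Fin.ne_of_val_ne (show (0 : ℕ) ≠ 2 by omega),
      Fin.ne_of_val_ne (show c.val ≠ 0 by omega),
      Fin.ne_of_val_ne (show c.val ≠ 2 by omega)⟩
  · exact ⟨⟨0, h0⟩, ⟨1, h1⟩, Fin.ne_of_val_ne (show (0 : ℕ) ≠ 1 by omega),
      Fin.ne_of_val_ne (show c.val ≠ 0 by omega),
      Fin.ne_of_val_ne (show c.val ≠ 1 by omega)⟩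

lemma aux_card_quot {X : Type*} (P : Setoid X) {n : ℕ} (f : X → Fin n)
    (hwd : ∀ x y, P.r x y → f x = f y)
    (hinj : ∀ x y, f x = f y → P.r x y)
    (hsurj : ∀ c : Fin n, ∃ x, f x = c) :
    Nat.card (Quotient P) = n := by
  have e : Quotient P ≃ Fin n :=
    { toFun := Quotient.lift f hwd
      invFun := fun c => Quotient.mk P (hsurj c).choose
      left_inv := by
        intro q
        induction q using Quotient.inductionOn with
        | h x =>
          exact Quot.sound (hinj _ _ ((hsurj (f x)).choose_spec))
      right_inv := fun c => (hsurj c).choose_spec }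
  rw [Nat.card_congr e]
  simp

/-- for `n₁ > n₂ ≥ 3`, `H_{n₁,n₂}` has no strict `k`-coloring
for any `k ∉ {n₁, n₂}`; in particular none with `n₂ < k < n₁` classes, so its
feasible set has a gap. -/
theorem stmt15 (n1 n2 : ℕ) (h12 : n2 < n1) (h2 : 3 ≤ n2)
    (k : ℕ) (hk1 : k ≠ n1) (hk2 : k ≠ n2) :
    ¬ ∃ P : Setoid (Fin n1 × Fin n2),
        ProperSetoid (E2 n1 n2) P ∧ Nat.card (Quotient P) = k := by
  rintro ⟨P, hP, hcard⟩
  set r : Fin n1 × Fin n2 → Fin n1 × Fin n2 → Prop := fun x y => P.r x y with hrdef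
  have hr : Equivalence r := P.iseqv
  have hE : HE2 r := by
    intro a b c d hab hcd
    obtain ⟨hm, hp⟩ := hP _ (aux_tri_mem a b c d hab hcd)
    refine ⟨aux_mono3 (fun h => hr.symm h) hm, ?_⟩
    rintro ⟨hx1, hx2⟩
    exact aux_poly3 hr hx1 hx2 hp
  have hn1 : 0 < n1 := by omega
  have hn2 : 0 < n2 := by omega
  by_cases hrain : ∀ (a : Fin n1) (c d : Fin n2), r (a, c) (a, d) → c = d
  · -- every row rainbow; columns monochromatic, exactly n2 classes
    have cm : ∀ a b c, r (a, c) (b, c) :=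
      aux_colsMono hr hE (aux_exists_two_ne h2) hrain
    have : Nat.card (Quotient P) = n2 := by
      refine aux_card_quot P Prod.snd ?_ ?_ ?_
      · rintro ⟨a, c⟩ ⟨b, d⟩ hxy
        exact hrain a c d (hr.trans hxy (hr.symm (cm a b d)))
      · rintro ⟨a, c⟩ ⟨b, d⟩ h
        simp only at h
        subst h
        exact cm a b c
      · intro c; exact ⟨(⟨0, hn1⟩, c), rfl⟩
    exact hk2 (hcard.symm.trans this)
  · push_neg at hrain
    obtain ⟨a, c, d, hracd, hcd⟩ := hrain
    -- work with the swapped relation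
    set rs : Fin n2 × Fin n1 → Fin n2 × Fin n1 → Prop :=
      fun x y => r (x.2, x.1) (y.2, y.1) with hrsdef
    have hrs : Equivalence rs :=
      ⟨fun x => hr.refl _, fun h => hr.symm h, fun h h' => hr.trans h h'⟩
    have hEs : HE2 rs := HE2.swap hr hE
    -- every column is rainbow
    have hrain' : ∀ (e : Fin n2) (x y : Fin n1), rs (e, x) (e, y) → x = y := by
      intro e x y hxy
      by_contra hxyne
      have hall : ∀ f : Fin n2, rs (f, x) (f, y) := aux_lemA hrs hEs hxyne hxy
      have hxc : r (x, c) (y, c) := hall c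
      exact (hE x y c d hxyne hcd).2 ⟨aux_lemA hr hE hcd hracd x, hxc⟩
    -- rows monochromatic
    have rm : ∀ c c' a, rs (c, a) (c', a) :=
      aux_colsMono hrs hEs (aux_exists_two_ne (by omega : 3 ≤ n1)) hrain'
    have : Nat.card (Quotient P) = n1 := by
      refine aux_card_quot P Prod.fst ?_ ?_ ?_
      · rintro ⟨x, e⟩ ⟨y, f⟩ hxy
        have h1 : rs (e, x) (f, y) := hxy
        have h2 : rs (f, x) (f, y) := hrs.trans (hrs.symm (rm e f x)) h1
        exact hrain' f x y h2
      · rintro ⟨x, e⟩ ⟨y, f⟩ h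
        simp only at h
        subst h
        exact rm e f x
      · intro x; exact ⟨(x, ⟨0, hn2⟩), rfl⟩
    exact hk1 (hcard.symm.trans this)
end

section
/- Let $s \geq 2$ and $n_1 \geq n_2 > n_3 > \cdots > n_s > 3$, with $X^*_{n_1,\ldots,n_s} = \bigcup_{i=1}^s X_i$ defined as in the paper, and let $X^\dagger = X^*_{n_1,\ldots,n_s} \setminus (X_1 \cup X_2)$. Then the derived sub-hypergraph $\mathcal{H}_{n_1,\ldots,n_s}[X^\dagger]$ is isomorphic to $\mathcal{H}^*_{n_3,n_3,n_4,\ldots,n_s}$. -/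
/-- 1-based value of coordinate `k` of a vertex (for `1 ≤ k ≤ s`). -/
def vOf {s : ℕ} {n : Fin s → ℕ} (x : ∀ j, Fin (n j)) (k : ℕ) : ℕ :=
  if h : k - 1 < s then (x ⟨k - 1, h⟩).val + 1 else 1

/-- 1-based access to the sizes: `nOf s n k = n_k`. -/
def nOf (s : ℕ) (n : Fin s → ℕ) (k : ℕ) : ℕ :=
  if h : k - 1 < s then n ⟨k - 1, h⟩ else 0

/-- The component `X₁ = {(n₂+j,1,…,1), (n₂+j,n₂,n₃,…,nₛ) : j ∈ [n₁-n₂]}`. -/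
def X1Set (s : ℕ) (n : Fin s → ℕ) : Set (∀ j, Fin (n j)) :=
  {x | nOf s n 2 < vOf x 1 ∧
    ((∀ k, 2 ≤ k → k ≤ s → vOf x k = 1) ∨
     (∀ k, 2 ≤ k → k ≤ s → vOf x k = nOf s n k))}

/-- The component `Xᵢ` for `2 ≤ i ≤ s-1`:
`{(n_{i+1}+j,1,…,1), (n_{i+1}+j,…,n_{i+1}+j,n_{i+1},…,nₛ) : j ∈ [nᵢ-n_{i+1}]}`
(the repeated value in coordinates 1..i) together with the inflexion-type
vertices `{(1,n_{i+1}+j,…,n_{i+1}+j,1,…,1) : 0 ≤ j ≤ nᵢ-n_{i+1}}` (the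
repeated value in coordinates 2..i). -/
def XiSet (s : ℕ) (n : Fin s → ℕ) (i : ℕ) : Set (∀ j, Fin (n j)) :=
  {x | (nOf s n (i+1) < vOf x 1 ∧ vOf x 1 ≤ nOf s n i ∧
        ((∀ k, 2 ≤ k → k ≤ s → vOf x k = 1) ∨
         ((∀ k, 2 ≤ k → k ≤ i → vOf x k = vOf x 1) ∧
          (∀ k, i + 1 ≤ k → k ≤ s → vOf x k = nOf s n k)))) ∨
       (vOf x 1 = 1 ∧ nOf s n (i+1) ≤ vOf x 2 ∧ vOf x 2 ≤ nOf s n i ∧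
        (∀ k, 2 ≤ k → k ≤ i → vOf x k = vOf x 2) ∧
        (∀ k, i + 1 ≤ k → k ≤ s → vOf x k = 1))}

/-- The component `Xₛ = {(i,k,…,k) : i,k ∈ [3]}
∪ {(1,k,…,k), (k,1,…,1), (k,…,k) : 4 ≤ k ≤ nₛ}`. -/
def XsSet (s : ℕ) (n : Fin s → ℕ) : Set (∀ j, Fin (n j)) :=
  {x | (vOf x 1 ≤ 3 ∧ vOf x 2 ≤ 3 ∧ (∀ k, 2 ≤ k → k ≤ s → vOf x k = vOf x 2)) ∨
       (vOf x 1 = 1 ∧ 4 ≤ vOf x 2 ∧ vOf x 2 ≤ nOf s n s ∧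
        (∀ k, 2 ≤ k → k ≤ s → vOf x k = vOf x 2)) ∨
       (4 ≤ vOf x 1 ∧ vOf x 1 ≤ nOf s n s ∧
        (∀ k, 2 ≤ k → k ≤ s → vOf x k = 1)) ∨
       (4 ≤ vOf x 1 ∧ vOf x 1 ≤ nOf s n s ∧
        (∀ k, 2 ≤ k → k ≤ s → vOf x k = vOf x 1))}

/-- The vertex set `X*_{n₁,…,nₛ} = X₁ ∪ (⋃_{i=2}^{s-1} Xᵢ) ∪ Xₛ`. -/
def XstarSet (s : ℕ) (n : Fin s → ℕ) : Set (∀ j, Fin (n j)) :=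
  X1Set s n ∪ (⋃ i ∈ Set.Icc 2 (s - 1), XiSet s n i) ∪ XsSet s n

namespace S19
lemma vOf_def' {s : ℕ} {n : Fin s → ℕ} (x : ∀ j, Fin (n j)) (k : ℕ) (j : Fin s)
    (hk : j.val = k - 1) : vOf x k = (x j).val + 1 := by
  have h : k - 1 < s := hk ▸ j.isLt
  unfold vOf
  rw [dif_pos h, show (⟨k-1, h⟩ : Fin s) = j from Fin.ext hk.symm]
lemma vOf_out {s : ℕ} {n : Fin s → ℕ} (x : ∀ j, Fin (n j)) (k : ℕ) (h : ¬ (k - 1 < s)) :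
    vOf x k = 1 := dif_neg h
lemma nOf_def' {s : ℕ} (n : Fin s → ℕ) (k : ℕ) (j : Fin s)
    (hk : j.val = k - 1) : nOf s n k = n j := by
  have h : k - 1 < s := hk ▸ j.isLt
  unfold nOf
  rw [dif_pos h, show (⟨k-1, h⟩ : Fin s) = j from Fin.ext hk.symm]

lemma nOf_out {s : ℕ} (n : Fin s → ℕ) (k : ℕ) (h : ¬ (k - 1 < s)) : nOf s n k = 0 :=
  dif_neg h
lemma vOf_pos {s : ℕ} {n : Fin s → ℕ} (x : ∀ j, Fin (n j)) (k : ℕ) : 1 ≤ vOf x k := by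
  unfold vOf; split <;> omega
lemma vOf_le {s : ℕ} {n : Fin s → ℕ} (x : ∀ j, Fin (n j)) (k : ℕ) (h : k - 1 < s) :
    vOf x k ≤ nOf s n k := by
  rw [vOf_def' x k ⟨k-1, h⟩ rfl, nOf_def' n k ⟨k-1, h⟩ rfl]
  exact (x ⟨k-1, h⟩).isLt
lemma eq_of_vOf {s : ℕ} {n : Fin s → ℕ} (x z : ∀ j, Fin (n j))
    (h : ∀ k, 1 ≤ k → k ≤ s → vOf x k = vOf z k) : x = z := by
  funext j
  have hj := h (j.val + 1) (by omega) (by have := j.isLt; omega)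
  rw [vOf_def' x (j.val+1) j rfl, vOf_def' z (j.val+1) j rfl] at hj
  exact Fin.ext (by omega)

section Setup
variable {s : ℕ} {n : Fin (s+1) → ℕ} {m : Fin s → ℕ}

def Fmap (m : Fin s → ℕ) (hmpos : ∀ k, 0 < m k) (x : ∀ j, Fin (n j)) : ∀ k, Fin (m k) :=
  fun k => ⟨(x ⟨if k.val = 0 then 0 else k.val + 1, by have := k.isLt; split <;> omega⟩).val % m k,
    Nat.mod_lt _ (hmpos k)⟩

def Gmap (n : Fin (s+1) → ℕ) (hs : 2 ≤ s) (hnpos : ∀ j, 0 < n j) (y : ∀ k, Fin (m k)) :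
    ∀ j, Fin (n j) :=
  fun j => ⟨(y ⟨if j.val ≤ 2 then min j.val 1 else j.val - 1,
      by have := j.isLt; split <;> omega⟩).val % n j,
    Nat.mod_lt _ (hnpos j)⟩

lemma Fmap_val (hmpos : ∀ k, 0 < m k) (x : ∀ j, Fin (n j)) (k : Fin s) :
    ∃ j : Fin (s+1), j.val = (if k.val = 0 then 0 else k.val + 1) ∧
      (Fmap m hmpos x k).val = (x j).val % m k := ⟨_, rfl, rfl⟩

lemma Gmap_val (hs : 2 ≤ s) (hnpos : ∀ j, 0 < n j) (y : ∀ k, Fin (m k)) (j : Fin (s+1)) :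
    ∃ kk : Fin s, kk.val = (if j.val ≤ 2 then min j.val 1 else j.val - 1) ∧
      (Gmap n hs hnpos y j).val = (y kk).val % n j := ⟨_, rfl, rfl⟩

variable (hs : 2 ≤ s) (hmpos : ∀ k, 0 < m k) (hnpos : ∀ j, 0 < n j)
  (hm1 : ∀ (k : Fin s) (_ : 1 ≤ k.val), m k = n ⟨k.val + 1, by omega⟩)
  (hm0 : ∀ (k : Fin s) (_ : k.val = 0) (h2 : 2 < s + 1), m k = n ⟨2, h2⟩)

include hm1 in
lemma vOf_F_ge2 (x : ∀ j, Fin (n j)) (k : ℕ) (h2 : 2 ≤ k) :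
    vOf (Fmap m hmpos x) k = vOf x (k+1) := by
  by_cases h : k - 1 < s
  · have hk1 : k < s + 1 := by omega
    rw [vOf_def' _ k ⟨k-1, h⟩ rfl, vOf_def' x (k+1) ⟨k, hk1⟩ rfl]
    obtain ⟨j, hj, hv⟩ := Fmap_val hmpos x ⟨k-1, h⟩
    replace hj : j.val = if k - 1 = 0 then 0 else (k-1) + 1 := hj
    have hjj : j = ⟨k, hk1⟩ := Fin.ext (by rw [hj, if_neg (by omega)]; show k - 1 + 1 = k; omega)
    have hmk : m ⟨k-1, h⟩ = n ⟨k, hk1⟩ :=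
      (hm1 ⟨k-1, h⟩ (show 1 ≤ k - 1 by omega)).trans
        (congrArg n (Fin.ext (show k - 1 + 1 = k by omega)))
    rw [hv, hjj]
    have hlt := (x ⟨k, hk1⟩).isLt
    rw [Nat.mod_eq_of_lt (by omega)]
  · rw [vOf_out _ _ h, vOf_out x _ (by omega)]

include hs hm0 in
lemma vOf_F_le1 (x : ∀ j, Fin (n j)) (h0 : (0:ℕ) < s + 1) (h2 : (2:ℕ) < s + 1)
    (hB : (x ⟨0, h0⟩).val + 1 ≤ n ⟨2, h2⟩)
    (k : ℕ) (hk : k ≤ 1) : vOf (Fmap m hmpos x) k = vOf x 1 := by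
  have h0s : (0:ℕ) < s := by omega
  rw [vOf_def' _ k ⟨0, h0s⟩ (by show (0:ℕ) = k - 1; omega),
    vOf_def' x 1 ⟨0, h0⟩ rfl]
  obtain ⟨j, hj, hv⟩ := Fmap_val hmpos x ⟨0, h0s⟩
  replace hj : j.val = if (0:ℕ) = 0 then 0 else 0 + 1 := hj
  have hjj : j = ⟨0, h0⟩ := Fin.ext (by rw [hj, if_pos rfl])
  have hmk : m ⟨0, h0s⟩ = n ⟨2, h2⟩ := hm0 _ rfl h2
  rw [hv, hjj]
  rw [Nat.mod_eq_of_lt (by omega)]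


include hs hm0 in
lemma vOf_G_1 (y : ∀ k, Fin (m k)) (h0 : (0:ℕ) < s + 1) (h2 : (2:ℕ) < s + 1)
    (h320 : n ⟨2, h2⟩ ≤ n ⟨0, h0⟩) :
    vOf (Gmap n hs hnpos y) 1 = vOf y 1 := by
  have h0s : (0:ℕ) < s := by omega
  rw [vOf_def' _ 1 ⟨0, h0⟩ rfl, vOf_def' y 1 ⟨0, h0s⟩ rfl]
  obtain ⟨kk, hkk, hv⟩ := Gmap_val hs hnpos y ⟨0, h0⟩
  replace hkk : kk.val = if (0:ℕ) ≤ 2 then min 0 1 else 0 - 1 := hkk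
  have hjj : kk = ⟨0, h0s⟩ := Fin.ext (by rw [hkk, if_pos (by omega)]; show (0:ℕ) ⊓ 1 = 0; simp)
  have hlt := (y ⟨0, h0s⟩).isLt
  have hmk : m ⟨0, h0s⟩ = n ⟨2, h2⟩ := hm0 _ rfl h2
  rw [hv, hjj, Nat.mod_eq_of_lt (by omega)]

include hs hm1 in
lemma vOf_G_2 (y : ∀ k, Fin (m k)) (h1 : (1:ℕ) < s + 1) (h2 : (2:ℕ) < s + 1)
    (h321 : n ⟨2, h2⟩ ≤ n ⟨1, h1⟩) :
    vOf (Gmap n hs hnpos y) 2 = vOf y 2 := by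
  have h1s : (1:ℕ) < s := by omega
  rw [vOf_def' _ 2 ⟨1, h1⟩ rfl, vOf_def' y 2 ⟨1, h1s⟩ rfl]
  obtain ⟨kk, hkk, hv⟩ := Gmap_val hs hnpos y ⟨1, h1⟩
  replace hkk : kk.val = if (1:ℕ) ≤ 2 then min 1 1 else 1 - 1 := hkk
  have hjj : kk = ⟨1, h1s⟩ := Fin.ext (by rw [hkk, if_pos (by omega)]; show (1:ℕ) ⊓ 1 = 1; simp)
  have hlt := (y ⟨1, h1s⟩).isLt
  have hmk : m ⟨1, h1s⟩ = n ⟨2, h2⟩ := hm1 ⟨1, h1s⟩ (by show (1:ℕ) ≤ 1; omega)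
  rw [hv, hjj, Nat.mod_eq_of_lt (by omega)]

include hs hm1 in
lemma vOf_G_ge3 (y : ∀ k, Fin (m k)) (k : ℕ) (h3 : 3 ≤ k) :
    vOf (Gmap n hs hnpos y) k = vOf y (k-1) := by
  by_cases h : k - 1 < s + 1
  · have hks : k - 2 < s := by omega
    rw [vOf_def' _ k ⟨k-1, h⟩ rfl, vOf_def' y (k-1) ⟨k-2, hks⟩ (by show k - 2 = k - 1 - 1; omega)]
    obtain ⟨kk, hkk, hv⟩ := Gmap_val hs hnpos y ⟨k-1, h⟩
    replace hkk : kk.val = if k - 1 ≤ 2 then min (k-1) 1 else (k-1) - 1 := hkk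
    have hjj : kk = ⟨k-2, hks⟩ := Fin.ext (by
      rw [hkk]
      show _ = k - 2
      rcases Nat.lt_or_ge (k-1) 3 with hc | hc
      · rw [if_pos (by omega)]
        have : k = 3 := by omega
        subst this
        simp
      · rw [if_neg (by omega)]; omega)
    have hlt := (y ⟨k-2, hks⟩).isLt
    have hmk : m ⟨k-2, hks⟩ = n ⟨k-1, h⟩ :=
      (hm1 ⟨k-2, hks⟩ (show 1 ≤ k - 2 by omega)).trans
        (congrArg n (Fin.ext (show k - 2 + 1 = k - 1 by omega)))
    rw [hv, hjj, Nat.mod_eq_of_lt (by omega)]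
  · rw [vOf_out _ _ h, vOf_out y _ (by omega)]


include hm1 in
lemma nOf_m_ge2 (k : ℕ) (h2 : 2 ≤ k) : nOf s m k = nOf (s+1) n (k+1) := by
  by_cases h : k - 1 < s
  · rw [nOf_def' m k ⟨k-1, h⟩ rfl, nOf_def' n (k+1) ⟨k, by omega⟩ rfl]
    exact (hm1 ⟨k-1, h⟩ (show 1 ≤ k - 1 by omega)).trans
      (congrArg n (Fin.ext (show k - 1 + 1 = k by omega)))
  · rw [nOf_out _ _ h, nOf_out _ _ (by omega)]

include hs hm0 in
lemma nOf_m_1 : nOf s m 1 = nOf (s+1) n 3 := by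
  rw [nOf_def' m 1 ⟨0, by omega⟩ rfl, nOf_def' n 3 ⟨2, by omega⟩ rfl]
  exact hm0 _ rfl _

include hs hmpos hnpos hm1 hm0 in
lemma GF_eq (x : ∀ j, Fin (n j)) (h0 : (0:ℕ) < s + 1) (h1 : (1:ℕ) < s + 1) (h2 : (2:ℕ) < s + 1)
    (h320 : n ⟨2, h2⟩ ≤ n ⟨0, h0⟩) (h321 : n ⟨2, h2⟩ ≤ n ⟨1, h1⟩)
    (hA : vOf x 2 = vOf x 3) (hB : (x ⟨0, h0⟩).val + 1 ≤ n ⟨2, h2⟩) :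
    Gmap n hs hnpos (Fmap m hmpos x) = x := by
  apply eq_of_vOf
  intro k hk1 hks
  rcases Nat.lt_or_ge k 2 with h | h
  · have hk : k = 1 := by omega
    subst hk
    rw [vOf_G_1 hs hnpos hm0 _ h0 h2 h320, vOf_F_le1 hs hmpos hm0 x h0 h2 hB 1 le_rfl]
  rcases Nat.lt_or_ge k 3 with h' | h'
  · have hk2 : k = 2 := by omega
    subst hk2
    rw [vOf_G_2 hs hnpos hm1 _ h1 h2 h321, vOf_F_ge2 hmpos hm1 x 2 le_rfl]
    exact hA.symm
  · rw [vOf_G_ge3 hs hnpos hm1 _ k h', vOf_F_ge2 hmpos hm1 x (k-1) (by omega),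
      show k - 1 + 1 = k by omega]

include hs hmpos hnpos hm1 hm0 in
lemma FG_eq (y : ∀ k, Fin (m k)) (h0 : (0:ℕ) < s + 1) (h1 : (1:ℕ) < s + 1) (h2 : (2:ℕ) < s + 1)
    (h320 : n ⟨2, h2⟩ ≤ n ⟨0, h0⟩) (h321 : n ⟨2, h2⟩ ≤ n ⟨1, h1⟩) :
    Fmap m hmpos (Gmap n hs hnpos y) = y := by
  have h0s : (0:ℕ) < s := by omega
  have hB : ((Gmap n hs hnpos y) ⟨0, h0⟩).val + 1 ≤ n ⟨2, h2⟩ := by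
    obtain ⟨kk, hkk, hv⟩ := Gmap_val hs hnpos y ⟨0, h0⟩
    replace hkk : kk.val = if (0:ℕ) ≤ 2 then min 0 1 else 0 - 1 := hkk
    have hjj : kk = ⟨0, h0s⟩ := Fin.ext (by rw [hkk, if_pos (by omega)]; show (0:ℕ) ⊓ 1 = 0; simp)
    have hlt := (y ⟨0, h0s⟩).isLt
    have hmk : m ⟨0, h0s⟩ = n ⟨2, h2⟩ := hm0 _ rfl h2
    rw [hv, hjj]
    have := Nat.mod_le (y ⟨0, h0s⟩).val (n ⟨0, h0⟩)
    omega
  apply eq_of_vOf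
  intro k hk1 hks
  rcases Nat.lt_or_ge k 2 with h | h
  · have hk : k = 1 := by omega
    subst hk
    rw [vOf_F_le1 hs hmpos hm0 _ h0 h2 hB 1 le_rfl, vOf_G_1 hs hnpos hm0 _ h0 h2 h320]
  · rw [vOf_F_ge2 hmpos hm1 _ k h, vOf_G_ge3 hs hnpos hm1 _ (k+1) (by omega),
      show k + 1 - 1 = k by omega]


lemma star_iff {t : ℕ} (nn : Fin t → ℕ) (x : ∀ j, Fin (nn j)) :
    x ∈ XstarSet t nn ↔
      (x ∈ X1Set t nn ∨ (∃ i, 2 ≤ i ∧ i ≤ t - 1 ∧ x ∈ XiSet t nn i) ∨ x ∈ XsSet t nn) := by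
  constructor
  · rintro ((h | h) | h)
    · exact Or.inl h
    · obtain ⟨i, hi, hx⟩ := Set.mem_iUnion₂.1 h
      exact Or.inr (Or.inl ⟨i, (Set.mem_Icc.1 hi).1, (Set.mem_Icc.1 hi).2, hx⟩)
    · exact Or.inr (Or.inr h)
  · rintro (h | ⟨i, h1, h2, hx⟩ | h)
    · exact Or.inl (Or.inl h)
    · exact Or.inl (Or.inr (Set.mem_iUnion₂.2 ⟨i, Set.mem_Icc.2 ⟨h1, h2⟩, hx⟩))
    · exact Or.inr h


variable (hstle : ∀ a b : ℕ, 2 ≤ a → a ≤ b → b ≤ s + 1 → nOf (s+1) n b ≤ nOf (s+1) n a)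
  (hN3 : ∀ k : ℕ, 1 ≤ k → k ≤ s + 1 → 3 < nOf (s+1) n k)

include hs hmpos hnpos hm1 hm0 hstle hN3 in
lemma forward (x : ∀ j, Fin (n j))
    (hx : x ∈ XstarSet (s+1) n \ (X1Set (s+1) n ∪ XiSet (s+1) n 2)) :
    vOf x 2 = vOf x 3 ∧ vOf x 1 ≤ nOf (s+1) n 3 ∧ Fmap m hmpos x ∈ XstarSet s m := by
  have h0 : (0:ℕ) < s + 1 := by omega
  have h2' : (2:ℕ) < s + 1 := by omega
  obtain ⟨hstar, hnot⟩ := hx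
  have hnX1 : x ∉ X1Set (s+1) n := fun h => hnot (Or.inl h)
  have hnX2 : x ∉ XiSet (s+1) n 2 := fun h => hnot (Or.inr h)
  have key : (vOf x 2 = vOf x 3 ∧ vOf x 1 ≤ nOf (s+1) n 3) := by
    rcases (star_iff n x).1 hstar with hX1 | ⟨i, hi2, his, hXi⟩ | hXs
    · exact absurd hX1 hnX1
    · have hi3 : 3 ≤ i := by
        rcases Nat.lt_or_ge i 3 with h | h
        · exfalso
          apply hnX2
          have hi2' : i = 2 := by omega
          rwa [hi2'] at hXi
        · exact h
      simp only [XiSet, Set.mem_setOf_eq] at hXi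
      rcases hXi with ⟨hgt, hle, hbr⟩ | ⟨h1, hlo, hhi, hrep, hone⟩
      · constructor
        · rcases hbr with hall | ⟨hr1, hr2⟩
          · rw [hall 2 le_rfl (by omega), hall 3 (by omega) (by omega)]
          · rw [hr1 2 le_rfl (by omega), hr1 3 (by omega) hi3]
        · exact hle.trans (hstle 3 i (by omega) hi3 (by omega))
      · refine ⟨(hrep 2 le_rfl (by omega)).trans (hrep 3 (by omega) hi3).symm, ?_⟩
        have := hN3 3 (by omega) (by omega)
        omega
    · simp only [XsSet, Set.mem_setOf_eq] at hXs
      have hN3' := hN3 3 (by omega) (by omega)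
      have hNs3 := hstle 3 (s+1) (by omega) (by omega) le_rfl
      rcases hXs with ⟨ha1, ha2, hak⟩ | ⟨hb1, hb2, hb3, hbk⟩ | ⟨hc1, hc2, hck⟩ |
        ⟨hd1, hd2, hdk⟩
      · exact ⟨(hak 2 le_rfl (by omega)).trans (hak 3 (by omega) (by omega)).symm, by omega⟩
      · exact ⟨(hbk 2 le_rfl (by omega)).trans (hbk 3 (by omega) (by omega)).symm, by omega⟩
      · exact ⟨(hck 2 le_rfl (by omega)).trans (hck 3 (by omega) (by omega)).symm, by omega⟩
      · exact ⟨(hdk 2 le_rfl (by omega)).trans (hdk 3 (by omega) (by omega)).symm, by omega⟩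
  obtain ⟨hA, hB⟩ := key
  refine ⟨hA, hB, ?_⟩
  have hB' : (x ⟨0, h0⟩).val + 1 ≤ n ⟨2, h2'⟩ := by
    rw [← vOf_def' x 1 ⟨0, h0⟩ rfl, ← nOf_def' n 3 ⟨2, h2'⟩ rfl]
    exact hB
  have vF1 : vOf (Fmap m hmpos x) 1 = vOf x 1 := vOf_F_le1 hs hmpos hm0 x h0 h2' hB' 1 le_rfl
  have vFk : ∀ k, 2 ≤ k → vOf (Fmap m hmpos x) k = vOf x (k+1) :=
    fun k hk => vOf_F_ge2 hmpos hm1 x k hk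
  have nM1 : nOf s m 1 = nOf (s+1) n 3 := nOf_m_1 hs hm0
  have nMk : ∀ k, 2 ≤ k → nOf s m k = nOf (s+1) n (k+1) := fun k hk => nOf_m_ge2 hm1 k hk
  rcases (star_iff n x).1 hstar with hX1 | ⟨i, hi2, his, hXi⟩ | hXs
  · exact absurd hX1 hnX1
  · have hi3 : 3 ≤ i := by
      rcases Nat.lt_or_ge i 3 with h | h
      · exfalso
        apply hnX2
        have hi2' : i = 2 := by omega
        rwa [hi2'] at hXi
      · exact h
    have his' : i ≤ s := by omega
    apply (star_iff m _).2
    refine Or.inr (Or.inl ⟨i - 1, by omega, by omega, ?_⟩)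
    simp only [XiSet, Set.mem_setOf_eq] at hXi ⊢
    rw [show i - 1 + 1 = i by omega]
    rcases hXi with ⟨hgt, hle, hbr⟩ | ⟨h1, hlo, hhi, hrep, hone⟩
    · refine Or.inl ⟨?_, ?_, ?_⟩
      · rw [vF1, nMk i (by omega)]
        exact hgt
      · rw [vF1, nMk (i-1) (by omega), show i - 1 + 1 = i by omega]
        exact hle
      · rcases hbr with hall | ⟨hr1, hr2⟩
        · exact Or.inl fun k hk2 hks => by
            rw [vFk k hk2]; exact hall (k+1) (by omega) (by omega)
        · refine Or.inr ⟨fun k hk2 hki => ?_, fun k hk1 hks => ?_⟩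
          · rw [vFk k hk2, vF1]
            exact hr1 (k+1) (by omega) (by omega)
          · rw [vFk k (by omega), nMk k (by omega)]
            exact hr2 (k+1) (by omega) (by omega)
    · refine Or.inr ⟨by rw [vF1]; exact h1, ?_, ?_, fun k hk2 hki => ?_, fun k hk1 hks => ?_⟩
      · rw [vFk 2 le_rfl, nMk i (by omega), ← hA]
        exact hlo
      · rw [vFk 2 le_rfl, nMk (i-1) (by omega), show i - 1 + 1 = i by omega, ← hA]
        exact hhi
      · rw [vFk k hk2, vFk 2 le_rfl]
        exact (hrep (k+1) (by omega) (by omega)).trans (hrep 3 (by omega) hi3).symm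
      · rw [vFk k (by omega)]
        exact hone (k+1) (by omega) (by omega)
  · apply (star_iff m _).2
    refine Or.inr (Or.inr ?_)
    simp only [XsSet, Set.mem_setOf_eq] at hXs ⊢
    have nMs : nOf s m s = nOf (s+1) n (s+1) := nMk s (by omega)
    rcases hXs with ⟨ha1, ha2, hak⟩ | ⟨hb1, hb2, hb3, hbk⟩ | ⟨hc1, hc2, hck⟩ | ⟨hd1, hd2, hdk⟩
    · refine Or.inl ⟨by rw [vF1]; exact ha1, ?_, fun k hk2 hks => ?_⟩
      · rw [vFk 2 le_rfl, ← hA]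
        exact ha2
      · rw [vFk k hk2, vFk 2 le_rfl]
        exact (hak (k+1) (by omega) (by omega)).trans (hak 3 (by omega) (by omega)).symm
    · refine Or.inr (Or.inl ⟨by rw [vF1]; exact hb1, ?_, ?_, fun k hk2 hks => ?_⟩)
      · rw [vFk 2 le_rfl, ← hA]
        exact hb2
      · rw [vFk 2 le_rfl, nMs, ← hA]
        exact hb3
      · rw [vFk k hk2, vFk 2 le_rfl]
        exact (hbk (k+1) (by omega) (by omega)).trans (hbk 3 (by omega) (by omega)).symm
    · refine Or.inr (Or.inr (Or.inl ⟨by rw [vF1]; exact hc1, ?_, fun k hk2 hks => ?_⟩))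
      · rw [vF1, nMs]
        exact hc2
      · rw [vFk k hk2]
        exact hck (k+1) (by omega) (by omega)
    · refine Or.inr (Or.inr (Or.inr ⟨by rw [vF1]; exact hd1, ?_, fun k hk2 hks => ?_⟩))
      · rw [vF1, nMs]
        exact hd2
      · rw [vFk k hk2, vF1]
        exact hdk (k+1) (by omega) (by omega)


include hs hmpos hnpos hm1 hm0 hstle hN3 in
lemma backward (y : ∀ k, Fin (m k)) (hy : y ∈ XstarSet s m)
    (h0 : (0:ℕ) < s + 1) (h1 : (1:ℕ) < s + 1) (h2' : (2:ℕ) < s + 1)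
    (h320 : n ⟨2, h2'⟩ ≤ n ⟨0, h0⟩) (h321 : n ⟨2, h2'⟩ ≤ n ⟨1, h1⟩) :
    Gmap n hs hnpos y ∈ XstarSet (s+1) n \ (X1Set (s+1) n ∪ XiSet (s+1) n 2) := by
  have vG1 : vOf (Gmap n hs hnpos y) 1 = vOf y 1 := vOf_G_1 hs hnpos hm0 y h0 h2' h320
  have vG2 : vOf (Gmap n hs hnpos y) 2 = vOf y 2 := vOf_G_2 hs hnpos hm1 y h1 h2' h321
  have vGk : ∀ k, 3 ≤ k → vOf (Gmap n hs hnpos y) k = vOf y (k-1) :=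
    fun k hk => vOf_G_ge3 hs hnpos hm1 y k hk
  have nM1 : nOf s m 1 = nOf (s+1) n 3 := nOf_m_1 hs hm0
  have nMk : ∀ k, 2 ≤ k → nOf s m k = nOf (s+1) n (k+1) := fun k hk => nOf_m_ge2 hm1 k hk
  have hy1 : vOf y 1 ≤ nOf (s+1) n 3 := nM1 ▸ vOf_le y 1 (by omega)
  have hA : vOf (Gmap n hs hnpos y) 3 = vOf (Gmap n hs hnpos y) 2 := by
    rw [vGk 3 le_rfl, vG2]
  have hN3' := hN3 3 (by omega) (by omega)
  have hn23 := hstle 2 3 le_rfl (by omega) (by omega)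
  constructor
  · -- x ∈ XstarSet (s+1) n
    rcases (star_iff m y).1 hy with hX1m | ⟨j, hj2, hjs, hXj⟩ | hXsm
    · exfalso
      simp only [X1Set, Set.mem_setOf_eq] at hX1m
      obtain ⟨hgt, -⟩ := hX1m
      have e2 : nOf s m 2 = nOf (s+1) n 3 := nMk 2 le_rfl
      omega
    · apply (star_iff n _).2
      refine Or.inr (Or.inl ⟨j + 1, by omega, by omega, ?_⟩)
      simp only [XiSet, Set.mem_setOf_eq] at hXj ⊢
      rcases hXj with ⟨hgt, hle, hbr⟩ | ⟨hone1, hlo, hhi, hrep, honez⟩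
      · refine Or.inl ⟨?_, ?_, ?_⟩
        · rw [vG1, ← nMk (j+1) (by omega)]
          exact hgt
        · rw [vG1, ← nMk j hj2]
          exact hle
        · rcases hbr with hall | ⟨hr1, hr2⟩
          · refine Or.inl fun k hk2 hks => ?_
            rcases Nat.lt_or_ge k 3 with h | h
            · have hk : k = 2 := by omega
              subst hk
              rw [vG2]
              exact hall 2 le_rfl (by omega)
            · rw [vGk k h]
              exact hall (k-1) (by omega) (by omega)
          · refine Or.inr ⟨fun k hk2 hki => ?_, fun k hk1 hks => ?_⟩
            · rcases Nat.lt_or_ge k 3 with h | h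
              · have hk : k = 2 := by omega
                subst hk
                rw [vG2, vG1]
                exact hr1 2 le_rfl hj2
              · rw [vGk k h, vG1]
                exact hr1 (k-1) (by omega) (by omega)
            · rw [vGk k (by omega), hr2 (k-1) (by omega) (by omega),
                nMk (k-1) (by omega), show k - 1 + 1 = k by omega]
      · refine Or.inr ⟨by rw [vG1]; exact hone1, ?_, ?_, fun k hk2 hki => ?_,
          fun k hk1 hks => ?_⟩
        · rw [vG2, ← nMk (j+1) (by omega)]
          exact hlo
        · rw [vG2, ← nMk j hj2]
          exact hhi
        · rcases Nat.lt_or_ge k 3 with h | h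
          · have hk : k = 2 := by omega
            subst hk
            rfl
          · rw [vGk k h, vG2]
            exact hrep (k-1) (by omega) (by omega)
        · rw [vGk k (by omega)]
          exact honez (k-1) (by omega) (by omega)
    · apply (star_iff n _).2
      refine Or.inr (Or.inr ?_)
      simp only [XsSet, Set.mem_setOf_eq] at hXsm ⊢
      have nMs : nOf s m s = nOf (s+1) n (s+1) := nMk s hs
      rcases hXsm with ⟨ha1, ha2, hak⟩ | ⟨hb1, hb2, hb3, hbk⟩ | ⟨hc1, hc2, hck⟩ |
        ⟨hd1, hd2, hdk⟩
      · refine Or.inl ⟨by rw [vG1]; exact ha1, by rw [vG2]; exact ha2, fun k hk2 hks => ?_⟩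
        rcases Nat.lt_or_ge k 3 with h | h
        · have hk : k = 2 := by omega
          subst hk
          rfl
        · rw [vGk k h, vG2]
          exact hak (k-1) (by omega) (by omega)
      · refine Or.inr (Or.inl ⟨by rw [vG1]; exact hb1, by rw [vG2]; exact hb2,
          by rw [vG2, ← nMs]; exact hb3, fun k hk2 hks => ?_⟩)
        rcases Nat.lt_or_ge k 3 with h | h
        · have hk : k = 2 := by omega
          subst hk
          rfl
        · rw [vGk k h, vG2]
          exact hbk (k-1) (by omega) (by omega)
      · refine Or.inr (Or.inr (Or.inl ⟨by rw [vG1]; exact hc1, by rw [vG1, ← nMs]; exact hc2,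
          fun k hk2 hks => ?_⟩))
        rcases Nat.lt_or_ge k 3 with h | h
        · have hk : k = 2 := by omega
          subst hk
          rw [vG2]
          exact hck 2 le_rfl (by omega)
        · rw [vGk k h]
          exact hck (k-1) (by omega) (by omega)
      · refine Or.inr (Or.inr (Or.inr ⟨by rw [vG1]; exact hd1, by rw [vG1, ← nMs]; exact hd2,
          fun k hk2 hks => ?_⟩))
        rcases Nat.lt_or_ge k 3 with h | h
        · have hk : k = 2 := by omega
          subst hk
          rw [vG2, vG1]
          exact hdk 2 le_rfl (by omega)
        · rw [vGk k h, vG1]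
          exact hdk (k-1) (by omega) (by omega)
  · -- x ∉ X1 ∪ X2
    rintro (hX1 | hX2)
    · simp only [X1Set, Set.mem_setOf_eq] at hX1
      obtain ⟨hgt, -⟩ := hX1
      have e2 : nOf (s+1) n 3 ≤ nOf (s+1) n 2 := hn23
      omega
    · simp only [XiSet, Set.mem_setOf_eq] at hX2
      have e3 : nOf (s+1) n (2+1) = nOf (s+1) n 3 := rfl
      rcases hX2 with ⟨hgt, -, -⟩ | ⟨-, hlo, -, -, hone⟩
      · omega
      · have h3one := hone 3 (by omega) (by omega)
        omega


include hs hmpos hnpos hm1 hm0 hstle hN3 in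
lemma main (h0 : (0:ℕ) < s + 1) (h1 : (1:ℕ) < s + 1) (h2' : (2:ℕ) < s + 1)
    (h320 : n ⟨2, h2'⟩ ≤ n ⟨0, h0⟩) (h321 : n ⟨2, h2'⟩ ≤ n ⟨1, h1⟩) :
    ∃ φ : {x : ∀ j, Fin (n j) //
            x ∈ XstarSet (s + 1) n \ (X1Set (s + 1) n ∪ XiSet (s + 1) n 2)} ≃
          {y : ∀ j, Fin (m j) // y ∈ XstarSet s m},
      ∀ b : Finset {x : ∀ j, Fin (n j) //
            x ∈ XstarSet (s + 1) n \ (X1Set (s + 1) n ∪ XiSet (s + 1) n 2)},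
        b.map (Function.Embedding.subtype _) ∈ Es n ↔
        (b.map φ.toEmbedding).map (Function.Embedding.subtype _) ∈ Es m := by
  have h0s : (0:ℕ) < s := by omega
  have h1s : (1:ℕ) < s := by omega
  -- per-element value facts
  have hval0 : ∀ p : {x : ∀ j, Fin (n j) //
      x ∈ XstarSet (s + 1) n \ (X1Set (s + 1) n ∪ XiSet (s + 1) n 2)},
      ((Fmap m hmpos p.1) ⟨0, h0s⟩).val = (p.1 ⟨0, h0⟩).val := by
    intro p
    obtain ⟨j, hj, hv⟩ := Fmap_val hmpos p.1 ⟨0, h0s⟩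
    replace hj : j.val = if (0:ℕ) = 0 then 0 else 0 + 1 := hj
    have hjj : j = ⟨0, h0⟩ := Fin.ext (by rw [hj, if_pos rfl])
    obtain ⟨-, hB, -⟩ := forward hs hmpos hnpos hm1 hm0 hstle hN3 p.1 p.2
    have hB' : (p.1 ⟨0, h0⟩).val + 1 ≤ n ⟨2, h2'⟩ := by
      rw [← vOf_def' p.1 1 ⟨0, h0⟩ rfl, ← nOf_def' n 3 ⟨2, h2'⟩ rfl]
      exact hB
    have hmk : m ⟨0, h0s⟩ = n ⟨2, h2'⟩ := hm0 ⟨0, h0s⟩ rfl h2'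
    rw [hv, hjj, Nat.mod_eq_of_lt (by omega)]
  have hval1 : ∀ (p : {x : ∀ j, Fin (n j) //
      x ∈ XstarSet (s + 1) n \ (X1Set (s + 1) n ∪ XiSet (s + 1) n 2)})
      (k : Fin s) (j : Fin (s+1)) (hk : 1 ≤ k.val) (hj : j.val = k.val + 1),
      ((Fmap m hmpos p.1) k).val = (p.1 j).val := by
    intro p k j hk hj
    obtain ⟨jj, hjj0, hv⟩ := Fmap_val hmpos p.1 k
    have hjj : jj = j := Fin.ext (by rw [hjj0, if_neg (by omega), hj])
    have hlt := (p.1 j).isLt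
    have hmk : m k = n j := (hm1 k hk).trans (congrArg n (Fin.ext (by show k.val + 1 = j.val; omega)))
    rw [hv, hjj, Nat.mod_eq_of_lt (by omega)]
  have hA12 : ∀ p : {x : ∀ j, Fin (n j) //
      x ∈ XstarSet (s + 1) n \ (X1Set (s + 1) n ∪ XiSet (s + 1) n 2)},
      (p.1 ⟨1, h1⟩).val = (p.1 ⟨2, h2'⟩).val := by
    intro p
    obtain ⟨hA, -, -⟩ := forward hs hmpos hnpos hm1 hm0 hstle hN3 p.1 p.2
    rw [vOf_def' p.1 2 ⟨1, h1⟩ rfl, vOf_def' p.1 3 ⟨2, h2'⟩ rfl] at hA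
    omega
  suffices H : ∀ (ψ : {x : ∀ j, Fin (n j) //
      x ∈ XstarSet (s + 1) n \ (X1Set (s + 1) n ∪ XiSet (s + 1) n 2)} ↪
        {y : ∀ j, Fin (m j) // y ∈ XstarSet s m}),
      (∀ p, (ψ p).1 = Fmap m hmpos p.1) →
      ∀ b : Finset {x : ∀ j, Fin (n j) //
            x ∈ XstarSet (s + 1) n \ (X1Set (s + 1) n ∪ XiSet (s + 1) n 2)},
        b.map (Function.Embedding.subtype _) ∈ Es n ↔
        (b.map ψ).map (Function.Embedding.subtype _) ∈ Es m by
    refine ⟨⟨fun p => ⟨Fmap m hmpos p.1,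
        (forward hs hmpos hnpos hm1 hm0 hstle hN3 p.1 p.2).2.2⟩,
      fun q => ⟨Gmap n hs hnpos q.1,
        backward hs hmpos hnpos hm1 hm0 hstle hN3 q.1 q.2 h0 h1 h2' h320 h321⟩,
      fun p => Subtype.ext ?_,
      fun q => Subtype.ext (FG_eq hs hmpos hnpos hm1 hm0 q.1 h0 h1 h2' h320 h321)⟩,
      H _ (fun p => rfl)⟩
    obtain ⟨hA, hB, -⟩ := forward hs hmpos hnpos hm1 hm0 hstle hN3 p.1 p.2
    have hB' : (p.1 ⟨0, h0⟩).val + 1 ≤ n ⟨2, h2'⟩ := by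
      rw [← vOf_def' p.1 1 ⟨0, h0⟩ rfl, ← nOf_def' n 3 ⟨2, h2'⟩ rfl]
      exact hB
    exact GF_eq hs hmpos hnpos hm1 hm0 p.1 h0 h1 h2' h320 h321 hA hB'
  intro ψ hψ b
  simp only [Es, Set.mem_setOf_eq, Finset.card_map]
  refine and_congr Iff.rfl ?_
  have cardBig : ∀ j : Fin (s+1),
      ((b.map (Function.Embedding.subtype _)).image fun x => x j).card
        = (b.image fun p => (p.1 j).val).card := by
    intro j
    calc ((b.map (Function.Embedding.subtype _)).image fun x => x j).card
        = (b.image fun p => (p.1 j)).card := by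
          rw [Finset.map_eq_image, Finset.image_image]
          rfl
      _ = ((b.image fun p => (p.1 j)).image Fin.val).card :=
          (Finset.card_image_of_injective _ Fin.val_injective).symm
      _ = (b.image fun p => (p.1 j).val).card := by
          rw [Finset.image_image]
          rfl
  have cardSmall : ∀ k : Fin s,
      (((b.map ψ).map (Function.Embedding.subtype _)).image fun x => x k).card
        = (b.image fun p => ((Fmap m hmpos p.1) k).val).card := by
    intro k
    calc (((b.map ψ).map (Function.Embedding.subtype _)).image fun x => x k).card
        = ((b.map (ψ.trans (Function.Embedding.subtype _))).image fun x => x k).card := by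
          rw [Finset.map_map]
      _ = (b.image fun p => ((ψ p).1 k)).card := by
          rw [Finset.map_eq_image, Finset.image_image]
          rfl
      _ = (b.image fun p => ((Fmap m hmpos p.1) k)).card := by
          congr 1
          exact Finset.image_congr fun p _ => by rw [hψ p]
      _ = ((b.image fun p => ((Fmap m hmpos p.1) k)).image Fin.val).card :=
          (Finset.card_image_of_injective _ Fin.val_injective).symm
      _ = (b.image fun p => ((Fmap m hmpos p.1) k).val).card := by
          rw [Finset.image_image]
          rfl
  refine ⟨fun H k => ?_, fun H j => ?_⟩
  · rw [cardSmall k]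
    by_cases hk : k.val = 0
    · rw [show (b.image fun p => ((Fmap m hmpos p.1) k).val)
          = b.image fun p => (p.1 ⟨0, h0⟩).val from by
        rw [show k = ⟨0, h0s⟩ from Fin.ext hk]
        exact Finset.image_congr fun p _ => hval0 p]
      rw [← cardBig ⟨0, h0⟩]
      exact H _
    · have hk1 : k.val + 1 < s + 1 := by have := k.isLt; omega
      rw [show (b.image fun p => ((Fmap m hmpos p.1) k).val)
          = b.image fun p => (p.1 ⟨k.val + 1, hk1⟩).val from
        Finset.image_congr fun p _ => hval1 p k ⟨k.val + 1, hk1⟩ (by omega) rfl]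
      rw [← cardBig ⟨k.val + 1, hk1⟩]
      exact H _
  · rw [cardBig j]
    rcases Nat.lt_or_ge j.val 1 with h | h
    · have hj : j = ⟨0, h0⟩ := Fin.ext (by show j.val = 0; omega)
      have hh := H ⟨0, h0s⟩
      rw [cardSmall, show (b.image fun p => ((Fmap m hmpos p.1) ⟨0, h0s⟩).val)
          = b.image fun p => (p.1 ⟨0, h0⟩).val from
        Finset.image_congr fun p _ => hval0 p] at hh
      rw [hj]
      exact hh
    rcases Nat.lt_or_ge j.val 2 with h' | h'
    · have hj : j = ⟨1, h1⟩ := Fin.ext (by show j.val = 1; omega)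
      have hh := H ⟨1, h1s⟩
      rw [cardSmall, show (b.image fun p => ((Fmap m hmpos p.1) ⟨1, h1s⟩).val)
          = b.image fun p => (p.1 ⟨2, h2'⟩).val from
        Finset.image_congr fun p _ => hval1 p ⟨1, h1s⟩ ⟨2, h2'⟩ (by exact le_refl 1) rfl] at hh
      rw [hj, show (b.image fun p => (p.1 ⟨1, h1⟩).val)
          = b.image fun p => (p.1 ⟨2, h2'⟩).val from
        Finset.image_congr fun p _ => hA12 p]
      exact hh
    · have hjs : j.val - 1 < s := by have := j.isLt; omega
      have hh := H ⟨j.val - 1, hjs⟩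
      rw [cardSmall, show (b.image fun p => ((Fmap m hmpos p.1) ⟨j.val - 1, hjs⟩).val)
          = b.image fun p => (p.1 j).val from
        Finset.image_congr fun p _ => hval1 p ⟨j.val - 1, hjs⟩ j
          (by show 1 ≤ j.val - 1; omega) (by show j.val = j.val - 1 + 1; omega)] at hh
      exact hh

end Setup
end S19

/-- for `s+1 ≥ 3` coordinates and `n₁ ≥ n₂ > n₃ > ⋯ > n_{s+1} > 3`,
the derived sub-hypergraph of `H_{n₁,…,n_{s+1}}` on
`X† = X*_{n₁,…,n_{s+1}} \ (X₁ ∪ X₂)` is isomorphic to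
`H*_{n₃,n₃,n₄,…,n_{s+1}}`, i.e. the derived sub-hypergraph of `H_m` on
`X*_m` where `m = (n₃,n₃,n₄,…,n_{s+1})`: there is a bijection of vertex sets
carrying edges onto edges in both directions. -/
theorem stmt19 (s : ℕ) (hs : 2 ≤ s) (n : Fin (s + 1) → ℕ)
    (h12 : n ⟨1, by omega⟩ ≤ n ⟨0, by omega⟩)
    (hstrict : ∀ i j : Fin (s + 1), 1 ≤ i.val → i < j → n j < n i)
    (h3 : ∀ i, 3 < n i) :
    let m : Fin s → ℕ := fun k =>
      if k.val ≤ 1 then n ⟨2, by omega⟩ else n ⟨k.val + 1, Nat.succ_lt_succ k.isLt⟩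
    ∃ φ : {x : ∀ j, Fin (n j) //
            x ∈ XstarSet (s + 1) n \ (X1Set (s + 1) n ∪ XiSet (s + 1) n 2)} ≃
          {y : ∀ j, Fin (m j) // y ∈ XstarSet s m},
      ∀ b : Finset {x : ∀ j, Fin (n j) //
            x ∈ XstarSet (s + 1) n \ (X1Set (s + 1) n ∪ XiSet (s + 1) n 2)},
        b.map (Function.Embedding.subtype _) ∈ Es n ↔
        (b.map φ.toEmbedding).map (Function.Embedding.subtype _) ∈ Es m := by
  intro m
  have hnpos : ∀ j, 0 < n j := fun j => lt_trans (by norm_num) (h3 j)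
  have hmdef : ∀ k : Fin s, m k = if k.val ≤ 1 then n ⟨2, by omega⟩
      else n ⟨k.val + 1, Nat.succ_lt_succ k.isLt⟩ := fun k => rfl
  have hmpos : ∀ k, 0 < m k := fun k => by rw [hmdef k]; split <;> exact hnpos _
  have hm1 : ∀ (k : Fin s) (_ : 1 ≤ k.val), m k = n ⟨k.val + 1, by omega⟩ := by
    intro k hk
    rw [hmdef k]
    by_cases h : k.val ≤ 1
    · rw [if_pos h]
      exact congrArg n (Fin.ext (by show 2 = k.val + 1; omega))
    · rw [if_neg h]
  have hm0 : ∀ (k : Fin s) (_ : k.val = 0) (h2 : 2 < s + 1), m k = n ⟨2, h2⟩ := by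
    intro k hk h2
    rw [hmdef k, if_pos (by omega)]
  have hstle : ∀ a b : ℕ, 2 ≤ a → a ≤ b → b ≤ s + 1 → nOf (s+1) n b ≤ nOf (s+1) n a := by
    intro a b ha hab hb
    rcases Nat.eq_or_lt_of_le hab with h | h
    · subst h; exact le_rfl
    · rw [S19.nOf_def' n a ⟨a-1, by omega⟩ rfl, S19.nOf_def' n b ⟨b-1, by omega⟩ rfl]
      exact le_of_lt (hstrict ⟨a-1, by omega⟩ ⟨b-1, by omega⟩ (by show 1 ≤ a - 1; omega)
        (by rw [Fin.lt_def]; show a - 1 < b - 1; omega))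
  have hN3 : ∀ k : ℕ, 1 ≤ k → k ≤ s + 1 → 3 < nOf (s+1) n k := by
    intro k hk1 hk2
    rw [S19.nOf_def' n k ⟨k-1, by omega⟩ rfl]
    exact h3 _
  have h0 : (0:ℕ) < s + 1 := by omega
  have h1 : (1:ℕ) < s + 1 := by omega
  have h2' : (2:ℕ) < s + 1 := by omega
  have h21 : n ⟨2, h2'⟩ ≤ n ⟨1, h1⟩ :=
    le_of_lt (hstrict ⟨1, h1⟩ ⟨2, h2'⟩ (by show 1 ≤ 1; omega)
      (by rw [Fin.lt_def]; show 1 < 2; omega))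
  have h320 : n ⟨2, h2'⟩ ≤ n ⟨0, h0⟩ := le_trans h21 h12
  exact S19.main hs hmpos hnpos hm1 hm0 hstle hN3 h0 h1 h2' h320 h21
end
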